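/- arXiv:1306.5415 — 11 statements merged into one kernel-verified Lean document; each statement's English description precedes it below -/
import Mathlib

section
/- For every positive integer n, the number of partitions of n in which each part k occurs at most k − 1 times equals the number of partitions of n in which no part is a perfect square. -/
private def nsRoot (k : ℕ) : ℕ :=
  if h : 2 ≤ k ∧ IsSquare k then nsRoot (Nat.sqrt k) else k
decreasing_by exact Nat.sqrt_lt_self (by omega)

private def nsExp (k : ℕ) : ℕ :=
  if h : 2 ≤ k ∧ IsSquare k then nsExp (Nat.sqrt k) + 1 else 0
decreasing_by exact Nat.sqrt_lt_self (by omega)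

private lemma sqrt_facts {k : ℕ} (hk : 2 ≤ k) (hs : IsSquare k) :
    2 ≤ Nat.sqrt k ∧ Nat.sqrt k * Nat.sqrt k = k ∧ Nat.sqrt k < k := by
  obtain ⟨r, rfl⟩ := hs
  rw [Nat.sqrt_eq]
  have h2 : 2 ≤ r := by
    by_contra h
    interval_cases r <;> omega
  exact ⟨h2, rfl, by nlinarith⟩

private lemma nsSpec : ∀ k, 2 ≤ k →
    2 ≤ nsRoot k ∧ ¬ IsSquare (nsRoot k) ∧ nsRoot k ^ 2 ^ nsExp k = k := by
  intro k
  induction k using Nat.strong_induction_on with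
  | _ k ih =>
    intro hk
    by_cases hs : IsSquare k
    · obtain ⟨hr2, hrr, hrk⟩ := sqrt_facts hk hs
      rw [nsRoot, dif_pos ⟨hk, hs⟩, nsExp, dif_pos ⟨hk, hs⟩]
      obtain ⟨h1, h2, h3⟩ := ih _ hrk hr2
      refine ⟨h1, h2, ?_⟩
      rw [pow_succ, pow_mul, h3, sq, hrr]
    · rw [nsRoot, dif_neg (by tauto), nsExp, dif_neg (by tauto)]
      simpa using ⟨hk, hs⟩

private lemma nsCanon {j : ℕ} (hj2 : 2 ≤ j) (hj : ¬ IsSquare j) :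
    ∀ i, nsRoot (j ^ 2 ^ i) = j ∧ nsExp (j ^ 2 ^ i) = i := by
  intro i
  induction i with
  | zero =>
    simp only [pow_zero, pow_one]
    rw [nsRoot, dif_neg (by tauto), nsExp, dif_neg (by tauto)]
    exact ⟨rfl, rfl⟩
  | succ i ihi =>
    have hsq : j ^ 2 ^ (i + 1) = (j ^ 2 ^ i) * (j ^ 2 ^ i) := by
      rw [pow_succ, pow_mul, sq]
    have hs : IsSquare (j ^ 2 ^ i * (j ^ 2 ^ i)) := ⟨_, rfl⟩
    have h2 : 2 ≤ j ^ 2 ^ i := le_trans hj2 (Nat.le_self_pow (by positivity) _)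
    have hk2 : 2 ≤ j ^ 2 ^ i * (j ^ 2 ^ i) := by nlinarith
    rw [hsq, nsRoot, dif_pos ⟨hk2, hs⟩, nsExp, dif_pos ⟨hk2, hs⟩, Nat.sqrt_eq]
    exact ⟨ihi.1, by rw [ihi.2]⟩

/-- the `i`-th digit of `N` in the telescoping base `j, j², j⁴, …`. -/
private def dig (j i N : ℕ) : ℕ := N % j ^ 2 ^ (i + 1) / j ^ 2 ^ i

private lemma b_dvd_b {j : ℕ} {i i' : ℕ} (h : i ≤ i') : j ^ 2 ^ i ∣ j ^ 2 ^ i' :=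
  pow_dvd_pow j (Nat.pow_le_pow_right (by norm_num) h)

private lemma b_sq (j i : ℕ) : j ^ 2 ^ (i + 1) = j ^ 2 ^ i * j ^ 2 ^ i := by
  rw [pow_succ, pow_mul, sq]

private lemma dig_lt {j : ℕ} (hj : 0 < j) (i N : ℕ) : dig j i N < j ^ 2 ^ i := by
  have h1 : N % j ^ 2 ^ (i + 1) < j ^ 2 ^ i * j ^ 2 ^ i := by
    rw [← b_sq]; exact Nat.mod_lt _ (by positivity)
  exact Nat.div_lt_of_lt_mul h1

private lemma dig_eq_zero {j i N : ℕ} (h : N < j ^ 2 ^ i) : dig j i N = 0 :=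
  Nat.div_eq_of_lt (lt_of_le_of_lt (Nat.mod_le _ _) h)

private lemma sum_dig_mod {j : ℕ} (hj : 2 ≤ j) {N : ℕ} (hdvd : j ∣ N) :
    ∀ M, ∑ i ∈ Finset.range M, dig j i N * j ^ 2 ^ i = N % j ^ 2 ^ M := by
  intro M
  induction M with
  | zero => simpa using (Nat.mod_eq_zero_of_dvd hdvd).symm
  | succ M ihM =>
    rw [Finset.sum_range_succ, ihM]
    have h1 : N % j ^ 2 ^ (M + 1) % (j ^ 2 ^ M) = N % j ^ 2 ^ M :=
      Nat.mod_mod_of_dvd _ (b_dvd_b (Nat.le_succ M))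
    have h2 := Nat.mod_add_div (N % j ^ 2 ^ (M + 1)) (j ^ 2 ^ M)
    have h3 : dig j M N * j ^ 2 ^ M = j ^ 2 ^ M * (N % j ^ 2 ^ (M+1) / j ^ 2 ^ M) := by
      rw [dig, Nat.mul_comm]
    omega

private lemma sum_dig {j : ℕ} (hj : 2 ≤ j) {N M : ℕ} (hdvd : j ∣ N) (hN : N < j ^ 2 ^ M) :
    ∑ i ∈ Finset.range M, dig j i N * j ^ 2 ^ i = N := by
  rw [sum_dig_mod hj hdvd M, Nat.mod_eq_of_lt hN]

private lemma sum_digits_le {j : ℕ} (hj : 2 ≤ j) (a : ℕ → ℕ) :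
    ∀ M, (∀ i' < M, a i' < j ^ 2 ^ i') →
      ∑ i' ∈ Finset.range M, a i' * j ^ 2 ^ i' ≤ j ^ 2 ^ M - j := by
  intro M
  induction M with
  | zero => simp
  | succ M ihM =>
    intro ha
    rw [Finset.sum_range_succ]
    have h1 := ihM (fun i hi => ha i (by omega))
    have h2 : (a M + 1) * j ^ 2 ^ M ≤ j ^ 2 ^ M * j ^ 2 ^ M :=
      Nat.mul_le_mul_right _ (ha M (by omega))
    rw [add_mul, one_mul] at h2
    have h3 := b_sq j M
    have h4 : j ≤ j ^ 2 ^ M := Nat.le_self_pow (by positivity) _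
    rw [h3]
    omega

private lemma dig_sum {j : ℕ} (hj : 2 ≤ j) (a : ℕ → ℕ) {M : ℕ}
    (ha : ∀ i' < M, a i' < j ^ 2 ^ i') {i : ℕ} (hi : i < M) :
    dig j i (∑ i' ∈ Finset.range M, a i' * j ^ 2 ^ i') = a i := by
  have hsplit : ∑ i' ∈ Finset.range (i+1), a i' * j ^ 2 ^ i'
      + ∑ i' ∈ Finset.Ico (i+1) M, a i' * j ^ 2 ^ i'
      = ∑ i' ∈ Finset.range M, a i' * j ^ 2 ^ i' := by
    rw [Finset.range_eq_Ico, Finset.range_eq_Ico]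
    exact Finset.sum_Ico_consecutive _ (by omega) (by omega)
  have hdvd : j ^ 2 ^ (i+1) ∣ ∑ i' ∈ Finset.Ico (i+1) M, a i' * j ^ 2 ^ i' :=
    Finset.dvd_sum fun i' hi' => Dvd.dvd.mul_left (b_dvd_b (Finset.mem_Ico.mp hi').1) _
  have hlt : ∑ i' ∈ Finset.range (i+1), a i' * j ^ 2 ^ i' < j ^ 2 ^ (i+1) := by
    have := sum_digits_le hj a (i+1) (fun i' h => ha i' (by omega))
    have h4 : j ≤ j ^ 2 ^ (i+1) := Nat.le_self_pow (by positivity) _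
    omega
  rw [dig, ← hsplit]
  obtain ⟨c, hc⟩ := hdvd
  rw [hc, Nat.add_mul_mod_self_left, Nat.mod_eq_of_lt hlt, Finset.sum_range_succ]
  have hlt2 : ∑ i' ∈ Finset.range i, a i' * j ^ 2 ^ i' < j ^ 2 ^ i := by
    have := sum_digits_le hj a i (fun i' h => ha i' (by omega))
    have h4 : j ≤ j ^ 2 ^ i := Nat.le_self_pow (by positivity) _
    omega
  rw [Nat.add_mul_div_right _ _ (by positivity), Nat.div_eq_of_lt hlt2, Nat.zero_add]

open Finset

private def sqFree (n : ℕ) : Finset ℕ := (Finset.Icc 2 n).filter (fun j => ¬ IsSquare j)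

private def fwdM (n : ℕ) (s : Multiset ℕ) : Multiset ℕ :=
  ∑ j ∈ sqFree n,
    Multiset.replicate ((∑ i ∈ Finset.range n, s.count (j ^ 2 ^ i) * j ^ 2 ^ i) / j) j

private def bwdM (n : ℕ) (s : Multiset ℕ) : Multiset ℕ :=
  ∑ k ∈ Finset.Icc 2 n,
    Multiset.replicate (dig (nsRoot k) (nsExp k) (s.count (nsRoot k) * nsRoot k)) k

private lemma count_repsum (S : Finset ℕ) (g : ℕ → ℕ) (k : ℕ) :
    (∑ j ∈ S, Multiset.replicate (g j) j).count k = if k ∈ S then g k else 0 := by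
  rw [Multiset.count_sum']
  rw [Finset.sum_congr rfl (fun j _ => Multiset.count_replicate k j (g j))]
  exact Finset.sum_ite_eq' S k g

private lemma sum_repsum (S : Finset ℕ) (g : ℕ → ℕ) :
    (∑ j ∈ S, Multiset.replicate (g j) j).sum = ∑ j ∈ S, g j * j := by
  rw [Multiset.sum_sum]
  exact Finset.sum_congr rfl fun j _ => by rw [Multiset.sum_replicate, smul_eq_mul]

private lemma exp_lt {j i n : ℕ} (hj : 2 ≤ j) (h : j ^ 2 ^ i ≤ n) : i < n := by
  have h1 : i + 1 ≤ 2 ^ i := Nat.lt_two_pow_self (n := i)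
  have h2 : i + 2 ≤ 2 ^ (i + 1) := Nat.lt_two_pow_self (n := i + 1)
  have h3 : 2 ^ (i + 1) ≤ 2 ^ 2 ^ i := Nat.pow_le_pow_right (by norm_num) h1
  have h4 : 2 ^ 2 ^ i ≤ j ^ 2 ^ i := Nat.pow_le_pow_left hj _
  omega

private lemma lt_b_self {j : ℕ} (hj : 2 ≤ j) (n : ℕ) : n < j ^ 2 ^ n := by
  have h1 : n < 2 ^ n := Nat.lt_two_pow_self (n := n)
  have h2 : 2 ^ n ≤ 2 ^ 2 ^ n := Nat.pow_le_pow_right (by norm_num) (Nat.le_of_lt h1)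
  have h3 : 2 ^ 2 ^ n ≤ j ^ 2 ^ n := Nat.pow_le_pow_left hj _
  omega

private lemma mem_sqFree {n j : ℕ} : j ∈ sqFree n ↔ (2 ≤ j ∧ j ≤ n) ∧ ¬ IsSquare j := by
  simp [sqFree, Finset.mem_filter, Finset.mem_Icc]

private lemma reindex (n : ℕ) (F : ℕ → ℕ) (hF : ∀ k, n < k → F k = 0) :
    ∑ k ∈ Finset.Icc 2 n, F k = ∑ j ∈ sqFree n, ∑ i ∈ Finset.range n, F (j ^ 2 ^ i) := by
  rw [← Finset.sum_product']
  rw [← Finset.sum_filter_add_sum_filter_not (sqFree n ×ˢ Finset.range n)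
    (fun x => x.1 ^ 2 ^ x.2 ≤ n) (fun x => F (x.1 ^ 2 ^ x.2))]
  have hzero : ∑ x ∈ (sqFree n ×ˢ Finset.range n).filter (fun x => ¬ x.1 ^ 2 ^ x.2 ≤ n),
      F (x.1 ^ 2 ^ x.2) = 0 :=
    Finset.sum_eq_zero fun x hx => hF _ (by
      have := (Finset.mem_filter.mp hx).2
      omega)
  rw [hzero, add_zero]
  refine Finset.sum_nbij' (fun k => (nsRoot k, nsExp k)) (fun x => x.1 ^ 2 ^ x.2)
    ?_ ?_ ?_ ?_ ?_
  · intro k hk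
    rw [Finset.mem_Icc] at hk
    obtain ⟨hj2, hjns, hjpow⟩ := nsSpec k hk.1
    have hle : nsRoot k ≤ k := by
      calc nsRoot k ≤ nsRoot k ^ 2 ^ nsExp k := Nat.le_self_pow (by positivity) _
      _ = k := hjpow
    simp only [Finset.mem_filter, Finset.mem_product, mem_sqFree, Finset.mem_range]
    refine ⟨⟨⟨⟨hj2, le_trans hle hk.2⟩, hjns⟩, ?_⟩, by rw [hjpow]; exact hk.2⟩
    exact exp_lt hj2 (by rw [hjpow]; exact hk.2)
  · intro x hx
    simp only [Finset.mem_filter, Finset.mem_product, mem_sqFree, Finset.mem_range] at hx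
    obtain ⟨⟨⟨⟨h2x, hxn⟩, hns⟩, hxr⟩, hpow⟩ := hx
    rw [Finset.mem_Icc]
    exact ⟨le_trans h2x (Nat.le_self_pow (by positivity) _), hpow⟩
  · intro k hk
    rw [Finset.mem_Icc] at hk
    obtain ⟨hj2, hjns, hjpow⟩ := nsSpec k hk.1
    exact hjpow
  · intro x hx
    simp only [Finset.mem_filter, Finset.mem_product, mem_sqFree, Finset.mem_range] at hx
    obtain ⟨⟨⟨⟨h2x, hxn⟩, hns⟩, hxr⟩, hpow⟩ := hx
    obtain ⟨c1, c2⟩ := nsCanon h2x hns x.2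
    exact Prod.ext c1 c2
  · intro k hk
    rw [Finset.mem_Icc] at hk
    obtain ⟨hj2, hjns, hjpow⟩ := nsSpec k hk.1
    rw [hjpow]

private lemma count_mul_le_sum (s : Multiset ℕ) (k : ℕ) : s.count k * k ≤ s.sum := by
  have h1 : s.filter (· = k) ≤ s := Multiset.filter_le _ s
  obtain ⟨u, hu⟩ := Multiset.le_iff_exists_add.mp h1
  have h2 : (s.filter (· = k)).sum = s.count k * k := by
    rw [Multiset.filter_eq', Multiset.sum_replicate, smul_eq_mul]
  calc s.count k * k = (s.filter (· = k)).sum := h2.symm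
    _ ≤ (s.filter (· = k)).sum + u.sum := Nat.le_add_right _ _
    _ = s.sum := by rw [← Multiset.sum_add, ← hu]

private lemma multiset_sum_count (s : Multiset ℕ) (S : Finset ℕ) (hsub : s.toFinset ⊆ S) :
    ∑ k ∈ S, s.count k * k = s.sum := by
  rw [← Finset.sum_subset hsub (fun x _ hx => by
    rw [Multiset.count_eq_zero.mpr (fun h => hx (Multiset.mem_toFinset.mpr h)), zero_mul])]
  conv_rhs => rw [← Multiset.toFinset_sum_count_nsmul_eq s]
  rw [Multiset.sum_sum]
  exact Finset.sum_congr rfl fun a _ => by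
    rw [Multiset.nsmul_singleton, Multiset.sum_replicate, smul_eq_mul]

private lemma partsA_zero {n : ℕ} (p : n.Partition) (hp : ∀ k, p.parts.count k ≤ k - 1) :
    ∀ k, k ∉ Finset.Icc 2 n → p.parts.count k = 0 := by
  intro k hk
  rw [Multiset.count_eq_zero]
  intro hmem
  have h1 := p.parts_pos hmem
  have h2 : k ≤ n := by
    have := Multiset.single_le_sum (fun x _ => Nat.zero_le x) k hmem
    rwa [p.parts_sum] at this
  have h3 : k ≠ 1 := by
    intro h; subst h
    have h4 := hp 1
    have h5 : p.parts.count 1 ≠ 0 := by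
      rw [Ne, Multiset.count_eq_zero]; exact fun h6 => h6 hmem
    omega
  rw [Finset.mem_Icc] at hk
  omega

private lemma partsB_zero {n : ℕ} (q : n.Partition)
    (hq : ∀ j, IsSquare j → q.parts.count j = 0) :
    ∀ k, k ∉ sqFree n → q.parts.count k = 0 := by
  intro k hk
  by_cases hsq : IsSquare k
  · exact hq k hsq
  rw [Multiset.count_eq_zero]
  intro hmem
  have h1 := q.parts_pos hmem
  have h2 : k ≤ n := by
    have := Multiset.single_le_sum (fun x _ => Nat.zero_le x) k hmem
    rwa [q.parts_sum] at this
  have h3 : k ≠ 1 := fun h => hsq (h ▸ ⟨1, by norm_num⟩)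
  exact hk (mem_sqFree.mpr ⟨⟨by omega, h2⟩, hsq⟩)

private lemma dvd_inner (s : Multiset ℕ) (n j : ℕ) :
    j ∣ ∑ i ∈ Finset.range n, s.count (j ^ 2 ^ i) * j ^ 2 ^ i :=
  Finset.dvd_sum fun i _ =>
    Dvd.dvd.mul_left (dvd_pow_self j (by positivity)) _

private lemma bwd_fwd {n : ℕ} (p : n.Partition) (hp : ∀ k, p.parts.count k ≤ k - 1) :
    bwdM n (fwdM n p.parts) = p.parts := by
  apply Multiset.ext.mpr
  intro k
  rw [bwdM, count_repsum]
  by_cases hk : k ∈ Finset.Icc 2 n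
  · rw [if_pos hk]
    rw [Finset.mem_Icc] at hk
    obtain ⟨hj2, hjns, hjpow⟩ := nsSpec k hk.1
    have hle : nsRoot k ≤ k := by
      calc nsRoot k ≤ nsRoot k ^ 2 ^ nsExp k := Nat.le_self_pow (by positivity) _
        _ = k := hjpow
    have hjfree : nsRoot k ∈ sqFree n := mem_sqFree.mpr ⟨⟨hj2, le_trans hle hk.2⟩, hjns⟩
    rw [fwdM, count_repsum, if_pos hjfree]
    rw [Nat.div_mul_cancel (dvd_inner p.parts n (nsRoot k))]
    have ha : ∀ i' < n, p.parts.count (nsRoot k ^ 2 ^ i') < nsRoot k ^ 2 ^ i' := by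
      intro i' _
      have h1 := hp (nsRoot k ^ 2 ^ i')
      have h2 : 2 ≤ nsRoot k ^ 2 ^ i' := le_trans hj2 (Nat.le_self_pow (by positivity) _)
      omega
    have he : nsExp k < n := exp_lt hj2 (by rw [hjpow]; exact hk.2)
    have hd := dig_sum hj2 (fun i' => p.parts.count (nsRoot k ^ 2 ^ i')) ha he
    beta_reduce at hd
    rw [hd, hjpow]
  · rw [if_neg hk]
    exact (partsA_zero p hp k hk).symm

private lemma fwd_bwd {n : ℕ} (q : n.Partition)
    (hq : ∀ j, IsSquare j → q.parts.count j = 0) :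
    fwdM n (bwdM n q.parts) = q.parts := by
  apply Multiset.ext.mpr
  intro k
  rw [fwdM, count_repsum]
  by_cases hk : k ∈ sqFree n
  · rw [if_pos hk]
    obtain ⟨⟨hk2, hkn⟩, hkns⟩ := mem_sqFree.mp hk
    have hm : q.parts.count k * k ≤ n := by
      have := count_mul_le_sum q.parts k
      rwa [q.parts_sum] at this
    have hcount : ∀ i, (bwdM n q.parts).count (k ^ 2 ^ i)
        = dig k i (q.parts.count k * k) := by
      intro i
      rw [bwdM, count_repsum]
      obtain ⟨c1, c2⟩ := nsCanon hk2 hkns i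
      by_cases hin : k ^ 2 ^ i ∈ Finset.Icc 2 n
      · rw [if_pos hin, c1, c2]
      · rw [if_neg hin]
        have h2 : 2 ≤ k ^ 2 ^ i := le_trans hk2 (Nat.le_self_pow (by positivity) _)
        have h3 : n < k ^ 2 ^ i := by
          rw [Finset.mem_Icc] at hin; omega
        exact (dig_eq_zero (lt_of_le_of_lt hm h3)).symm
    rw [Finset.sum_congr rfl (fun i _ => by rw [hcount i])]
    rw [sum_dig hk2 (dvd_mul_left k _) (lt_of_le_of_lt hm (lt_b_self hk2 n))]
    exact Nat.mul_div_cancel _ (by omega)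
  · rw [if_neg hk]
    exact (partsB_zero q hq k hk).symm

private lemma fwd_sum {n : ℕ} (p : n.Partition) (hp : ∀ k, p.parts.count k ≤ k - 1) :
    (fwdM n p.parts).sum = n := by
  rw [fwdM, sum_repsum]
  have hF : ∀ k, n < k → p.parts.count k * k = 0 := by
    intro k hk
    rw [partsA_zero p hp k (by rw [Finset.mem_Icc]; omega), zero_mul]
  calc ∑ j ∈ sqFree n, (∑ i ∈ Finset.range n, p.parts.count (j ^ 2 ^ i) * j ^ 2 ^ i) / j * j
      = ∑ j ∈ sqFree n, ∑ i ∈ Finset.range n, p.parts.count (j ^ 2 ^ i) * j ^ 2 ^ i :=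
        Finset.sum_congr rfl fun j _ => Nat.div_mul_cancel (dvd_inner p.parts n j)
    _ = ∑ k ∈ Finset.Icc 2 n, p.parts.count k * k :=
        (reindex n (fun k => p.parts.count k * k) hF).symm
    _ = p.parts.sum := multiset_sum_count _ _ (fun a ha => by
        by_contra hcon
        have := partsA_zero p hp a hcon
        rw [Multiset.mem_toFinset] at ha
        rw [Multiset.count_eq_zero] at this
        exact this ha)
    _ = n := p.parts_sum

private lemma bwd_sum {n : ℕ} (hn : 0 < n) (q : n.Partition)
    (hq : ∀ j, IsSquare j → q.parts.count j = 0) :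
    (bwdM n q.parts).sum = n := by
  rw [bwdM, sum_repsum]
  have hF : ∀ k, n < k →
      dig (nsRoot k) (nsExp k) (q.parts.count (nsRoot k) * nsRoot k) * k = 0 := by
    intro k hk
    have hk2 : 2 ≤ k := by omega
    obtain ⟨hj2, hjns, hjpow⟩ := nsSpec k hk2
    have hm : q.parts.count (nsRoot k) * nsRoot k ≤ n := by
      have := count_mul_le_sum q.parts (nsRoot k)
      rwa [q.parts_sum] at this
    rw [dig_eq_zero (by rw [hjpow]; omega), zero_mul]
  rw [reindex n _ hF]
  have hinner : ∀ j ∈ sqFree n, (∑ i ∈ Finset.range n,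
      dig (nsRoot (j ^ 2 ^ i)) (nsExp (j ^ 2 ^ i))
        (q.parts.count (nsRoot (j ^ 2 ^ i)) * nsRoot (j ^ 2 ^ i)) * j ^ 2 ^ i)
      = q.parts.count j * j := by
    intro j hj
    obtain ⟨⟨hj2, hjn⟩, hjns⟩ := mem_sqFree.mp hj
    have hm : q.parts.count j * j ≤ n := by
      have := count_mul_le_sum q.parts j
      rwa [q.parts_sum] at this
    rw [Finset.sum_congr rfl (fun i _ => by
      obtain ⟨c1, c2⟩ := nsCanon hj2 hjns i
      rw [c1, c2])]
    exact sum_dig hj2 (dvd_mul_left j _) (lt_of_le_of_lt hm (lt_b_self hj2 n))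
  rw [Finset.sum_congr rfl hinner]
  rw [multiset_sum_count _ _ (fun a ha => by
    by_contra hcon
    have := partsB_zero q hq a hcon
    rw [Multiset.mem_toFinset] at ha
    rw [Multiset.count_eq_zero] at this
    exact this ha)]
  exact q.parts_sum

private lemma mem_repsum {S : Finset ℕ} {g : ℕ → ℕ} {k : ℕ}
    (h : k ∈ (∑ j ∈ S, Multiset.replicate (g j) j)) : k ∈ S := by
  by_contra hcon
  have h0 := count_repsum S g k
  rw [if_neg hcon] at h0
  rw [Multiset.count_eq_zero] at h0
  exact h0 h

private lemma fwd_pos {n : ℕ} {s : Multiset ℕ} {i : ℕ} (hi : i ∈ fwdM n s) : 0 < i := by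
  rw [fwdM] at hi
  have h1 := mem_repsum hi
  have := (mem_sqFree.mp h1).1.1
  omega

private lemma fwd_nonsq {n : ℕ} {s : Multiset ℕ} {i : ℕ} (hi : i ∈ fwdM n s) :
    ¬ ∃ k : ℕ, 0 < k ∧ i = k ^ 2 := by
  rw [fwdM] at hi
  have h1 := mem_repsum hi
  have h2 := (mem_sqFree.mp h1).2
  rintro ⟨k, hk, rfl⟩
  exact h2 ⟨k, by rw [sq]⟩

private lemma bwd_pos {n : ℕ} {s : Multiset ℕ} {i : ℕ} (hi : i ∈ bwdM n s) : 0 < i := by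
  rw [bwdM] at hi
  have h1 := mem_repsum hi
  rw [Finset.mem_Icc] at h1
  omega

private lemma bwd_bound {n : ℕ} (s : Multiset ℕ) (k : ℕ) : (bwdM n s).count k ≤ k - 1 := by
  rw [bwdM, count_repsum]
  by_cases hk : k ∈ Finset.Icc 2 n
  · rw [if_pos hk]
    rw [Finset.mem_Icc] at hk
    obtain ⟨hj2, hjns, hjpow⟩ := nsSpec k hk.1
    have h1 := dig_lt (by omega : 0 < nsRoot k) (nsExp k) (s.count (nsRoot k) * nsRoot k)
    rw [hjpow] at h1
    omega
  · rw [if_neg hk]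
    omega

/-- Andrews' theorem: the number of partitions of `n` in which each part `k` occurs at most
`k - 1` times equals the number of partitions of `n` with no perfect-square part. -/
theorem stmt_2 (n : ℕ) (hn : 0 < n) :
    Nat.card {p : n.Partition // ∀ k, p.parts.count k ≤ k - 1} =
      Nat.card {p : n.Partition // ∀ i ∈ p.parts, ¬ ∃ k : ℕ, 0 < k ∧ i = k ^ 2} := by
  have hBconv : ∀ (q : n.Partition), (∀ i ∈ q.parts, ¬ ∃ k : ℕ, 0 < k ∧ i = k ^ 2) →
      ∀ j, IsSquare j → q.parts.count j = 0 := by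
    intro q hy j hsq
    rw [Multiset.count_eq_zero]
    intro hmem
    obtain ⟨r, hr⟩ := hsq
    have hrpos : 0 < r := by
      have hjpos := q.parts_pos hmem
      rcases Nat.eq_zero_or_pos r with h | h
      · subst h; omega
      · exact h
    exact hy j hmem ⟨r, hrpos, by rw [hr, sq]⟩
  refine Nat.card_congr
    { toFun := fun x =>
        ⟨⟨fwdM n x.1.parts, fun hi => fwd_pos hi, fwd_sum x.1 x.2⟩,
          fun i hi => fwd_nonsq hi⟩
      invFun := fun y =>
        ⟨⟨bwdM n y.1.parts, fun hi => bwd_pos hi, bwd_sum hn y.1 (hBconv y.1 y.2)⟩,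
          fun k => bwd_bound y.1.parts k⟩
      left_inv := fun x => Subtype.ext (Nat.Partition.ext (bwd_fwd x.1 x.2))
      right_inv := fun y => Subtype.ext (Nat.Partition.ext (fwd_bwd y.1 (hBconv y.1 y.2))) }
end

section
/- Let r ≥ 2 be a fixed integer. For every positive integer n, the number of partitions of n in which each part k occurs at most (r − 1)(k − 1) times equals the number of partitions of n in which no part is a 2r-gonal number, i.e., no part is of the form k·((r − 1)·k − (r − 2)) for some positive integer k. -/
open PowerSeries Finset

namespace Stmt3Aux

noncomputable section

open scoped Classical

variable {α : Type*}

/-- A convenience constructor for the power series whose coefficients indicate a subset. -/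
def indicatorSeries (α : Type*) [Semiring α] (s : Set ℕ) : PowerSeries α :=
  PowerSeries.mk fun n => if n ∈ s then 1 else 0

theorem coeff_indicator (s : Set ℕ) [Semiring α] (n : ℕ) :
    coeff n (indicatorSeries α s) = if n ∈ s then 1 else 0 :=
  coeff_mk _ _

theorem constantCoeff_indicator (s : Set ℕ) [Semiring α] :
    constantCoeff (indicatorSeries α s) = if 0 ∈ s then 1 else 0 :=
  rfl

theorem num_series' [Field α] (i : ℕ) :
    (1 - (X : PowerSeries α) ^ (i + 1))⁻¹ = indicatorSeries α {k | i + 1 ∣ k} := by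
  rw [PowerSeries.inv_eq_iff_mul_eq_one]
  · ext n
    cases n with
    | zero => simp [mul_sub, zero_pow, constantCoeff_indicator]
    | succ n =>
      simp only [coeff_one, if_false, mul_sub, mul_one, coeff_indicator,
        LinearMap.map_sub, reduceCtorEq]
      simp_rw [coeff_mul, coeff_X_pow, coeff_indicator, @boole_mul _ _ _ _]
      erw [@sum_ite _ _ _ _ _ (fun _ => Classical.propDecidable _), sum_ite]
      simp_rw [@filter_filter _ _ _ _ _, sum_const_zero, add_zero, sum_const, nsmul_eq_mul, mul_one,
        sub_eq_iff_eq_add, zero_add]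
      symm
      split_ifs with h
      · suffices #{a ∈ antidiagonal (n + 1) | i + 1 ∣ a.fst ∧ a.snd = i + 1} = 1 by
          simp only [Set.mem_setOf_eq]; convert congr_arg ((↑) : ℕ → α) this; norm_cast
        rw [card_eq_one]
        cases' h with p hp
        refine ⟨((i + 1) * (p - 1), i + 1), ?_⟩
        ext ⟨a₁, a₂⟩
        simp only [mem_filter, Prod.mk_inj, HasAntidiagonal.mem_antidiagonal, mem_singleton]
        constructor
        · rintro ⟨a_left, ⟨a, rfl⟩, rfl⟩
          refine ⟨?_, rfl⟩
          rw [Nat.mul_sub_left_distrib, ← hp, ← a_left, mul_one, Nat.add_sub_cancel]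
        · rintro ⟨rfl, rfl⟩
          match p with
          | 0 => rw [mul_zero] at hp; cases hp
          | p + 1 => rw [hp]; simp [mul_add]
      · suffices #{a ∈ antidiagonal (n + 1) | i + 1 ∣ a.fst ∧ a.snd = i + 1} = 0 by
          simp only [Set.mem_setOf_eq]; convert congr_arg ((↑) : ℕ → α) this; norm_cast
        rw [card_eq_zero]
        apply eq_empty_of_forall_notMem
        simp only [Prod.forall, mem_filter, not_and, HasAntidiagonal.mem_antidiagonal]
        rintro _ h₁ h₂ ⟨a, rfl⟩ rfl
        apply h
        simp [← h₂]
  · simp [zero_pow]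

-- The main workhorse (copied from the Archive's proof of Euler's partition theorem).
theorem partialGF_prop (α : Type*) [CommSemiring α] (n : ℕ) (s : Finset ℕ) (hs : ∀ i ∈ s, 0 < i)
    (c : ℕ → Set ℕ) (hc : ∀ i, i ∉ s → 0 ∈ c i) :
    #{p : n.Partition | (∀ j, p.parts.count j ∈ c j) ∧ ∀ j ∈ p.parts, j ∈ s} =
      coeff n (∏ i ∈ s, indicatorSeries α ((· * i) '' c i)) := by
  simp_rw [coeff_prod, coeff_indicator, prod_boole, sum_boole]
  apply congr_arg
  simp only [mem_univ, forall_true_left, not_and, not_forall, exists_prop,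
    Set.mem_image, not_exists]
  set φ : (a : Nat.Partition n) →
    a ∈ filter (fun p ↦ (∀ (j : ℕ), Multiset.count j p.parts ∈ c j) ∧ ∀ j ∈ p.parts, j ∈ s) univ →
    ℕ →₀ ℕ := fun p _ => {
      toFun := fun i => Multiset.count i p.parts • i
      support := Finset.filter (fun i => i ≠ 0) p.parts.toFinset
      mem_support_toFun := fun a => by
        simp only [smul_eq_mul, ne_eq, mul_eq_zero, Multiset.count_eq_zero]
        rw [not_or, not_not]
        simp only [Multiset.mem_toFinset, not_not, mem_filter] }
  refine Finset.card_bij φ ?_ ?_ ?_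
  · intro a ha
    simp only [φ, not_forall, not_exists, not_and, exists_prop, mem_filter]
    rw [mem_finsuppAntidiag]
    dsimp only [ne_eq, smul_eq_mul, id_eq, eq_mpr_eq_cast, le_eq_subset, Finsupp.coe_mk]
    simp only [mem_univ, forall_true_left, not_and, not_forall, exists_prop,
      mem_filter, true_and] at ha
    refine ⟨⟨?_, fun i ↦ ?_⟩, fun i _ ↦ ⟨a.parts.count i, ha.1 i, rfl⟩⟩
    · conv_rhs => simp [← a.parts_sum]
      rw [sum_multiset_count_of_subset _ s]
      · simp only [smul_eq_mul]
      · intro i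
        simp only [Multiset.mem_toFinset, not_not, mem_filter]
        apply ha.2
    · simp only [ne_eq, Multiset.mem_toFinset, not_not, mem_filter, and_imp]
      exact fun hi _ ↦ ha.2 i hi
  · intro p₁ hp₁ p₂ hp₂ h
    apply Nat.Partition.ext
    simp only [true_and, mem_univ, mem_filter] at hp₁ hp₂
    ext i
    simp only [φ, ne_eq, Multiset.mem_toFinset, not_not, smul_eq_mul, Finsupp.mk.injEq] at h
    by_cases hi : i = 0
    · rw [hi]
      rw [Multiset.count_eq_zero_of_notMem]
      · rw [Multiset.count_eq_zero_of_notMem]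
        intro a; exact Nat.lt_irrefl 0 (hs 0 (hp₂.2 0 a))
      intro a; exact Nat.lt_irrefl 0 (hs 0 (hp₁.2 0 a))
    · rw [← mul_left_inj' hi]
      rw [funext_iff] at h
      exact h.2 i
  · simp only [φ, mem_filter, mem_finsuppAntidiag, mem_univ, exists_prop, true_and, and_assoc]
    rintro f ⟨hf, hf₃, hf₄⟩
    have hf' : f ∈ finsuppAntidiag s n := mem_finsuppAntidiag.mpr ⟨hf, hf₃⟩
    simp only [mem_finsuppAntidiag] at hf'
    refine ⟨⟨∑ i ∈ s, Multiset.replicate (f i / i) i, ?_, ?_⟩, ?_, ?_, ?_⟩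
    · intro i hi
      simp only [exists_prop, Multiset.mem_sum, mem_map, Function.Embedding.coeFn_mk] at hi
      rcases hi with ⟨t, ht, z⟩
      apply hs
      rwa [Multiset.eq_of_mem_replicate z]
    · simp_rw [Multiset.sum_sum, Multiset.sum_replicate, Nat.nsmul_eq_mul]
      rw [← hf'.1]
      refine sum_congr rfl fun i hi => Nat.div_mul_cancel ?_
      rcases hf₄ i hi with ⟨w, _, hw₂⟩
      rw [← hw₂]
      exact dvd_mul_left _ _
    · intro i
      simp_rw [Multiset.count_sum', Multiset.count_replicate, sum_ite_eq']
      split_ifs with h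
      · rcases hf₄ i h with ⟨w, hw₁, hw₂⟩
        rwa [← hw₂, Nat.mul_div_cancel _ (hs i h)]
      · exact hc _ h
    · intro i hi
      rw [Multiset.mem_sum] at hi
      rcases hi with ⟨j, hj₁, hj₂⟩
      rwa [Multiset.eq_of_mem_replicate hj₂]
    · ext i
      simp_rw [Multiset.count_sum', Multiset.count_replicate, sum_ite_eq']
      simp only [ne_eq, Multiset.mem_toFinset, not_not, smul_eq_mul, ite_mul,
        zero_mul, Finsupp.coe_mk]
      split_ifs with h
      · apply Nat.div_mul_cancel
        rcases hf₄ i h with ⟨w, _, hw₂⟩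
        apply Dvd.intro_left _ hw₂
      · apply symm
        rw [← Finsupp.notMem_support_iff]
        exact notMem_mono hf'.2 h

/-- The indicator series of the multiples `{0, i, 2i, …, Bi}` is a finite geometric series. -/
theorem indicator_eq_geom [Semiring α] (i B : ℕ) (hi : 0 < i) :
    indicatorSeries α ((· * i) '' {j | j ≤ B}) = ∑ j ∈ range (B + 1), ((X : PowerSeries α) ^ i) ^ j := by
  ext n
  simp_rw [coeff_indicator, map_sum, ← pow_mul, coeff_X_pow]
  symm
  by_cases h : n ∈ (· * i) '' {j | j ≤ B}
  · rw [if_pos h]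
    rcases h with ⟨j, hj, rfl⟩
    rw [Finset.sum_eq_single_of_mem j (Finset.mem_range.mpr (Nat.lt_succ_of_le hj))]
    · rw [if_pos (mul_comm j i)]
    · intro b _ hb
      rw [if_neg]
      intro hcon
      exact hb (Nat.eq_of_mul_eq_mul_left hi ((mul_comm i j).trans hcon)).symm
  · rw [if_neg h]
    apply Finset.sum_eq_zero
    intro j hj
    rw [if_neg]
    intro hcon
    exact h ⟨j, Nat.lt_succ_iff.mp (Finset.mem_range.mp hj), by rw [hcon, mul_comm]⟩

/-- The bounded-multiplicity factor as a ratio. -/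
theorem bounded_factor [Field α] (i B : ℕ) (hi : 0 < i) :
    indicatorSeries α ((· * i) '' {j | j ≤ B}) =
      (1 - (X : PowerSeries α) ^ i)⁻¹ * (1 - X ^ (i * (B + 1))) := by
  have hc : constantCoeff (1 - X ^ i : PowerSeries α) ≠ 0 := by
    rw [map_sub, map_pow, constantCoeff_one, constantCoeff_X, zero_pow hi.ne', sub_zero]
    exact one_ne_zero
  have key : (1 - (X : PowerSeries α) ^ i) * indicatorSeries α ((· * i) '' {j | j ≤ B}) =
      1 - X ^ (i * (B + 1)) := by
    rw [indicator_eq_geom i B hi, mul_neg_geom_sum, ← pow_mul]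
  calc indicatorSeries α ((· * i) '' {j | j ≤ B})
      = ((1 - (X : PowerSeries α) ^ i)⁻¹ * (1 - X ^ i)) *
          indicatorSeries α ((· * i) '' {j | j ≤ B}) := by
        rw [PowerSeries.inv_mul_cancel _ hc, one_mul]
    _ = (1 - (X : PowerSeries α) ^ i)⁻¹ * (1 - X ^ (i * (B + 1))) := by
        rw [mul_assoc, key]

end

end Stmt3Aux

open Stmt3Aux

/-- For fixed `r ≥ 2`, the number of partitions of `n` in which each part `k` occurs at most
`(r - 1) * (k - 1)` times equals the number of partitions of `n` in which no part is a
`2r`-gonal number `k * ((r - 1) * k - (r - 2))`. -/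
theorem stmt_3 (r : ℕ) (hr : 2 ≤ r) (n : ℕ) (hn : 0 < n) :
    Nat.card {p : n.Partition // ∀ k, p.parts.count k ≤ (r - 1) * (k - 1)} =
      Nat.card {p : n.Partition //
        ∀ i ∈ p.parts, ¬ ∃ k : ℕ, 0 < k ∧ i = k * ((r - 1) * k - (r - 2))} := by
  classical
  set g : ℕ → ℕ := fun k => k * ((r - 1) * k - (r - 2)) with hg
  -- basic facts about g
  have hg1 : ∀ i, 1 ≤ i → 1 ≤ (r - 1) * i - (r - 2) := by
    intro i hi
    have h1 : r - 1 ≤ (r - 1) * i := Nat.le_mul_of_pos_right _ hi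
    omega
  have hgle : ∀ i, 1 ≤ i → i ≤ g i := by
    intro i hi
    simpa [hg] using Nat.le_mul_of_pos_right i (hg1 i hi)
  have hgmono : ∀ i j, 1 ≤ i → i < j → g i < g j := by
    intro i j hi hij
    have h1 : (r - 1) * i - (r - 2) ≤ (r - 1) * j - (r - 2) := by
      have := Nat.mul_le_mul_left (r - 1) hij.le
      omega
    calc g i = i * ((r - 1) * i - (r - 2)) := rfl
      _ < j * ((r - 1) * i - (r - 2)) :=
          (Nat.mul_lt_mul_right (hg1 i hi)).mpr hij
      _ ≤ j * ((r - 1) * j - (r - 2)) := Nat.mul_le_mul_left _ h1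
  set A : Finset ℕ := Finset.Icc 1 n with hA
  have hApos : ∀ i ∈ A, 0 < i := fun i hi => (Finset.mem_Icc.mp hi).1
  -- every partition of n has parts in A
  have hparts : ∀ p : n.Partition, ∀ j ∈ p.parts, j ∈ A := by
    intro p j hj
    rw [hA, Finset.mem_Icc]
    refine ⟨p.parts_pos hj, ?_⟩
    have := Multiset.single_le_sum (fun a _ => Nat.zero_le a) j hj
    rwa [p.parts_sum] at this
  set G : Finset ℕ := (A.filter (fun i => g i ≤ n)).image g with hGdef
  have hGsub : G ⊆ A := by
    intro j hj
    rw [hGdef] at hj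
    rcases Finset.mem_image.mp hj with ⟨i, hi, rfl⟩
    rcases Finset.mem_filter.mp hi with ⟨hiA, hgi⟩
    rw [hA, Finset.mem_Icc]
    exact ⟨le_trans (hApos i hiA) (hgle i (hApos i hiA)), hgi⟩
  have hGmem : ∀ j ∈ A, (j ∈ G ↔ ∃ k : ℕ, 0 < k ∧ j = g k) := by
    intro j hjA
    rw [hGdef]
    constructor
    · intro hj
      rcases Finset.mem_image.mp hj with ⟨i, hi, rfl⟩
      exact ⟨i, hApos i (Finset.mem_filter.mp hi).1, rfl⟩
    · rintro ⟨k, hk, rfl⟩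
      have hk' : k ≤ g k := hgle k hk
      have : g k ≤ n := (Finset.mem_Icc.mp hjA).2
      refine Finset.mem_image.mpr ⟨k, Finset.mem_filter.mpr ⟨?_, this⟩, rfl⟩
      rw [hA, Finset.mem_Icc]
      exact ⟨hk, le_trans hk' this⟩
  -- counting via Finset cards
  rw [Nat.card_eq_fintype_card, Nat.card_eq_fintype_card, Fintype.card_subtype,
    Fintype.card_subtype]
  -- identify with the filtered forms used by partialGF_prop
  have hL : (Finset.univ.filter
        (fun p : n.Partition => ∀ k, p.parts.count k ≤ (r - 1) * (k - 1))) =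
      Finset.univ.filter (fun p : n.Partition =>
        (∀ j, p.parts.count j ∈ {m | m ≤ (r - 1) * (j - 1)}) ∧ ∀ j ∈ p.parts, j ∈ A) := by
    apply Finset.filter_congr
    intro p _
    simp only [Set.mem_setOf_eq]
    exact ⟨fun h => ⟨h, hparts p⟩, fun h => h.1⟩
  have hR : (Finset.univ.filter
        (fun p : n.Partition => ∀ i ∈ p.parts, ¬ ∃ k : ℕ, 0 < k ∧ i = g k)) =
      Finset.univ.filter (fun p : n.Partition =>
        (∀ j, p.parts.count j ∈ (Set.univ : Set ℕ)) ∧ ∀ j ∈ p.parts, j ∈ A \ G) := by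
    apply Finset.filter_congr
    intro p _
    simp only [Set.mem_univ, forall_const, true_and]
    constructor
    · intro h j hj
      rw [Finset.mem_sdiff]
      refine ⟨hparts p j hj, fun hjG => h j hj ((hGmem j (hparts p j hj)).mp hjG)⟩
    · intro h i hi hex
      have := h i hi
      rw [Finset.mem_sdiff] at this
      exact this.2 ((hGmem i (hparts p i hi)).mpr hex)
  rw [hL, hR]
  -- now express both sides as coefficients of power series over ℚ
  have key1 := partialGF_prop ℚ n A hApos (fun j => {m | m ≤ (r - 1) * (j - 1)})
    (fun i _ => Nat.zero_le _)
  have key2 := partialGF_prop ℚ n (A \ G)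
    (fun i hi => hApos i (Finset.mem_sdiff.mp hi).1) (fun _ => Set.univ) (fun _ _ => trivial)
  have e1 : (Finset.univ.filter (fun p : n.Partition =>
        (∀ j, p.parts.count j ∈ {m | m ≤ (r - 1) * (j - 1)}) ∧ ∀ j ∈ p.parts, j ∈ A)).card =
      (coeff n) (∏ i ∈ A, indicatorSeries ℚ ((· * i) '' {m | m ≤ (r - 1) * (i - 1)})) := key1
  have e2 : (Finset.univ.filter (fun p : n.Partition =>
        (∀ j, p.parts.count j ∈ (Set.univ : Set ℕ)) ∧ ∀ j ∈ p.parts, j ∈ A \ G)).card =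
      (coeff n) (∏ i ∈ A \ G, indicatorSeries ℚ ((· * i) '' (Set.univ : Set ℕ))) := key2
  suffices hGF : (coeff n) (∏ i ∈ A, indicatorSeries ℚ ((· * i) '' {m | m ≤ (r - 1) * (i - 1)}))
      = (coeff n) (∏ i ∈ A \ G, indicatorSeries ℚ ((· * i) '' (Set.univ : Set ℕ))) by
    have := e1.trans (hGF.trans e2.symm)
    exact_mod_cast this
  -- rewrite factors
  have hfac : ∀ i ∈ A, indicatorSeries ℚ ((· * i) '' {m | m ≤ (r - 1) * (i - 1)}) =
      (1 - (X : PowerSeries ℚ) ^ i)⁻¹ * (1 - X ^ (g i)) := by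
    intro i hi
    have hipos := hApos i hi
    have : i * ((r - 1) * (i - 1) + 1) = g i := by
      have h1 : r - 1 ≤ (r - 1) * i := Nat.le_mul_of_pos_right _ hipos
      have : (r - 1) * (i - 1) + 1 = (r - 1) * i - (r - 2) := by
        rw [Nat.mul_sub_one]
        omega
      rw [this]
    rw [bounded_factor i ((r - 1) * (i - 1)) hipos, this]
  have hfacU : ∀ i : ℕ, 0 < i → indicatorSeries ℚ ((· * i) '' (Set.univ : Set ℕ)) =
      (1 - (X : PowerSeries ℚ) ^ i)⁻¹ := by
    intro i hipos
    obtain ⟨i', rfl⟩ := Nat.exists_eq_add_of_lt hipos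
    have hset : ((· * (i' + 1)) '' (Set.univ : Set ℕ)) = {k | i' + 1 ∣ k} := by
      ext k
      constructor
      · rintro ⟨m, -, rfl⟩; exact Dvd.intro_left m rfl
      · rintro ⟨m, rfl⟩; exact ⟨m, trivial, mul_comm _ _⟩
    rw [zero_add, hset, num_series']
  rw [Finset.prod_congr rfl hfac, Finset.prod_mul_distrib]
  -- split the numerator product at size n
  have hsplit : A = (A.filter (fun i => g i ≤ n)) ∪ (A.filter (fun i => ¬ g i ≤ n)) :=
    (Finset.filter_union_filter_not_eq _ A).symm
  have hdisj : Disjoint (A.filter (fun i => g i ≤ n)) (A.filter (fun i => ¬ g i ≤ n)) :=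
    Finset.disjoint_filter_filter_not A A _
  have hnum : (∏ i ∈ A, (1 - (X : PowerSeries ℚ) ^ (g i))) =
      (∏ j ∈ G, (1 - (X : PowerSeries ℚ) ^ j)) *
        ∏ i ∈ A.filter (fun i => ¬ g i ≤ n), (1 - (X : PowerSeries ℚ) ^ (g i)) := by
    conv_lhs => rw [hsplit]
    rw [Finset.prod_union hdisj]
    congr 1
    rw [hGdef, Finset.prod_image]
    intro x hx y hy hxy
    by_contra hne
    rcases Nat.lt_or_ge x y with h | h
    · exact absurd hxy (hgmono x y (hApos x (Finset.mem_filter.mp hx).1) h).ne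
    · have := hgmono y x (hApos y (Finset.mem_filter.mp hy).1) (lt_of_le_of_ne h (Ne.symm hne))
      exact absurd hxy.symm this.ne
  -- split the denominator product over G
  have hden : (∏ i ∈ A, (1 - (X : PowerSeries ℚ) ^ i)⁻¹) =
      (∏ i ∈ A \ G, (1 - (X : PowerSeries ℚ) ^ i)⁻¹) *
        ∏ j ∈ G, (1 - (X : PowerSeries ℚ) ^ j)⁻¹ := by
    rw [← Finset.prod_union (Finset.sdiff_disjoint), Finset.sdiff_union_of_subset hGsub]
  rw [hnum, hden]
  have hcancel : (∏ j ∈ G, (1 - (X : PowerSeries ℚ) ^ j)⁻¹) *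
      (∏ j ∈ G, (1 - (X : PowerSeries ℚ) ^ j)) = 1 := by
    rw [← Finset.prod_mul_distrib]
    apply Finset.prod_eq_one
    intro j hj
    have hjpos : 0 < j := hApos j (hGsub hj)
    refine PowerSeries.inv_mul_cancel _ ?_
    rw [map_sub, map_pow, constantCoeff_one, constantCoeff_X, zero_pow hjpos.ne', sub_zero]
    exact one_ne_zero
  have hrw : (∏ i ∈ A \ G, (1 - (X : PowerSeries ℚ) ^ i)⁻¹) *
        (∏ j ∈ G, (1 - (X : PowerSeries ℚ) ^ j)⁻¹) *
      ((∏ j ∈ G, (1 - (X : PowerSeries ℚ) ^ j)) *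
        ∏ i ∈ A.filter (fun i => ¬ g i ≤ n), (1 - (X : PowerSeries ℚ) ^ (g i))) =
      (∏ i ∈ A \ G, (1 - (X : PowerSeries ℚ) ^ i)⁻¹) *
        ∏ i ∈ A.filter (fun i => ¬ g i ≤ n), (1 - (X : PowerSeries ℚ) ^ (g i)) := by
    calc _ = ((∏ j ∈ G, (1 - (X : PowerSeries ℚ) ^ j)⁻¹) *
          (∏ j ∈ G, (1 - (X : PowerSeries ℚ) ^ j))) *
          ((∏ i ∈ A \ G, (1 - (X : PowerSeries ℚ) ^ i)⁻¹) *
            ∏ i ∈ A.filter (fun i => ¬ g i ≤ n), (1 - (X : PowerSeries ℚ) ^ (g i))) := by ring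
      _ = _ := by rw [hcancel, one_mul]
  rw [hrw]
  rw [coeff_mul_prod_one_sub_of_lt_order n _ _ _ ?_]
  · rw [Finset.prod_congr rfl (fun i hi => hfacU i (hApos i (Finset.mem_sdiff.mp hi).1))]
  · intro i hi
    rw [PowerSeries.order_X_pow]
    exact_mod_cast Nat.lt_of_not_le (Finset.mem_filter.mp hi).2
end

section
/- Let r ≥ 2 be a fixed integer. For every positive integer n, the number of partitions of n in which, for each k ≥ 1, the odd part 2k − 1 occurs at most (2r − 1)(k − 1) times while even parts occur without restriction, equals the number of partitions of n in which no part is an odd-subscripted (2r + 1)-gonal number, i.e., no part is of the form (2k − 1)·((2r − 1)(k − 1) + 1) for some positive integer k. -/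
open PowerSeries

namespace Aux4stmt

noncomputable section

variable {α : Type*}

open Finset

open scoped Classical

/-- The partial product for the generating function for odd partitions.
TODO: As `m` tends to infinity, this converges (in the `X`-adic topology).

If `m` is sufficiently large, the `i`th coefficient gives the number of odd partitions of the
natural number `i`: proved in `oddGF_prop`.
It is stated for an arbitrary field `α`, though it usually suffices to use `ℚ` or `ℝ`.
-/
def partialOddGF (m : ℕ) [Field α] :=
  ∏ i ∈ range m, (1 - (X : PowerSeries α) ^ (2 * i + 1))⁻¹

/-- The partial product for the generating function for distinct partitions.
TODO: As `m` tends to infinity, this converges (in the `X`-adic topology).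

If `m` is sufficiently large, the `i`th coefficient gives the number of distinct partitions of the
natural number `i`: proved in `distinctGF_prop`.
It is stated for an arbitrary commutative semiring `α`, though it usually suffices to use `ℕ`, `ℚ`
or `ℝ`.
-/
def partialDistinctGF (m : ℕ) [CommSemiring α] :=
  ∏ i ∈ range m, (1 + (X : PowerSeries α) ^ (i + 1))

open Finset.HasAntidiagonal

universe u
variable {ι : Type u}

/-- A convenience constructor for the power series whose coefficients indicate a subset. -/
def indicatorSeries (α : Type*) [Semiring α] (s : Set ℕ) : PowerSeries α :=
  PowerSeries.mk fun n => if n ∈ s then 1 else 0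

theorem coeff_indicator (s : Set ℕ) [Semiring α] (n : ℕ) :
    coeff n (indicatorSeries α s) = if n ∈ s then 1 else 0 :=
  coeff_mk _ _

theorem coeff_indicator_pos (s : Set ℕ) [Semiring α] (n : ℕ) (h : n ∈ s) :
    coeff n (indicatorSeries α s) = 1 := by rw [coeff_indicator, if_pos h]

theorem coeff_indicator_neg (s : Set ℕ) [Semiring α] (n : ℕ) (h : n ∉ s) :
    coeff n (indicatorSeries α s) = 0 := by rw [coeff_indicator, if_neg h]

theorem constantCoeff_indicator (s : Set ℕ) [Semiring α] :
    constantCoeff (indicatorSeries α s) = if 0 ∈ s then 1 else 0 :=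
  rfl

theorem two_series (i : ℕ) [Semiring α] :
    1 + (X : PowerSeries α) ^ i.succ = indicatorSeries α {0, i.succ} := by
  ext n
  simp only [coeff_indicator, coeff_one, coeff_X_pow, Set.mem_insert_iff, Set.mem_singleton_iff,
    map_add]
  cases' n with d
  · simp [(Nat.succ_ne_zero i).symm]
  · simp [Nat.succ_ne_zero d]

theorem num_series' [Field α] (i : ℕ) :
    (1 - (X : PowerSeries α) ^ (i + 1))⁻¹ = indicatorSeries α {k | i + 1 ∣ k} := by
  rw [PowerSeries.inv_eq_iff_mul_eq_one]
  · ext n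
    cases n with
    | zero => simp [mul_sub, zero_pow, constantCoeff_indicator]
    | succ n =>
      simp only [coeff_one, if_false, mul_sub, mul_one, coeff_indicator,
        LinearMap.map_sub, reduceCtorEq]
      simp_rw [coeff_mul, coeff_X_pow, coeff_indicator, @boole_mul _ _ _ _]
      erw [@sum_ite _ _ _ _ _ (fun _ => Classical.propDecidable _), sum_ite]
      simp_rw [@filter_filter _ _ _ _ _, sum_const_zero, add_zero, sum_const, nsmul_eq_mul, mul_one,
        sub_eq_iff_eq_add, zero_add]
      symm
      split_ifs with h
      · suffices #{a ∈ antidiagonal (n + 1) | i + 1 ∣ a.fst ∧ a.snd = i + 1} = 1 by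
          simp only [Set.mem_setOf_eq]; convert congr_arg ((↑) : ℕ → α) this; norm_cast
        rw [card_eq_one]
        cases' h with p hp
        refine ⟨((i + 1) * (p - 1), i + 1), ?_⟩
        ext ⟨a₁, a₂⟩
        simp only [mem_filter, Prod.mk_inj, HasAntidiagonal.mem_antidiagonal, mem_singleton]
        constructor
        · rintro ⟨a_left, ⟨a, rfl⟩, rfl⟩
          refine ⟨?_, rfl⟩
          rw [Nat.mul_sub_left_distrib, ← hp, ← a_left, mul_one, Nat.add_sub_cancel]
        · rintro ⟨rfl, rfl⟩
          match p with
          | 0 => rw [mul_zero] at hp; cases hp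
          | p + 1 => rw [hp]; simp [mul_add]
      · suffices #{a ∈ antidiagonal (n + 1) | i + 1 ∣ a.fst ∧ a.snd = i + 1} = 0 by
          simp only [Set.mem_setOf_eq]; convert congr_arg ((↑) : ℕ → α) this; norm_cast
        rw [card_eq_zero]
        apply eq_empty_of_forall_notMem
        simp only [Prod.forall, mem_filter, not_and, HasAntidiagonal.mem_antidiagonal]
        rintro _ h₁ h₂ ⟨a, rfl⟩ rfl
        apply h
        simp [← h₂]
  · simp [zero_pow]

def mkOdd : ℕ ↪ ℕ :=
  ⟨fun i => 2 * i + 1, fun x y h => by linarith⟩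

-- The main workhorse of the partition theorem proof.
theorem partialGF_prop (α : Type*) [CommSemiring α] (n : ℕ) (s : Finset ℕ) (hs : ∀ i ∈ s, 0 < i)
    (c : ℕ → Set ℕ) (hc : ∀ i, i ∉ s → 0 ∈ c i) :
    #{p : n.Partition | (∀ j, p.parts.count j ∈ c j) ∧ ∀ j ∈ p.parts, j ∈ s} =
      coeff n (∏ i ∈ s, indicatorSeries α ((· * i) '' c i)) := by
  simp_rw [coeff_prod, coeff_indicator, prod_boole, sum_boole]
  apply congr_arg
  simp only [mem_univ, forall_true_left, not_and, not_forall, exists_prop,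
    Set.mem_image, not_exists]
  set φ : (a : Nat.Partition n) →
    a ∈ filter (fun p ↦ (∀ (j : ℕ), Multiset.count j p.parts ∈ c j) ∧ ∀ j ∈ p.parts, j ∈ s) univ →
    ℕ →₀ ℕ := fun p _ => {
      toFun := fun i => Multiset.count i p.parts • i
      support := Finset.filter (fun i => i ≠ 0) p.parts.toFinset
      mem_support_toFun := fun a => by
        simp only [smul_eq_mul, ne_eq, mul_eq_zero, Multiset.count_eq_zero]
        rw [not_or, not_not]
        simp only [Multiset.mem_toFinset, not_not, mem_filter] }
  refine Finset.card_bij φ ?_ ?_ ?_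
  · intro a ha
    simp only [φ, not_forall, not_exists, not_and, exists_prop, mem_filter]
    rw [mem_finsuppAntidiag]
    dsimp only [ne_eq, smul_eq_mul, id_eq, eq_mpr_eq_cast, le_eq_subset, Finsupp.coe_mk]
    simp only [mem_univ, forall_true_left, not_and, not_forall, exists_prop,
      mem_filter, true_and] at ha
    refine ⟨⟨?_, fun i ↦ ?_⟩, fun i _ ↦ ⟨a.parts.count i, ha.1 i, rfl⟩⟩
    · conv_rhs => simp [← a.parts_sum]
      rw [sum_multiset_count_of_subset _ s]
      · simp only [smul_eq_mul]
      · intro i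
        simp only [Multiset.mem_toFinset, not_not, mem_filter]
        apply ha.2
    · simp only [ne_eq, Multiset.mem_toFinset, not_not, mem_filter, and_imp]
      exact fun hi _ ↦ ha.2 i hi
  · intro p₁ hp₁ p₂ hp₂ h
    apply Nat.Partition.ext
    simp only [true_and, mem_univ, mem_filter] at hp₁ hp₂
    ext i
    simp only [φ, ne_eq, Multiset.mem_toFinset, not_not, smul_eq_mul, Finsupp.mk.injEq] at h
    by_cases hi : i = 0
    · rw [hi]
      rw [Multiset.count_eq_zero_of_notMem]
      · rw [Multiset.count_eq_zero_of_notMem]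
        intro a; exact Nat.lt_irrefl 0 (hs 0 (hp₂.2 0 a))
      intro a; exact Nat.lt_irrefl 0 (hs 0 (hp₁.2 0 a))
    · rw [← mul_left_inj' hi]
      rw [funext_iff] at h
      exact h.2 i
  · simp only [φ, mem_filter, mem_finsuppAntidiag, mem_univ, exists_prop, true_and, and_assoc]
    rintro f ⟨hf, hf₃, hf₄⟩
    have hf' : f ∈ finsuppAntidiag s n := mem_finsuppAntidiag.mpr ⟨hf, hf₃⟩
    simp only [mem_finsuppAntidiag] at hf'
    refine ⟨⟨∑ i ∈ s, Multiset.replicate (f i / i) i, ?_, ?_⟩, ?_, ?_, ?_⟩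
    · intro i hi
      simp only [exists_prop, Multiset.mem_sum, mem_map, Function.Embedding.coeFn_mk] at hi
      rcases hi with ⟨t, ht, z⟩
      apply hs
      rwa [Multiset.eq_of_mem_replicate z]
    · simp_rw [Multiset.sum_sum, Multiset.sum_replicate, Nat.nsmul_eq_mul]
      rw [← hf'.1]
      refine sum_congr rfl fun i hi => Nat.div_mul_cancel ?_
      rcases hf₄ i hi with ⟨w, _, hw₂⟩
      rw [← hw₂]
      exact dvd_mul_left _ _
    · intro i
      simp_rw [Multiset.count_sum', Multiset.count_replicate, sum_ite_eq']
      split_ifs with h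
      · rcases hf₄ i h with ⟨w, hw₁, hw₂⟩
        rwa [← hw₂, Nat.mul_div_cancel _ (hs i h)]
      · exact hc _ h
    · intro i hi
      rw [Multiset.mem_sum] at hi
      rcases hi with ⟨j, hj₁, hj₂⟩
      rwa [Multiset.eq_of_mem_replicate hj₂]
    · ext i
      simp_rw [Multiset.count_sum', Multiset.count_replicate, sum_ite_eq']
      simp only [ne_eq, Multiset.mem_toFinset, not_not, smul_eq_mul, ite_mul,
        zero_mul, Finsupp.coe_mk]
      split_ifs with h
      · apply Nat.div_mul_cancel
        rcases hf₄ i h with ⟨w, _, hw₂⟩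
        apply Dvd.intro_left _ hw₂
      · apply symm
        rw [← Finsupp.notMem_support_iff]
        exact notMem_mono hf'.2 h



theorem indicator_le_eq_sum (i c : ℕ) :
    indicatorSeries ℚ ((· * (i + 1)) '' {m | m ≤ c}) =
      ∑ j ∈ range (c + 1), (X : PowerSeries ℚ) ^ ((i + 1) * j) := by
  ext d
  rw [map_sum]
  simp_rw [coeff_X_pow, coeff_indicator]
  by_cases h : d ∈ (· * (i + 1)) '' {m | m ≤ c}
  · rw [if_pos h]
    obtain ⟨j, hj, rfl⟩ := h
    rw [Finset.sum_eq_single_of_mem j (mem_range.2 (Nat.lt_succ_of_le hj))]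
    · rw [if_pos (mul_comm j (i+1))]
    · intro b _ hb
      rw [if_neg]
      intro hd
      rw [mul_comm] at hd
      exact hb (Nat.eq_of_mul_eq_mul_right i.succ_pos hd).symm
  · rw [if_neg h]
    symm
    apply Finset.sum_eq_zero
    intro j hj
    rw [if_neg]
    intro hd
    exact h ⟨j, Nat.lt_succ_iff.1 (mem_range.1 hj), by rw [hd]; exact mul_comm j (i+1)⟩

theorem one_sub_X_mul_geom (i c : ℕ) :
    (1 - (X : PowerSeries ℚ) ^ (i + 1)) * indicatorSeries ℚ ((· * (i + 1)) '' {m | m ≤ c}) =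
      1 - X ^ ((i + 1) * (c + 1)) := by
  rw [indicator_le_eq_sum, Finset.mul_sum]
  have h1 : ∀ j : ℕ, (1 - (X : PowerSeries ℚ) ^ (i + 1)) * X ^ ((i + 1) * j) =
      (fun j => (X : PowerSeries ℚ) ^ ((i + 1) * j)) j -
      (fun j => (X : PowerSeries ℚ) ^ ((i + 1) * j)) (j + 1) := by
    intro j
    simp only [mul_add, mul_one, pow_add]
    ring
  simp_rw [h1]
  rw [Finset.sum_range_sub']
  simp

theorem indicator_univ_eq_inv (i : ℕ) :
    indicatorSeries ℚ ((· * (i + 1)) '' Set.univ) = (1 - (X : PowerSeries ℚ) ^ (i + 1))⁻¹ := by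
  rw [num_series']
  have : ((· * (i + 1)) '' Set.univ) = {k | i + 1 ∣ k} := by
    ext k
    simp only [Set.mem_image, Set.mem_univ, true_and, Set.mem_setOf_eq]
    constructor
    · rintro ⟨a, rfl⟩; exact Dvd.intro_left a rfl
    · rintro ⟨a, rfl⟩; exact ⟨a, mul_comm _ _⟩
  rw [this]

theorem indicator_zero_eq_one (i : ℕ) :
    indicatorSeries ℚ ((· * i) '' ({0} : Set ℕ)) = 1 := by
  have : ((· * i) '' ({0} : Set ℕ)) = {0} := by simp
  rw [this]
  ext d
  rw [coeff_indicator, PowerSeries.coeff_one]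
  simp only [Set.mem_singleton_iff]

theorem one_sub_X_pow_inv_cancel (i : ℕ) :
    (1 - (X : PowerSeries ℚ) ^ (i + 1)) * (1 - (X : PowerSeries ℚ) ^ (i + 1))⁻¹ = 1 := by
  apply PowerSeries.mul_inv_cancel
  simp [zero_pow]


/-- `gA u t` is the `(2(t+1)-1)`-st `(2(u+2)+1)`-gonal number. -/
def gA (u t : ℕ) : ℕ := (2 * t + 1) * ((2 * u + 3) * t + 1)

theorem gA_strictMono (u : ℕ) : StrictMono (gA u) := by
  intro a b hab
  unfold gA
  calc (2 * a + 1) * ((2 * u + 3) * a + 1)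
      < (2 * b + 1) * ((2 * u + 3) * a + 1) := by
        apply Nat.mul_lt_mul_of_lt_of_le (by omega) (le_refl _) (by positivity)
    _ ≤ (2 * b + 1) * ((2 * u + 3) * b + 1) := by
        apply Nat.mul_le_mul_left
        have : (2 * u + 3) * a ≤ (2 * u + 3) * b := Nat.mul_le_mul_left _ (le_of_lt hab)
        omega

theorem le_gA (u t : ℕ) : 2 * t + 1 ≤ gA u t :=
  Nat.le_mul_of_pos_right _ (by positivity)

def c1 (u i : ℕ) : Set ℕ := if Odd i then {m | m ≤ (2 * u + 3) * (i / 2)} else Set.univ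

def c2 (u i : ℕ) : Set ℕ := if i ∈ Set.range (gA u) then ({0} : Set ℕ) else Set.univ

def eA (u i : ℕ) : ℕ := i * ((2 * u + 3) * (i / 2) + 1)

theorem eA_odd (u t : ℕ) : eA u (2 * t + 1) = gA u t := by
  unfold eA gA
  have h : (2 * t + 1) / 2 = t := by omega
  rw [h]

theorem le_eA (u i : ℕ) : i ≤ eA u i := Nat.le_mul_of_pos_right _ (by positivity)

theorem coeff_eq (u n : ℕ) :
    coeff n (∏ i ∈ Finset.Icc 1 n, indicatorSeries ℚ ((· * i) '' c1 u i)) =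
      coeff n (∏ i ∈ Finset.Icc 1 n, indicatorSeries ℚ ((· * i) '' c2 u i)) := by
  classical
  set s : Finset ℕ := Finset.Icc 1 n with hsdef
  set Q : PowerSeries ℚ := ∏ i ∈ s, (1 - X ^ i) with hQdef
  set P₁ : PowerSeries ℚ := ∏ i ∈ s, indicatorSeries ℚ ((· * i) '' c1 u i) with hP₁
  set P₂ : PowerSeries ℚ := ∏ i ∈ s, indicatorSeries ℚ ((· * i) '' c2 u i) with hP₂
  have hQ1 : Q * P₁ = ∏ i ∈ s.filter (fun i => Odd i), (1 - X ^ eA u i) := by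
    rw [hQdef, hP₁, ← Finset.prod_mul_distrib, Finset.prod_filter]
    apply Finset.prod_congr rfl
    intro i hi
    by_cases h : Odd i
    · rw [if_pos h]
      obtain ⟨t, rfl⟩ := h
      have h1 : c1 u (2 * t + 1) = {m | m ≤ (2 * u + 3) * t} := by
        unfold c1
        rw [if_pos ⟨t, by omega⟩]
        have : (2 * t + 1) / 2 = t := by omega
        rw [this]
      rw [h1, eA_odd]
      have := one_sub_X_mul_geom (2 * t) ((2 * u + 3) * t)
      convert this using 3
      rfl
    · rw [if_neg h]
      have h1 : c1 u i = Set.univ := by unfold c1; rw [if_neg h]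
      obtain ⟨j, rfl⟩ : ∃ j, i = j + 1 := ⟨i - 1, by
        have := (Finset.mem_Icc.1 hi).1; omega⟩
      rw [h1, indicator_univ_eq_inv, one_sub_X_pow_inv_cancel]
  have hQ2 : Q * P₂ = ∏ i ∈ s.filter (fun i => i ∈ Set.range (gA u)), (1 - X ^ i) := by
    rw [hQdef, hP₂, ← Finset.prod_mul_distrib, Finset.prod_filter]
    apply Finset.prod_congr rfl
    intro i hi
    by_cases h : i ∈ Set.range (gA u)
    · rw [if_pos h]
      have h1 : c2 u i = ({0} : Set ℕ) := by unfold c2; rw [if_pos h]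
      rw [h1, indicator_zero_eq_one, mul_one]
    · rw [if_neg h]
      have h1 : c2 u i = Set.univ := by unfold c2; rw [if_neg h]
      obtain ⟨j, rfl⟩ : ∃ j, i = j + 1 := ⟨i - 1, by
        have := (Finset.mem_Icc.1 hi).1; omega⟩
      rw [h1, indicator_univ_eq_inv, one_sub_X_pow_inv_cancel]
  have hbij : ∏ i ∈ (s.filter (fun i => Odd i)).filter (fun i => eA u i ≤ n),
      (1 - (X : PowerSeries ℚ) ^ eA u i) =
      ∏ i ∈ s.filter (fun i => i ∈ Set.range (gA u)), (1 - X ^ i) := by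
    apply Finset.prod_bij (fun i _ => eA u i)
    · intro a ha
      simp only [Finset.mem_filter, Finset.mem_Icc, hsdef] at ha ⊢
      obtain ⟨⟨⟨ha1, han⟩, hodd⟩, hlen⟩ := ha
      refine ⟨⟨le_trans ha1 (le_eA u a), hlen⟩, ?_⟩
      obtain ⟨t, rfl⟩ := hodd
      exact ⟨t, (eA_odd u t).symm ▸ rfl⟩
    · intro a ha b hb hab
      simp only [Finset.mem_filter] at ha hb
      obtain ⟨t₁, rfl⟩ := ha.1.2
      obtain ⟨t₂, rfl⟩ := hb.1.2
      rw [eA_odd, eA_odd] at hab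
      have := (gA_strictMono u).injective hab
      omega
    · intro j hj
      simp only [Finset.mem_filter, Finset.mem_Icc, hsdef] at hj
      obtain ⟨⟨hj1, hjn⟩, t, rfl⟩ := hj.imp id fun h => h
      refine ⟨2 * t + 1, ?_, ?_⟩
      · simp only [Finset.mem_filter, Finset.mem_Icc, hsdef]
        exact ⟨⟨⟨by omega, le_trans (le_gA u t) hjn⟩, ⟨t, by omega⟩⟩, by rw [eA_odd]; exact hjn⟩
      · rw [eA_odd]
    · intro a ha
      rfl
  have hsplit := Finset.prod_filter_mul_prod_filter_not (s.filter (fun i => Odd i))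
    (fun i => eA u i ≤ n) (fun i => 1 - (X : PowerSeries ℚ) ^ eA u i)
  have key : Q * P₁ = Q * (P₂ * ∏ i ∈ (s.filter (fun i => Odd i)).filter
      (fun i => ¬ eA u i ≤ n), (1 - (X : PowerSeries ℚ) ^ eA u i)) := by
    rw [hQ1, ← hsplit, hbij, ← hQ2]
    ring
  have hQne : Q ≠ 0 := by
    intro h0
    have hc := congrArg (constantCoeff) h0
    rw [hQdef, map_prod, map_zero] at hc
    rw [Finset.prod_eq_one] at hc
    · exact one_ne_zero hc
    · intro i hi
      have h1 : 1 ≤ i := (Finset.mem_Icc.1 hi).1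
      rw [map_sub, map_pow, constantCoeff_one, constantCoeff_X, zero_pow (by omega), sub_zero]
  have hPP : P₁ = P₂ * ∏ i ∈ (s.filter (fun i => Odd i)).filter
      (fun i => ¬ eA u i ≤ n), (1 - (X : PowerSeries ℚ) ^ eA u i) :=
    mul_left_cancel₀ hQne key
  rw [hPP, coeff_mul_prod_one_sub_of_lt_order]
  intro i hi
  rw [order_X_pow]
  simp only [Finset.mem_filter, not_le] at hi
  exact_mod_cast hi.2

end
end Aux4stmt

open Aux4stmt PowerSeries in
/-- For fixed `r ≥ 2`, the number of partitions of `n` in which each odd part `2k - 1` occurs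
at most `(2r - 1) * (k - 1)` times (even parts unrestricted) equals the number of partitions
of `n` in which no part is an odd-subscripted `(2r + 1)`-gonal number
`(2k - 1) * ((2r - 1) * (k - 1) + 1)`. -/
theorem stmt_4 (r : ℕ) (hr : 2 ≤ r) (n : ℕ) (hn : 0 < n) :
    Nat.card {p : n.Partition //
        ∀ k : ℕ, 1 ≤ k → p.parts.count (2 * k - 1) ≤ (2 * r - 1) * (k - 1)} =
      Nat.card {p : n.Partition //
        ∀ i ∈ p.parts, ¬ ∃ k : ℕ, 1 ≤ k ∧ i = (2 * k - 1) * ((2 * r - 1) * (k - 1) + 1)} := by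
  classical
  obtain ⟨u, rfl⟩ : ∃ u, r = u + 2 := ⟨r - 2, by omega⟩
  simp only [show 2 * (u + 2) - 1 = 2 * u + 3 from by omega]
  have hparts : ∀ p : n.Partition, ∀ j ∈ p.parts, j ∈ Finset.Icc 1 n := by
    intro p j hj
    rw [Finset.mem_Icc]
    exact ⟨p.parts_pos hj, by
      simpa [p.parts_sum] using Multiset.single_le_sum (fun _ _ => Nat.zero_le _) _ hj⟩
  have hiff₁ : ∀ p : n.Partition,
      (∀ k : ℕ, 1 ≤ k → p.parts.count (2 * k - 1) ≤ (2 * u + 3) * (k - 1)) ↔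
      ((∀ j, p.parts.count j ∈ c1 u j) ∧ ∀ j ∈ p.parts, j ∈ Finset.Icc 1 n) := by
    intro p
    constructor
    · intro h
      refine ⟨fun j => ?_, hparts p⟩
      by_cases hj : Odd j
      · obtain ⟨t, rfl⟩ := hj
        have h2 := h (t + 1) (by omega)
        rw [show 2 * (t + 1) - 1 = 2 * t + 1 from by omega,
          show t + 1 - 1 = t from by omega] at h2
        unfold c1
        rw [if_pos ⟨t, by omega⟩, show (2 * t + 1) / 2 = t from by omega]
        exact h2
      · unfold c1
        rw [if_neg hj]
        trivial
    · intro h k hk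
      have h2 := h.1 (2 * k - 1)
      unfold c1 at h2
      rw [if_pos ⟨k - 1, by omega⟩, show (2 * k - 1) / 2 = k - 1 from by omega] at h2
      exact h2
  have hiff₂ : ∀ p : n.Partition,
      (∀ i ∈ p.parts, ¬ ∃ k : ℕ, 1 ≤ k ∧ i = (2 * k - 1) * ((2 * u + 3) * (k - 1) + 1)) ↔
      ((∀ j, p.parts.count j ∈ c2 u j) ∧ ∀ j ∈ p.parts, j ∈ Finset.Icc 1 n) := by
    intro p
    have hSiff : ∀ i : ℕ,
        (∃ k : ℕ, 1 ≤ k ∧ i = (2 * k - 1) * ((2 * u + 3) * (k - 1) + 1)) ↔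
        i ∈ Set.range (gA u) := by
      intro i
      constructor
      · rintro ⟨k, hk, rfl⟩
        refine ⟨k - 1, ?_⟩
        unfold gA
        rw [show 2 * (k - 1) + 1 = 2 * k - 1 from by omega]
      · rintro ⟨t, rfl⟩
        refine ⟨t + 1, by omega, ?_⟩
        unfold gA
        rw [show 2 * (t + 1) - 1 = 2 * t + 1 from by omega,
          show t + 1 - 1 = t from by omega]
    constructor
    · intro h
      refine ⟨fun j => ?_, hparts p⟩
      unfold c2
      split_ifs with hj
      · have hnm : j ∉ p.parts := fun hjp => h j hjp ((hSiff j).2 hj)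
        simp [Multiset.count_eq_zero_of_notMem hnm]
      · trivial
    · rintro ⟨h, -⟩ i hi hex
      have hS := (hSiff i).1 hex
      have h2 := h i
      unfold c2 at h2
      rw [if_pos hS] at h2
      simp only [Set.mem_singleton_iff, Multiset.count_eq_zero] at h2
      exact h2 hi
  suffices hq : (Nat.card {p : n.Partition //
      ∀ k : ℕ, 1 ≤ k → p.parts.count (2 * k - 1) ≤ (2 * u + 3) * (k - 1)} : ℚ) =
      (Nat.card {p : n.Partition //
      ∀ i ∈ p.parts, ¬ ∃ k : ℕ, 1 ≤ k ∧ i = (2 * k - 1) * ((2 * u + 3) * (k - 1) + 1)} : ℚ) by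
    exact_mod_cast hq
  rw [Nat.card_eq_fintype_card, Nat.card_eq_fintype_card, Fintype.card_subtype,
    Fintype.card_subtype]
  have hGF₁ := partialGF_prop ℚ n (Finset.Icc 1 n) (fun i hi => (Finset.mem_Icc.1 hi).1)
    (c1 u) (fun i _ => by unfold c1; split_ifs <;> simp)
  have hGF₂ := partialGF_prop ℚ n (Finset.Icc 1 n) (fun i hi => (Finset.mem_Icc.1 hi).1)
    (c2 u) (fun i _ => by unfold c2; split_ifs <;> simp)
  simp only [← hiff₁] at hGF₁
  simp only [← hiff₂] at hGF₂
  rw [hGF₁, hGF₂]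
  exact coeff_eq u n
end

section
/- For every positive integer n, the number of partitions of n into distinct parts none of which is divisible by 3 equals the number of partitions of n into parts congruent to 1 or 5 modulo 6. -/
open PowerSeries Finset
open scoped Classical

noncomputable section SchurAux

variable {α : Type*}

namespace SchurAux

/-- Indicator power series (copied from the Archive). -/
def indicatorSeries (α : Type*) [Semiring α] (s : Set ℕ) : PowerSeries α :=
  PowerSeries.mk fun n => if n ∈ s then 1 else 0

theorem coeff_indicator (s : Set ℕ) [Semiring α] (n : ℕ) :
    coeff n (indicatorSeries α s) = if n ∈ s then 1 else 0 :=
  coeff_mk _ _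

theorem two_series (i : ℕ) [Semiring α] :
    1 + (X : PowerSeries α) ^ i.succ = indicatorSeries α {0, i.succ} := by
  ext n
  simp only [coeff_indicator, coeff_one, coeff_X_pow, Set.mem_insert_iff, Set.mem_singleton_iff,
    map_add]
  cases' n with d
  · simp [(Nat.succ_ne_zero i).symm]
  · simp [Nat.succ_ne_zero d]

theorem constantCoeff_indicator (s : Set ℕ) [Semiring α] :
    constantCoeff (indicatorSeries α s) = if 0 ∈ s then 1 else 0 :=
  rfl

theorem num_series' [Field α] (i : ℕ) :
    (1 - (X : PowerSeries α) ^ (i + 1))⁻¹ = indicatorSeries α {k | i + 1 ∣ k} := by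
  rw [PowerSeries.inv_eq_iff_mul_eq_one]
  · ext n
    cases n with
    | zero => simp [mul_sub, zero_pow, constantCoeff_indicator]
    | succ n =>
      simp only [coeff_one, if_false, mul_sub, mul_one, coeff_indicator,
        LinearMap.map_sub, reduceCtorEq]
      simp_rw [coeff_mul, coeff_X_pow, coeff_indicator, @boole_mul _ _ _ _]
      rw [@sum_ite _ _ _ _ _ (fun _ => Classical.propDecidable _), sum_ite]
      simp_rw [@filter_filter _ _ _ _ _, sum_const_zero, add_zero, sum_const, nsmul_eq_mul, mul_one,
        sub_eq_iff_eq_add, zero_add]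
      symm
      split_ifs with h
      · suffices #{a ∈ antidiagonal (n + 1) | i + 1 ∣ a.fst ∧ a.snd = i + 1} = 1 by
          simp only [Set.mem_setOf_eq]; convert congr_arg ((↑) : ℕ → α) this; norm_cast
        rw [card_eq_one]
        cases' h with p hp
        refine ⟨((i + 1) * (p - 1), i + 1), ?_⟩
        ext ⟨a₁, a₂⟩
        simp only [mem_filter, Prod.mk_inj, HasAntidiagonal.mem_antidiagonal, mem_singleton]
        constructor
        · rintro ⟨a_left, ⟨a, rfl⟩, rfl⟩
          refine ⟨?_, rfl⟩
          rw [Nat.mul_sub_left_distrib, ← hp, ← a_left, mul_one, Nat.add_sub_cancel]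
        · rintro ⟨rfl, rfl⟩
          match p with
          | 0 => rw [mul_zero] at hp; cases hp
          | p + 1 => rw [hp]; simp [mul_add]
      · suffices #{a ∈ antidiagonal (n + 1) | i + 1 ∣ a.fst ∧ a.snd = i + 1} = 0 by
          simp only [Set.mem_setOf_eq]; convert congr_arg ((↑) : ℕ → α) this; norm_cast
        rw [card_eq_zero]
        apply eq_empty_of_forall_notMem
        simp only [Prod.forall, mem_filter, not_and, HasAntidiagonal.mem_antidiagonal]
        rintro _ h₁ h₂ ⟨a, rfl⟩ rfl
        apply h
        simp [← h₂]
  · simp [zero_pow]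

-- The main workhorse (copied from the Archive).
theorem partialGF_prop (α : Type*) [CommSemiring α] (n : ℕ) (s : Finset ℕ) (hs : ∀ i ∈ s, 0 < i)
    (c : ℕ → Set ℕ) (hc : ∀ i, i ∉ s → 0 ∈ c i) :
    #{p : n.Partition | (∀ j, p.parts.count j ∈ c j) ∧ ∀ j ∈ p.parts, j ∈ s} =
      coeff n (∏ i ∈ s, indicatorSeries α ((· * i) '' c i)) := by
  simp_rw [coeff_prod, coeff_indicator, prod_boole, sum_boole]
  apply congr_arg
  simp only [mem_univ, forall_true_left, not_and, not_forall, exists_prop,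
    Set.mem_image, not_exists]
  set φ : (a : Nat.Partition n) →
    a ∈ filter (fun p ↦ (∀ (j : ℕ), Multiset.count j p.parts ∈ c j) ∧ ∀ j ∈ p.parts, j ∈ s) univ →
    ℕ →₀ ℕ := fun p _ => {
      toFun := fun i => Multiset.count i p.parts • i
      support := Finset.filter (fun i => i ≠ 0) p.parts.toFinset
      mem_support_toFun := fun a => by
        simp only [smul_eq_mul, ne_eq, mul_eq_zero, Multiset.count_eq_zero]
        rw [not_or, not_not]
        simp only [Multiset.mem_toFinset, not_not, mem_filter] }
  refine Finset.card_bij φ ?_ ?_ ?_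
  · intro a ha
    simp only [φ, not_forall, not_exists, not_and, exists_prop, mem_filter]
    rw [mem_finsuppAntidiag]
    dsimp only [ne_eq, smul_eq_mul, id_eq, eq_mpr_eq_cast, le_eq_subset, Finsupp.coe_mk]
    simp only [mem_univ, forall_true_left, not_and, not_forall, exists_prop,
      mem_filter, true_and] at ha
    refine ⟨⟨?_, fun i ↦ ?_⟩, fun i _ ↦ ⟨a.parts.count i, ha.1 i, rfl⟩⟩
    · conv_rhs => simp [← a.parts_sum]
      rw [sum_multiset_count_of_subset _ s]
      · simp only [smul_eq_mul]
      · intro i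
        simp only [Multiset.mem_toFinset, not_not, mem_filter]
        apply ha.2
    · simp only [ne_eq, Multiset.mem_toFinset, not_not, mem_filter, and_imp]
      exact fun hi _ ↦ ha.2 i hi
  · intro p₁ hp₁ p₂ hp₂ h
    apply Nat.Partition.ext
    simp only [true_and, mem_univ, mem_filter] at hp₁ hp₂
    ext i
    simp only [φ, ne_eq, Multiset.mem_toFinset, not_not, smul_eq_mul, Finsupp.mk.injEq] at h
    by_cases hi : i = 0
    · rw [hi]
      rw [Multiset.count_eq_zero_of_notMem]
      · rw [Multiset.count_eq_zero_of_notMem]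
        intro a; exact Nat.lt_irrefl 0 (hs 0 (hp₂.2 0 a))
      intro a; exact Nat.lt_irrefl 0 (hs 0 (hp₁.2 0 a))
    · rw [← mul_left_inj' hi]
      rw [funext_iff] at h
      exact h.2 i
  · simp only [φ, mem_filter, mem_finsuppAntidiag, mem_univ, exists_prop, true_and, and_assoc]
    rintro f ⟨hf, hf₃, hf₄⟩
    have hf' : f ∈ finsuppAntidiag s n := mem_finsuppAntidiag.mpr ⟨hf, hf₃⟩
    simp only [mem_finsuppAntidiag] at hf'
    refine ⟨⟨∑ i ∈ s, Multiset.replicate (f i / i) i, ?_, ?_⟩, ?_, ?_, ?_⟩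
    · intro i hi
      simp only [exists_prop, Multiset.mem_sum, mem_map, Function.Embedding.coeFn_mk] at hi
      rcases hi with ⟨t, ht, z⟩
      apply hs
      rwa [Multiset.eq_of_mem_replicate z]
    · simp_rw [Multiset.sum_sum, Multiset.sum_replicate, Nat.nsmul_eq_mul]
      rw [← hf'.1]
      refine sum_congr rfl fun i hi => Nat.div_mul_cancel ?_
      rcases hf₄ i hi with ⟨w, _, hw₂⟩
      rw [← hw₂]
      exact dvd_mul_left _ _
    · intro i
      simp_rw [Multiset.count_sum', Multiset.count_replicate, sum_ite_eq']
      split_ifs with h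
      · rcases hf₄ i h with ⟨w, hw₁, hw₂⟩
        rwa [← hw₂, Nat.mul_div_cancel _ (hs i h)]
      · exact hc _ h
    · intro i hi
      rw [Multiset.mem_sum] at hi
      rcases hi with ⟨j, hj₁, hj₂⟩
      rwa [Multiset.eq_of_mem_replicate hj₂]
    · ext i
      simp_rw [Multiset.count_sum', Multiset.count_replicate, sum_ite_eq']
      simp only [ne_eq, Multiset.mem_toFinset, not_not, smul_eq_mul, ite_mul,
        zero_mul, Finsupp.coe_mk]
      split_ifs with h
      · apply Nat.div_mul_cancel
        rcases hf₄ i h with ⟨w, _, hw₂⟩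
        apply Dvd.intro_left _ hw₂
      · apply symm
        rw [← Finsupp.notMem_support_iff]
        exact notMem_mono hf'.2 h

end SchurAux
end SchurAux

namespace SchurAux
variable {α : Type*}
open PowerSeries Finset

/-- parts allowed on the distinct side: positive, not divisible by 3 -/
def Sf (N : ℕ) : Finset ℕ := (Finset.Ioc 0 N).filter (fun i => ¬ 3 ∣ i)

/-- parts on the other side: odd, not divisible by 3 -/
def Tf (N : ℕ) : Finset ℕ := (Finset.Ioc 0 N).filter (fun i => ¬ 3 ∣ i ∧ ¬ 2 ∣ i)

/-- even, not divisible by 3, in `(a, b]` -/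
def Ef (a b : ℕ) : Finset ℕ := (Finset.Ioc a b).filter (fun i => ¬ 3 ∣ i ∧ 2 ∣ i)

theorem Sf_image : ∀ N, (Sf N).image (fun i => 2 * i) = Ef 0 (2 * N) := by
  intro N
  ext j
  simp only [Sf, Ef, mem_image, mem_filter, mem_Ioc]
  constructor
  · rintro ⟨i, ⟨⟨h1, h2⟩, h3⟩, rfl⟩
    omega
  · rintro ⟨⟨h1, h2⟩, h3, h4⟩
    exact ⟨j / 2, ⟨by omega, by omega⟩, by omega⟩

theorem prod_Sf_split [CommRing α] (N : ℕ) (f : ℕ → PowerSeries α) :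
    ∏ i ∈ Sf N, f i = (∏ i ∈ Tf N, f i) * ∏ i ∈ Ef 0 N, f i := by
  rw [Sf, Tf, Ef, ← Finset.prod_filter_mul_prod_filter_not ((Finset.Ioc 0 N).filter
    (fun i => ¬ 3 ∣ i)) (fun i => ¬ 2 ∣ i), Finset.filter_filter, Finset.filter_filter]
  congr 2
  all_goals (ext i; simp only [mem_filter, mem_Ioc, not_not]; try omega)

theorem prod_Ef_split [CommRing α] (N : ℕ) (f : ℕ → PowerSeries α) :
    ∏ i ∈ Ef 0 (2 * N), f i = (∏ i ∈ Ef 0 N, f i) * ∏ i ∈ Ef N (2 * N), f i := by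
  rw [Ef, Ef, Ef, ← Finset.prod_union]
  · congr 1
    rw [← Finset.filter_union, Finset.Ioc_union_Ioc_eq_Ioc (Nat.zero_le N) (by omega)]
  · exact disjoint_of_subset_left (Finset.filter_subset _ _)
      (disjoint_of_subset_right (Finset.filter_subset _ _) (by
        rw [Finset.disjoint_left]; intro a ha hb
        simp only [mem_Ioc] at ha hb; omega))

theorem one_sub_X_pow_ne_zero [Field α] {i : ℕ} (hi : 0 < i) :
    (1 - (X : PowerSeries α) ^ i) ≠ 0 := by
  intro h
  have := congr_arg (constantCoeff (R := α)) h
  rw [map_sub, map_pow, constantCoeff_one, constantCoeff_X, zero_pow hi.ne', sub_zero,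
    map_zero] at this
  exact one_ne_zero this

theorem same_gf [Field α] (N : ℕ) :
    (∏ i ∈ Tf N, (1 - (X : PowerSeries α) ^ i)⁻¹) * ∏ i ∈ Ef N (2 * N), (1 - X ^ i) =
      ∏ i ∈ Sf N, (1 + X ^ i) := by
  have hS : ∀ i ∈ Sf N, 0 < i := fun i hi => by
    simp only [Sf, mem_filter, mem_Ioc] at hi; omega
  have hT : ∀ i ∈ Tf N, 0 < i := fun i hi => by
    simp only [Tf, mem_filter, mem_Ioc] at hi; omega
  have hprod : (∏ i ∈ Sf N, (1 - (X : PowerSeries α) ^ i)) ≠ 0 := by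
    rw [Finset.prod_ne_zero_iff]
    exact fun i hi => one_sub_X_pow_ne_zero (hS i hi)
  apply mul_right_cancel₀ hprod
  have key : (∏ i ∈ Sf N, (1 + (X : PowerSeries α) ^ i)) *
      (∏ i ∈ Sf N, (1 - X ^ i)) = ∏ i ∈ Ef 0 (2 * N), (1 - X ^ i) := by
    rw [← Finset.prod_mul_distrib, ← Sf_image N, Finset.prod_image]
    · apply Finset.prod_congr rfl
      intro i _
      rw [two_mul, pow_add]; ring
    · intro a _ b _ h
      simp only at h
      omega
  calc (∏ i ∈ Tf N, (1 - (X : PowerSeries α) ^ i)⁻¹) * (∏ i ∈ Ef N (2 * N), (1 - X ^ i)) *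
        ∏ i ∈ Sf N, (1 - X ^ i)
      = ((∏ i ∈ Tf N, (1 - (X : PowerSeries α) ^ i)⁻¹) * ∏ i ∈ Tf N, (1 - X ^ i)) *
        ((∏ i ∈ Ef 0 N, (1 - X ^ i)) * ∏ i ∈ Ef N (2 * N), (1 - X ^ i)) := by
        rw [prod_Sf_split]; ring
    _ = (∏ i ∈ Ef 0 N, (1 - (X:PowerSeries α) ^ i)) * ∏ i ∈ Ef N (2 * N), (1 - X ^ i) := by
        rw [← Finset.prod_mul_distrib]
        rw [Finset.prod_congr rfl (fun i hi => PowerSeries.inv_mul_cancel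
          (1 - (X:PowerSeries α) ^ i) ?_), Finset.prod_const_one, one_mul]
        rw [map_sub, map_pow, constantCoeff_one, constantCoeff_X, zero_pow (hT i hi).ne',
          sub_zero]
        exact one_ne_zero
    _ = ∏ i ∈ Ef 0 (2 * N), (1 - (X:PowerSeries α) ^ i) := (prod_Ef_split N _).symm
    _ = _ := by rw [← key]

theorem parts_le {n : ℕ} (p : n.Partition) {j : ℕ} (hj : j ∈ p.parts) : j ≤ n := by
  simpa [p.parts_sum] using Multiset.single_le_sum (fun _ _ => Nat.zero_le _) _ hj

theorem distinctGF_prop [Field α] (n : ℕ) :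
    (#{p : n.Partition | (∀ i, p.parts.count i ≤ 1) ∧ ∀ i ∈ p.parts, ¬ 3 ∣ i} : α) =
      coeff n (∏ i ∈ Sf n, (1 + X ^ i)) := by
  convert partialGF_prop α n (Sf n)
    (fun i hi => by simp only [Sf, mem_filter, mem_Ioc] at hi; omega)
    (fun _ => {0, 1}) (fun _ _ => Or.inl rfl) using 2
  · congr 1
    ext p
    simp only [Finset.mem_filter, Finset.mem_univ, true_and]
    constructor
    · rintro ⟨h1, h2⟩
      refine ⟨fun j => ?_, fun j hj => ?_⟩
      · have := h1 j
        simp only [Set.mem_insert_iff, Set.mem_singleton_iff]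
        omega
      · simp only [Sf, mem_filter, mem_Ioc]
        exact ⟨⟨p.parts_pos hj, parts_le p hj⟩, h2 j hj⟩
    · rintro ⟨h1, h2⟩
      refine ⟨fun j => ?_, fun j hj => ?_⟩
      · have := h1 j
        simp only [Set.mem_insert_iff, Set.mem_singleton_iff] at this
        omega
      · have := h2 j hj
        simp only [Sf, mem_filter, mem_Ioc] at this
        exact this.2
  · apply Finset.prod_congr rfl
    intro i hi
    have h0 : 0 < i := by simp only [Sf, mem_filter, mem_Ioc] at hi; omega
    have him : (· * i) '' {0, 1} = {0, i} := by simp [Set.image_pair]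
    rw [him]
    obtain ⟨j, rfl⟩ : ∃ j, i = j + 1 := ⟨i - 1, by omega⟩
    exact two_series j

theorem oddGF_prop [Field α] (n : ℕ) :
    (#{p : n.Partition | ∀ i ∈ p.parts, i % 6 = 1 ∨ i % 6 = 5} : α) =
      coeff n (∏ i ∈ Tf n, (1 - X ^ i)⁻¹) := by
  convert partialGF_prop α n (Tf n)
    (fun i hi => by simp only [Tf, mem_filter, mem_Ioc] at hi; omega)
    (fun _ => Set.univ) (fun _ _ => trivial) using 2
  · congr 1
    ext p
    simp only [Finset.mem_filter, Finset.mem_univ, true_and]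
    constructor
    · intro h
      refine ⟨fun _ => trivial, fun j hj => ?_⟩
      have h6 := h j hj
      simp only [Tf, mem_filter, mem_Ioc]
      refine ⟨⟨p.parts_pos hj, parts_le p hj⟩, ?_, ?_⟩ <;> omega
    · rintro ⟨-, h2⟩ j hj
      have := h2 j hj
      simp only [Tf, mem_filter, mem_Ioc] at this
      omega
  · apply Finset.prod_congr rfl
    intro i hi
    have h0 : 0 < i := by simp only [Tf, mem_filter, mem_Ioc] at hi; omega
    have him : (· * i) '' Set.univ = {k | i ∣ k} := by
      ext k
      simp only [Set.image_univ, Set.mem_range, Set.mem_setOf_eq]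
      constructor
      · rintro ⟨m, rfl⟩; exact Dvd.intro_left m rfl
      · rintro ⟨m, rfl⟩; exact ⟨m, mul_comm m i⟩
    rw [him]
    obtain ⟨j, rfl⟩ : ∃ j, i = j + 1 := ⟨i - 1, by omega⟩
    exact num_series' j

end SchurAux

/-- Schur's theorem: the number of partitions of `n` into distinct parts not divisible by `3`
equals the number of partitions of `n` into parts congruent to `1` or `5` modulo `6`. -/
theorem stmt_5 (n : ℕ) (hn : 0 < n) :
    Nat.card {p : n.Partition // (∀ i, p.parts.count i ≤ 1) ∧ ∀ i ∈ p.parts, ¬ 3 ∣ i} =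
      Nat.card {p : n.Partition // ∀ i ∈ p.parts, i % 6 = 1 ∨ i % 6 = 5} := by
  rw [Nat.card_eq_fintype_card, Nat.card_eq_fintype_card, Fintype.card_subtype,
    Fintype.card_subtype]
  suffices h : ((Finset.filter (fun p : n.Partition =>
      (∀ i, p.parts.count i ≤ 1) ∧ ∀ i ∈ p.parts, ¬ 3 ∣ i) Finset.univ).card : ℚ) =
      ((Finset.filter (fun p : n.Partition =>
      ∀ i ∈ p.parts, i % 6 = 1 ∨ i % 6 = 5) Finset.univ).card : ℚ) from mod_cast h
  rw [SchurAux.distinctGF_prop n, SchurAux.oddGF_prop n, ← SchurAux.same_gf n,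
    coeff_mul_prod_one_sub_of_lt_order]
  intro i hi
  simp only [SchurAux.Ef, Finset.mem_filter, Finset.mem_Ioc] at hi
  rw [order_X_pow]
  exact_mod_cast hi.1.1
end

section
/- For every positive integer n, the number of partitions of n in which every even part occurs with even multiplicity (odd parts being unrestricted) equals the number of partitions of n in which every odd part occurs at most once (even parts being unrestricted). -/
open Finset

namespace Stmt6

/-- multiplicity function of image partition (even-mult-even → odd-distinct direction) -/
def mulF (f : ℕ → ℕ) (j : ℕ) : ℕ := if Odd j then f j % 2 else f (j / 2) / 2

/-- multiplicity function of image partition (odd-distinct → even-mult-even direction) -/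
def mulG (h : ℕ → ℕ) (j : ℕ) : ℕ := 2 * h (2 * j) + if Odd j then h j else 0

def build (g : ℕ → ℕ) (N : ℕ) : Multiset ℕ := ∑ j ∈ Finset.Icc 1 N, Multiset.replicate (g j) j

lemma count_build (g : ℕ → ℕ) (N j : ℕ) :
    (build g N).count j = if j ∈ Finset.Icc 1 N then g j else 0 := by
  rw [build, Multiset.count_sum']
  split_ifs with hj
  · rw [Finset.sum_eq_single_of_mem j hj]
    · simp [Multiset.count_replicate]
    · intro b _ hb
      simp [Multiset.count_replicate, hb]
  · apply Finset.sum_eq_zero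
    intro b hb
    rw [Multiset.count_replicate, if_neg]
    intro h; exact hj (h ▸ hb)

lemma sum_build (g : ℕ → ℕ) (N : ℕ) :
    (build g N).sum = ∑ j ∈ Finset.Icc 1 N, g j * j := by
  rw [build]
  rw [Multiset.sum_sum]
  simp [Multiset.sum_replicate]

lemma mem_build {g : ℕ → ℕ} {N j : ℕ} (h : j ∈ build g N) : j ∈ Finset.Icc 1 N := by
  by_contra hj
  have := count_build g N j
  rw [if_neg hj] at this
  rw [← Multiset.count_pos] at h
  omega

variable {n : ℕ}

lemma count_eq_zero_of_gt (p : n.Partition) {j : ℕ} (hj : n < j) : p.parts.count j = 0 := by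
  rw [Multiset.count_eq_zero]
  intro hmem
  obtain ⟨t, ht⟩ := Multiset.exists_cons_of_mem hmem
  have := p.parts_sum
  rw [ht, Multiset.sum_cons] at this
  omega

lemma count_zero_eq_zero (p : n.Partition) : p.parts.count 0 = 0 := by
  rw [Multiset.count_eq_zero]
  intro hmem
  exact absurd (p.parts_pos hmem) (by omega)

lemma parts_eq_build (p : n.Partition) : p.parts = build (fun k => p.parts.count k) n := by
  ext j
  rw [count_build]
  split_ifs with h
  · rfl
  · simp only [Finset.mem_Icc, not_and_or, not_le] at h
    rcases h with h | h
    · interval_cases j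
      exact count_zero_eq_zero p
    · exact count_eq_zero_of_gt p h

lemma sum_count (p : n.Partition) : ∑ j ∈ Finset.Icc 1 n, p.parts.count j * j = n := by
  conv_rhs => rw [← p.parts_sum, parts_eq_build p]
  rw [sum_build]

/-- key sum identity for F direction -/
lemma sumF (f : ℕ → ℕ) (hf0 : ∀ j, n < j → f j = 0) (heven : ∀ j, Even j → Even (f j)) :
    ∑ j ∈ Finset.Icc 1 (2 * n + 1), mulF f j * j = ∑ j ∈ Finset.Icc 1 n, f j * j := by
  classical
  rw [← Finset.sum_filter_add_sum_filter_not (Finset.Icc 1 (2 * n + 1)) Odd]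
  have hodd : ∑ j ∈ (Finset.Icc 1 (2 * n + 1)).filter Odd, mulF f j * j
      = ∑ j ∈ (Finset.Icc 1 n).filter Odd, (f j % 2) * j := by
    have e1 : ∑ j ∈ (Finset.Icc 1 (2 * n + 1)).filter Odd, mulF f j * j
        = ∑ j ∈ (Finset.Icc 1 (2 * n + 1)).filter Odd, (f j % 2) * j :=
      Finset.sum_congr rfl (fun j hj => by
        simp only [Finset.mem_filter] at hj
        rw [mulF, if_pos hj.2])
    rw [e1]
    refine (Finset.sum_subset ?_ ?_).symm
    · exact Finset.filter_subset_filter _ (Finset.Icc_subset_Icc_right (by omega))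
    · intro j hj hj2
      simp only [Finset.mem_filter, Finset.mem_Icc] at hj hj2
      have : n < j := by by_contra h; exact hj2 ⟨⟨hj.1.1, by omega⟩, hj.2⟩
      simp [hf0 j this]
  have heven' : ∑ j ∈ (Finset.Icc 1 (2 * n + 1)).filter (fun j => ¬ Odd j), mulF f j * j
      = ∑ i ∈ Finset.Icc 1 n, (f i / 2) * (2 * i) := by
    apply Finset.sum_nbij' (i := fun j => j / 2) (j := fun i => 2 * i)
    · intro j hj
      simp only [Finset.mem_filter, Finset.mem_Icc, Nat.not_odd_iff_even] at hj
      obtain ⟨⟨h1, h2⟩, h3⟩ := hj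
      obtain ⟨c, hc⟩ := h3
      simp only [Finset.mem_Icc]
      omega
    · intro i hi
      simp only [Finset.mem_Icc] at hi
      simp only [Finset.mem_filter, Finset.mem_Icc, Nat.not_odd_iff_even]
      exact ⟨⟨by omega, by omega⟩, ⟨i, by omega⟩⟩
    · intro j hj
      simp only [Finset.mem_filter, Finset.mem_Icc, Nat.not_odd_iff_even] at hj
      obtain ⟨c, hc⟩ := hj.2
      omega
    · intro i _
      omega
    · intro j hj
      simp only [Finset.mem_filter, Nat.not_odd_iff_even] at hj
      obtain ⟨c, hc⟩ := hj.2
      rw [mulF, if_neg (by rw [Nat.not_odd_iff_even]; exact hj.2)]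
      congr 1
      omega
  rw [hodd, heven', Finset.sum_filter, ← Finset.sum_add_distrib]
  apply Finset.sum_congr rfl
  intro i hi
  have hdm : 2 * (f i / 2) + f i % 2 = f i := by omega
  rcases Nat.even_or_odd i with h | h
  · simp only [if_neg (Nat.not_odd_iff_even.mpr h)]
    rw [zero_add, show f i / 2 * (2 * i) = f i / 2 * 2 * i by ring,
      Nat.div_mul_cancel (heven i h).two_dvd]
  · simp only [if_pos h]
    rw [show f i % 2 * i + f i / 2 * (2 * i) = (2 * (f i / 2) + f i % 2) * i by ring, hdm]

/-- key sum identity for G direction -/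
lemma sumG (h : ℕ → ℕ) (hh0 : ∀ j, n < j → h j = 0) :
    ∑ j ∈ Finset.Icc 1 n, mulG h j * j = ∑ j ∈ Finset.Icc 1 n, h j * j := by
  classical
  have expand : ∑ j ∈ Finset.Icc 1 n, mulG h j * j
      = (∑ j ∈ Finset.Icc 1 n, h (2 * j) * (2 * j))
        + ∑ j ∈ Finset.Icc 1 n, (if Odd j then h j * j else 0) := by
    rw [← Finset.sum_add_distrib]
    apply Finset.sum_congr rfl
    intro j _
    rw [mulG]
    split_ifs with hj <;> ring
  rw [expand]
  have hfirst : ∑ j ∈ Finset.Icc 1 n, h (2 * j) * (2 * j)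
      = ∑ i ∈ (Finset.Icc 1 n).filter (fun i => ¬ Odd i), h i * i := by
    rw [← Finset.sum_subset (s₁ := Finset.Icc 1 (n / 2)) (s₂ := Finset.Icc 1 n)
      (Finset.Icc_subset_Icc_right (by omega))]
    · apply Finset.sum_nbij' (i := fun j => 2 * j) (j := fun i => i / 2)
      · intro j hj
        simp only [Finset.mem_Icc] at hj
        simp only [Finset.mem_filter, Finset.mem_Icc, Nat.not_odd_iff_even]
        exact ⟨⟨by omega, by omega⟩, ⟨j, by omega⟩⟩
      · intro i hi
        simp only [Finset.mem_filter, Finset.mem_Icc, Nat.not_odd_iff_even] at hi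
        obtain ⟨c, hc⟩ := hi.2
        simp only [Finset.mem_Icc]
        omega
      · intro j _; omega
      · intro i hi
        simp only [Finset.mem_filter, Nat.not_odd_iff_even] at hi
        obtain ⟨c, hc⟩ := hi.2
        omega
      · intro j _; rfl
    · intro j hj hj2
      simp only [Finset.mem_Icc] at hj hj2
      have : n < 2 * j := by omega
      simp [hh0 _ this]
  rw [hfirst, ← Finset.sum_filter, add_comm,
    Finset.sum_filter_add_sum_filter_not (Finset.Icc 1 n) Odd]

/-- counts vanish outside the support range, F direction -/
lemma mulF_zero (f : ℕ → ℕ) (hf0 : ∀ j, n < j → f j = 0) (hz : f 0 = 0) {j : ℕ}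
    (hj : j ∉ Finset.Icc 1 (2 * n + 1)) : mulF f j = 0 := by
  simp only [Finset.mem_Icc, not_and_or, not_le] at hj
  rw [mulF]
  rcases hj with hj | hj
  · interval_cases j
    simp [hz]
  · split_ifs with h
    · rw [hf0 j (by omega)]
    · rw [hf0 (j / 2) (by omega)]

lemma mulG_zero (h : ℕ → ℕ) (hh0 : ∀ j, n < j → h j = 0) (hz : h 0 = 0) {j : ℕ}
    (hj : j ∉ Finset.Icc 1 n) : mulG h j = 0 := by
  simp only [Finset.mem_Icc, not_and_or, not_le] at hj
  rw [mulG]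
  rcases hj with hj | hj
  · interval_cases j
    simp [hz, Nat.not_odd_iff_even.mpr Even.zero]
  · rw [hh0 (2 * j) (by omega), hh0 j (by omega)]
    simp

def F (p : {p : n.Partition // ∀ k, Even k → Even (p.parts.count k)}) :
    {p : n.Partition // ∀ k, Odd k → p.parts.count k ≤ 1} := by
  refine ⟨⟨build (mulF (fun k => p.1.parts.count k)) (2 * n + 1), ?_, ?_⟩, ?_⟩
  · intro i hi
    have := mem_build hi
    simp only [Finset.mem_Icc] at this
    omega
  · rw [sum_build, sumF (fun k => p.1.parts.count k)
      (fun j hj => count_eq_zero_of_gt p.1 hj) p.2, sum_count]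
  · intro k hk
    rw [count_build]
    split_ifs with h
    · simp only [mulF, if_pos hk]
      omega
    · omega

def G (p : {p : n.Partition // ∀ k, Odd k → p.parts.count k ≤ 1}) :
    {p : n.Partition // ∀ k, Even k → Even (p.parts.count k)} := by
  refine ⟨⟨build (mulG (fun k => p.1.parts.count k)) n, ?_, ?_⟩, ?_⟩
  · intro i hi
    have := mem_build hi
    simp only [Finset.mem_Icc] at this
    omega
  · rw [sum_build, sumG (fun k => p.1.parts.count k)
      (fun j hj => count_eq_zero_of_gt p.1 hj), sum_count]
  · intro k hk
    rw [count_build]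
    split_ifs with h
    · rw [mulG, if_neg (by rwa [Nat.not_odd_iff_even])]
      exact ⟨p.1.parts.count (2 * k), by ring⟩
    · exact Even.zero

lemma count_F (p : {p : n.Partition // ∀ k, Even k → Even (p.parts.count k)}) (j : ℕ) :
    (F p).1.parts.count j = mulF (fun k => p.1.parts.count k) j := by
  show (build _ _).count j = _
  rw [count_build]
  split_ifs with h
  · rfl
  · exact (mulF_zero _ (fun j hj => count_eq_zero_of_gt p.1 hj) (count_zero_eq_zero p.1) h).symm

lemma count_G (p : {p : n.Partition // ∀ k, Odd k → p.parts.count k ≤ 1}) (j : ℕ) :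
    (G p).1.parts.count j = mulG (fun k => p.1.parts.count k) j := by
  show (build _ _).count j = _
  rw [count_build]
  split_ifs with h
  · rfl
  · exact (mulG_zero _ (fun j hj => count_eq_zero_of_gt p.1 hj) (count_zero_eq_zero p.1) h).symm

lemma GF (p : {p : n.Partition // ∀ k, Even k → Even (p.parts.count k)}) : G (F p) = p := by
  apply Subtype.ext
  apply Nat.Partition.ext
  ext j
  rw [count_G]
  simp only [mulG, count_F, mulF]
  have h2j : ¬ Odd (2 * j) := by simp [Nat.not_odd_iff_even, even_two_mul]
  rw [if_neg h2j]
  have : 2 * j / 2 = j := by omega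
  rw [this]
  rcases Nat.even_or_odd j with h | h
  · rw [if_neg (by rwa [Nat.not_odd_iff_even])]
    obtain ⟨c, hc⟩ := p.2 j h
    omega
  · simp only [if_pos h]
    omega

lemma FG (p : {p : n.Partition // ∀ k, Odd k → p.parts.count k ≤ 1}) : F (G p) = p := by
  apply Subtype.ext
  apply Nat.Partition.ext
  ext j
  rw [count_F]
  simp only [mulF, count_G, mulG]
  rcases Nat.even_or_odd j with h | h
  · rw [if_neg (by rwa [Nat.not_odd_iff_even])]
    obtain ⟨c, hc⟩ := h
    have hj2 : j / 2 = c := by omega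
    have h2 : 2 * (j / 2) = j := by omega
    rw [h2]
    rcases Nat.even_or_odd (j / 2) with h' | h'
    · rw [if_neg (by rwa [Nat.not_odd_iff_even])]
      omega
    · rw [if_pos h']
      have := p.2 (j / 2) h'
      omega
  · simp only [if_pos h]
    have h1 := p.2 j h
    omega

end Stmt6

/-- The number of partitions of `n` in which every even part occurs with even multiplicity
(odd parts unrestricted) equals the number of partitions of `n` in which every odd part occurs
at most once (even parts unrestricted). -/
theorem stmt_6 (n : ℕ) (hn : 0 < n) :
    Nat.card {p : n.Partition // ∀ k, Even k → Even (p.parts.count k)} =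
      Nat.card {p : n.Partition // ∀ k, Odd k → p.parts.count k ≤ 1} := by
  exact Nat.card_congr ⟨Stmt6.F, Stmt6.G, Stmt6.GF, Stmt6.FG⟩
end

section
/- For every positive integer n, the number of partitions of n into distinct parts none of which is divisible by 5 equals the number of partitions of n into parts congruent to 1, 3, 7, or 9 modulo 10. -/
open Multiset

namespace Glaisher5Aux

/-- 2-adic valuation. -/
def v (k : ℕ) : ℕ := k.factorization 2

/-- odd part. -/
def w (k : ℕ) : ℕ := ordCompl[2] k

lemma two_pow_v_mul_w (k : ℕ) : 2 ^ v k * w k = k :=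
  Nat.ordProj_mul_ordCompl_eq_self k 2

lemma w_odd {k : ℕ} (hk : k ≠ 0) : ¬ 2 ∣ w k :=
  Nat.not_dvd_ordCompl Nat.prime_two hk

lemma w_pos {k : ℕ} (hk : k ≠ 0) : 0 < w k := Nat.ordCompl_pos 2 hk

lemma w_dvd (k : ℕ) : w k ∣ k := Nat.ordCompl_dvd k 2

lemma odd_ne_zero {m : ℕ} (hm : ¬ 2 ∣ m) : m ≠ 0 := by
  rintro rfl; exact hm (dvd_zero 2)

lemma v_mul {a m : ℕ} (hm : ¬ 2 ∣ m) : v (2 ^ a * m) = a := by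
  have hm0 : m ≠ 0 := odd_ne_zero hm
  unfold v
  rw [Nat.factorization_mul (pow_ne_zero a two_ne_zero) hm0]
  simp [Nat.factorization_eq_zero_of_not_dvd hm, Nat.Prime.factorization_self Nat.prime_two]

lemma w_mul {a m : ℕ} (hm : ¬ 2 ∣ m) : w (2 ^ a * m) = m := by
  have h := two_pow_v_mul_w (2 ^ a * m)
  rw [v_mul hm] at h
  exact Nat.eq_of_mul_eq_mul_left (pow_pos two_pos a) h

lemma eq_of_v_w {j k : ℕ} (h1 : v j = v k) (h2 : w j = w k) : j = k := by
  rw [← two_pow_v_mul_w j, ← two_pow_v_mul_w k, h1, h2]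

/-- Euler's map: distinct parts to odd parts. -/
def g (s : Multiset ℕ) : Multiset ℕ := s.bind fun k => replicate (2 ^ v k) (w k)

/-- a building block of the inverse map: the parts `2 ^ a * m` for `a` in the binary
expansion of `μ`. -/
def bm (μ m : ℕ) : Multiset ℕ := ((μ.bitIndices.map fun a => 2 ^ a * m : List ℕ) : Multiset ℕ)

/-- inverse of Euler's map. -/
def h (t : Multiset ℕ) : Multiset ℕ := t.dedup.bind fun m => bm (t.count m) m

lemma g_sum (s : Multiset ℕ) : (g s).sum = s.sum := by
  unfold g
  rw [Multiset.sum_bind]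
  calc (s.map fun k => (replicate (2 ^ v k) (w k)).sum).sum
      = (s.map id).sum := by
        refine congrArg _ (Multiset.map_congr rfl fun k _ => ?_)
        simp [Multiset.sum_replicate, two_pow_v_mul_w]
    _ = s.sum := by simp

lemma mem_g {s : Multiset ℕ} {i : ℕ} (hi : i ∈ g s) : ∃ k ∈ s, i = w k := by
  simp only [g, Multiset.mem_bind] at hi
  obtain ⟨k, hk, hik⟩ := hi
  exact ⟨k, hk, Multiset.eq_of_mem_replicate hik⟩

lemma mem_g_of_mem {s : Multiset ℕ} {j : ℕ} (hj : j ∈ s) : w j ∈ g s := by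
  simp only [g, Multiset.mem_bind]
  exact ⟨j, hj, Multiset.mem_replicate.2 ⟨by positivity, rfl⟩⟩

lemma count_g (s : Multiset ℕ) (hs : s.Nodup) (m : ℕ) :
    (g s).count m = ∑ a ∈ (s.toFinset.filter fun k => w k = m).image v, 2 ^ a := by
  unfold g
  rw [Multiset.count_bind]
  rw [show ((s.map fun k => (replicate (2 ^ v k) (w k)).count m).sum
      = ∑ k ∈ s.toFinset, (replicate (2 ^ v k) (w k)).count m) by
    rw [show (∑ k ∈ s.toFinset, (replicate (2 ^ v k) (w k)).count m)
        = (s.toFinset.val.map fun k => (replicate (2 ^ v k) (w k)).count m).sum from rfl,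
      Multiset.toFinset_val, hs.dedup]]
  rw [Finset.sum_image (fun a ha b hb hab => by
      simp only [Finset.mem_coe, Finset.mem_filter] at ha hb
      exact eq_of_v_w hab (ha.2.trans hb.2.symm)), Finset.sum_filter]
  exact Finset.sum_congr rfl fun k _ => Multiset.count_replicate m (w k) (2 ^ v k)

lemma mem_image_iff {s : Multiset ℕ} {m a : ℕ} (hm : ¬ 2 ∣ m) :
    a ∈ (s.toFinset.filter fun k => w k = m).image v ↔ 2 ^ a * m ∈ s := by
  constructor
  · rintro h
    obtain ⟨k, hk, rfl⟩ := Finset.mem_image.1 h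
    simp only [Finset.mem_filter, Multiset.mem_toFinset] at hk
    rw [← hk.2, two_pow_v_mul_w]
    exact hk.1
  · intro h
    refine Finset.mem_image.2 ⟨2 ^ a * m, ?_, v_mul hm⟩
    simp only [Finset.mem_filter, Multiset.mem_toFinset]
    exact ⟨h, w_mul hm⟩

lemma mem_bm_iff {μ m j : ℕ} (hm : ¬ 2 ∣ m) :
    j ∈ bm μ m ↔ w j = m ∧ v j ∈ μ.bitIndices := by
  simp only [bm, Multiset.mem_coe, List.mem_map]
  constructor
  · rintro ⟨a, ha, rfl⟩
    exact ⟨w_mul hm, by rwa [v_mul hm]⟩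
  · rintro ⟨h1, h2⟩
    exact ⟨v j, h2, by rw [← h1, two_pow_v_mul_w]⟩

lemma bm_nodup {μ m : ℕ} (hm : ¬ 2 ∣ m) : (bm μ m).Nodup := by
  have hm0 : m ≠ 0 := odd_ne_zero hm
  refine Multiset.coe_nodup.2 (List.Nodup.map ?_ Nat.bitIndices_sorted.nodup)
  intro a b hab
  have := Nat.eq_of_mul_eq_mul_right (Nat.pos_of_ne_zero hm0) hab
  exact Nat.pow_right_injective le_rfl this

lemma count_bm {μ m j : ℕ} (hm : ¬ 2 ∣ m) :
    (bm μ m).count j = if w j = m ∧ v j ∈ μ.bitIndices then 1 else 0 := by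
  split_ifs with hc
  · exact Multiset.count_eq_one_of_mem (bm_nodup hm) ((mem_bm_iff hm).2 hc)
  · exact Multiset.count_eq_zero_of_notMem (fun h => hc ((mem_bm_iff hm).1 h))

lemma count_h (t : Multiset ℕ) (hodd : ∀ m ∈ t, ¬ 2 ∣ m) (j : ℕ) :
    (h t).count j = if w j ∈ t ∧ v j ∈ (t.count (w j)).bitIndices then 1 else 0 := by
  unfold h
  rw [Multiset.count_bind]
  have hdv : t.dedup = t.toFinset.val := (Multiset.toFinset_val t).symm
  rw [hdv]
  rw [show ((t.toFinset.val.map fun m => (bm (t.count m) m).count j).sum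
      = ∑ m ∈ t.toFinset, (bm (t.count m) m).count j) from rfl]
  have hcongr : ∀ m ∈ t.toFinset, (bm (t.count m) m).count j
      = if m = w j then (if v j ∈ (t.count m).bitIndices then 1 else 0) else 0 := by
    intro m hm
    rw [count_bm (hodd m (Multiset.mem_toFinset.1 hm))]
    by_cases h1 : m = w j
    · subst h1; simp
    · rw [if_neg h1, if_neg]
      rintro ⟨hh, -⟩
      exact h1 hh.symm
  rw [Finset.sum_congr rfl hcongr, Finset.sum_ite_eq' t.toFinset (w j)]
  by_cases h1 : w j ∈ t <;> by_cases h2 : v j ∈ (t.count (w j)).bitIndices <;>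
    simp [h1, h2, Multiset.mem_toFinset]

lemma h_sum (t : Multiset ℕ) : (h t).sum = t.sum := by
  unfold h
  rw [Multiset.sum_bind]
  have hbm : ∀ μ m : ℕ, (bm μ m).sum = μ * m := by
    intro μ m
    simp only [bm, Multiset.sum_coe]
    rw [List.sum_map_mul_right, Nat.twoPowSum_bitIndices]
  have hdv : t.dedup = t.toFinset.val := (Multiset.toFinset_val t).symm
  rw [hdv]
  rw [show ((t.toFinset.val.map fun m => (bm (t.count m) m).sum).sum
      = ∑ m ∈ t.toFinset, (bm (t.count m) m).sum) from rfl]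
  rw [Finset.sum_congr rfl fun m _ => hbm (t.count m) m]
  have := (Finset.sum_multiset_map_count t (id : ℕ → ℕ)).symm
  simpa using this

lemma mem_h {t : Multiset ℕ} {i : ℕ} (hi : i ∈ h t) : ∃ m ∈ t, ∃ a : ℕ, i = 2 ^ a * m := by
  simp only [h, Multiset.mem_bind, Multiset.mem_dedup] at hi
  obtain ⟨m, hm, hbm⟩ := hi
  simp only [bm, Multiset.mem_coe, List.mem_map] at hbm
  obtain ⟨a, _, rfl⟩ := hbm
  exact ⟨m, hm, a, rfl⟩

lemma h_nodup (t : Multiset ℕ) (hodd : ∀ m ∈ t, ¬ 2 ∣ m) : (h t).Nodup := by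
  unfold h
  rw [Multiset.nodup_bind]
  refine ⟨fun m hm => bm_nodup (hodd m (Multiset.mem_dedup.1 hm)), ?_⟩
  refine Multiset.Nodup.pairwise ?_ (Multiset.nodup_dedup t)
  intro a ha b hb hab
  show Disjoint (bm (t.count a) a) (bm (t.count b) b)
  rw [Multiset.disjoint_left]
  intro j hja hjb
  have h2a := hodd a (Multiset.mem_dedup.1 ha)
  have h2b := hodd b (Multiset.mem_dedup.1 hb)
  have e1 := ((mem_bm_iff h2a).1 hja).1
  have e2 := ((mem_bm_iff h2b).1 hjb).1
  exact hab (e1.symm.trans e2)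

lemma h_g (s : Multiset ℕ) (hs : s.Nodup) (h0 : ∀ k ∈ s, k ≠ 0) : h (g s) = s := by
  have hodd : ∀ m ∈ g s, ¬ 2 ∣ m := by
    intro m hm
    obtain ⟨k, hk, rfl⟩ := mem_g hm
    exact w_odd (h0 k hk)
  ext j
  rw [count_h (g s) hodd j]
  have hkey : (w j ∈ g s ∧ v j ∈ ((g s).count (w j)).bitIndices) ↔ j ∈ s := by
    constructor
    · rintro ⟨hw, hv⟩
      have hwodd : ¬ 2 ∣ w j := hodd _ hw
      rw [count_g s hs (w j), ← List.mem_toFinset,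
        Finset.toFinset_bitIndices_twoPowSum, mem_image_iff hwodd, two_pow_v_mul_w] at hv
      exact hv
    · intro hj
      have hwodd : ¬ 2 ∣ w j := w_odd (h0 j hj)
      refine ⟨mem_g_of_mem hj, ?_⟩
      rw [count_g s hs (w j), ← List.mem_toFinset,
        Finset.toFinset_bitIndices_twoPowSum, mem_image_iff hwodd, two_pow_v_mul_w]
      exact hj
  rw [if_congr hkey rfl rfl]
  split_ifs with hc
  · exact (Multiset.count_eq_one_of_mem hs hc).symm
  · exact (Multiset.count_eq_zero_of_notMem hc).symm

lemma bind_replicate (l : Multiset ℕ) (f : ℕ → ℕ) (m : ℕ) :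
    (l.bind fun a => replicate (f a) m) = replicate ((l.map f).sum) m := by
  induction l using Multiset.induction with
  | empty => simp
  | cons a l ih => simp [ih, Multiset.replicate_add]

lemma g_h (t : Multiset ℕ) (hodd : ∀ m ∈ t, ¬ 2 ∣ m) : g (h t) = t := by
  unfold h g
  rw [Multiset.bind_assoc]
  have hinner : ∀ m ∈ t.dedup,
      ((bm (t.count m) m).bind fun k => replicate (2 ^ v k) (w k))
        = replicate (t.count m) m := by
    intro m hm
    have hmo : ¬ 2 ∣ m := hodd m (Multiset.mem_dedup.1 hm)
    simp only [bm]
    rw [show ((((t.count m).bitIndices.map fun a => 2 ^ a * m : List ℕ) : Multiset ℕ))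
        = (((t.count m).bitIndices : List ℕ) : Multiset ℕ).map (fun a => 2 ^ a * m) by
      rw [Multiset.map_coe]]
    rw [Multiset.bind_map]
    have hcong : ∀ a ∈ (((t.count m).bitIndices : List ℕ) : Multiset ℕ),
        replicate (2 ^ v (2 ^ a * m)) (w (2 ^ a * m)) = replicate (2 ^ a) m := by
      intro a _
      rw [v_mul hmo, w_mul hmo]
    rw [Multiset.bind_congr hcong, bind_replicate]
    congr 1
    rw [Multiset.map_coe, Multiset.sum_coe, Nat.twoPowSum_bitIndices]
  rw [Multiset.bind_congr hinner]
  ext j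
  rw [Multiset.count_bind]
  have hdv : t.dedup = t.toFinset.val := (Multiset.toFinset_val t).symm
  rw [hdv]
  rw [show ((t.toFinset.val.map fun m => (replicate (t.count m) m).count j).sum
      = ∑ m ∈ t.toFinset, (replicate (t.count m) m).count j) from rfl]
  rw [Finset.sum_congr rfl fun m _ => Multiset.count_replicate j m (t.count m)]
  rw [Finset.sum_ite_eq' t.toFinset j]
  split_ifs with hj
  · rfl
  · exact (Multiset.count_eq_zero_of_notMem fun h => hj (Multiset.mem_toFinset.2 h)).symm

lemma mod10 {i : ℕ} (h2 : ¬ 2 ∣ i) (h5 : ¬ 5 ∣ i) :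
    i % 10 = 1 ∨ i % 10 = 3 ∨ i % 10 = 7 ∨ i % 10 = 9 := by omega

lemma of_mod10 {i : ℕ} (hi : i % 10 = 1 ∨ i % 10 = 3 ∨ i % 10 = 7 ∨ i % 10 = 9) :
    ¬ 2 ∣ i ∧ ¬ 5 ∣ i := by omega

end Glaisher5Aux

open Glaisher5Aux in
/-- The number of partitions of `n` into distinct parts not divisible by `5` equals the number
of partitions of `n` into parts congruent to `1, 3, 7` or `9` modulo `10`. -/
theorem stmt_7 (n : ℕ) (hn : 0 < n) :
    Nat.card {p : n.Partition // (∀ i, p.parts.count i ≤ 1) ∧ ∀ i ∈ p.parts, ¬ 5 ∣ i} =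
      Nat.card {p : n.Partition //
        ∀ i ∈ p.parts, i % 10 = 1 ∨ i % 10 = 3 ∨ i % 10 = 7 ∨ i % 10 = 9} := by
  refine Nat.card_congr ?_
  refine
    { toFun := fun p =>
        ⟨⟨g p.1.parts,
          fun {i} hi => by
            obtain ⟨k, hk, rfl⟩ := mem_g hi
            exact w_pos (p.1.parts_pos hk).ne',
          by rw [g_sum, p.1.parts_sum]⟩,
          by
            intro i hi
            obtain ⟨k, hk, rfl⟩ := mem_g hi
            have hk0 : k ≠ 0 := (p.1.parts_pos hk).ne'
            exact mod10 (w_odd hk0) fun hd => p.2.2 k hk (hd.trans (w_dvd k))⟩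
      invFun := fun q =>
        ⟨⟨h q.1.parts,
          fun {i} hi => by
            obtain ⟨m, hm, a, rfl⟩ := mem_h hi
            exact Nat.mul_pos (pow_pos two_pos a) (q.1.parts_pos hm),
          by rw [h_sum, q.1.parts_sum]⟩,
          by
            refine ⟨fun i => ?_, fun i hi => ?_⟩
            · exact Multiset.nodup_iff_count_le_one.1
                (h_nodup _ fun m hm => (of_mod10 (q.2 m hm)).1) i
            · obtain ⟨m, hm, a, rfl⟩ := mem_h hi
              have h5m : ¬ 5 ∣ m := (of_mod10 (q.2 m hm)).2
              intro hd
              rcases (Nat.prime_five.dvd_mul).1 hd with hd' | hd'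
              · exact absurd (Nat.Prime.dvd_of_dvd_pow Nat.prime_five hd') (by norm_num)
              · exact h5m hd'⟩
      left_inv := fun p => by
        apply Subtype.ext
        apply Nat.Partition.ext
        exact h_g p.1.parts (Multiset.nodup_iff_count_le_one.2 p.2.1)
          fun k hk => (p.1.parts_pos hk).ne'
      right_inv := fun q => by
        apply Subtype.ext
        apply Nat.Partition.ext
        exact g_h q.1.parts fun m hm => (of_mod10 (q.2 m hm)).1 }
end

section
/- Let s ≥ 3 be an odd integer. For every positive integer n, the number of partitions of n into distinct parts none of which is divisible by s equals the number of partitions of n into parts that are odd and congruent to a residue other than s modulo 2s (equivalently, odd parts not divisible by s). -/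
open Multiset

namespace Stmt8Aux

/-- 2-adic valuation -/
def v (i : ℕ) : ℕ := i.factorization 2
/-- odd part -/
def u (i : ℕ) : ℕ := i / 2 ^ v i

lemma decomp (i : ℕ) : 2 ^ v i * u i = i :=
  Nat.ordProj_mul_ordCompl_eq_self i 2

lemma odd_u {i : ℕ} (hi : i ≠ 0) : Odd (u i) := by
  rw [Nat.not_even_iff_odd.symm, even_iff_two_dvd]
  exact Nat.not_dvd_ordCompl Nat.prime_two hi

lemma u_dvd (i : ℕ) : u i ∣ i := Nat.ordCompl_dvd i 2

lemma v_pow_mul {a : ℕ} (k : ℕ) (ha : Odd a) : v (2 ^ k * a) = k := by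
  have ha0 : a ≠ 0 := ha.pos.ne'
  have h2 : ¬ (2 ∣ a) := by
    rw [← even_iff_two_dvd, ← Nat.not_odd_iff_even]; exact fun h => h ha
  rw [v, Nat.factorization_mul (by positivity) ha0, Nat.Prime.factorization_pow Nat.prime_two]
  simp [Nat.factorization_eq_zero_of_not_dvd h2]

lemma u_pow_mul {a : ℕ} (k : ℕ) (ha : Odd a) : u (2 ^ k * a) = a := by
  rw [u, v_pow_mul k ha, Nat.mul_div_cancel_left _ (by positivity)]

lemma pow_mul_inj {k l a b : ℕ} (ha : Odd a) (hb : Odd b) (h : 2 ^ k * a = 2 ^ l * b) :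
    k = l ∧ a = b := by
  have h1 : k = l := by
    have := congrArg v h
    rwa [v_pow_mul k ha, v_pow_mul l hb] at this
  subst h1
  exact ⟨rfl, by simpa using Nat.eq_of_mul_eq_mul_left (by positivity) h⟩

/-- odd-to-distinct map -/
def D (w : Multiset ℕ) : Multiset ℕ :=
  ∑ a ∈ w.toFinset, ((w.count a).bitIndices.toFinset.val.map (fun k => 2 ^ k * a))

/-- distinct-to-odd map -/
def O (m : Multiset ℕ) : Multiset ℕ :=
  m.bind fun i => Multiset.replicate (2 ^ v i) (u i)

lemma mem_D {w : Multiset ℕ} {j : ℕ} (hj : j ∈ D w) : ∃ a ∈ w, ∃ k, j = 2 ^ k * a := by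
  rw [D, Multiset.mem_sum] at hj
  obtain ⟨a, ha, hj⟩ := hj
  rw [Multiset.mem_map] at hj
  obtain ⟨k, -, rfl⟩ := hj
  exact ⟨a, Multiset.mem_toFinset.mp ha, k, rfl⟩

lemma sum_D (w : Multiset ℕ) : (D w).sum = w.sum := by
  rw [D, Multiset.sum_sum]
  have h1 : ∀ a : ℕ, ((((w.count a).bitIndices.toFinset.val.map (fun k => 2 ^ k * a))).sum)
      = w.count a * a := by
    intro a
    have : (((w.count a).bitIndices.toFinset.val.map (fun k => 2 ^ k * a))).sum
        = ∑ k ∈ (w.count a).bitIndices.toFinset, 2 ^ k * a := rfl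
    rw [this, ← Finset.sum_mul, Finset.twoPowSum_toFinset_bitIndices]
  simp_rw [h1]
  have := Finset.sum_multiset_map_count w (id : ℕ → ℕ)
  simpa [smul_eq_mul] using this.symm

lemma count_D {w : Multiset ℕ} (hw : ∀ b ∈ w, Odd b) {a : ℕ} (ha : Odd a) (k : ℕ) :
    (D w).count (2 ^ k * a) =
      if k ∈ (w.count a).bitIndices.toFinset then 1 else 0 := by
  rw [D, Multiset.count_sum']
  rw [Finset.sum_eq_single a]
  · have hinj : Function.Injective (fun k => 2 ^ k * a) := by
      intro k1 k2 h; exact (pow_mul_inj ha ha h).1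
    rw [Multiset.count_map_eq_count' _ _ hinj]
    by_cases hk : k ∈ (w.count a).bitIndices.toFinset
    · rw [if_pos hk, Multiset.count_eq_one_of_mem (w.count a).bitIndices.toFinset.nodup hk]
    · rw [if_neg hk, Multiset.count_eq_zero_of_notMem hk]
  · intro b hb hba
    apply Multiset.count_eq_zero_of_notMem
    intro hmem
    rw [Multiset.mem_map] at hmem
    obtain ⟨k', -, hk'⟩ := hmem
    exact hba (pow_mul_inj (hw b (Multiset.mem_toFinset.mp hb)) ha hk').2
  · intro hna
    rw [Multiset.mem_toFinset] at hna
    rw [Multiset.count_eq_zero_of_notMem hna]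
    simp

lemma nodup_D {w : Multiset ℕ} (hw : ∀ b ∈ w, Odd b) : (D w).Nodup := by
  rw [Multiset.nodup_iff_count_le_one]
  intro j
  rcases eq_or_ne j 0 with rfl | hj
  · rw [Multiset.count_eq_zero_of_notMem]
    · exact Nat.zero_le 1
    intro h
    obtain ⟨a, ha, k, hk⟩ := mem_D h
    exact absurd hk.symm (Nat.mul_ne_zero (by positivity) (hw a ha).pos.ne')
  · rw [← decomp j, count_D hw (odd_u hj) (v j)]
    split <;> omega

lemma O_mapped (t : Multiset ℕ) {a : ℕ} (ha : Odd a) :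
    O (t.map fun k => 2 ^ k * a) = Multiset.replicate ((t.map (2 ^ ·)).sum) a := by
  induction t using Multiset.induction_on with
  | empty => simp [O]
  | cons k t ih =>
    rw [Multiset.map_cons, O, Multiset.cons_bind, ← O, ih, Multiset.map_cons,
      Multiset.sum_cons, v_pow_mul k ha, u_pow_mul k ha, Multiset.replicate_add]

lemma mem_O {m : Multiset ℕ} {b : ℕ} (hb : b ∈ O m) : ∃ i ∈ m, b = u i := by
  rw [O, Multiset.mem_bind] at hb
  obtain ⟨i, hi, hb⟩ := hb
  exact ⟨i, hi, Multiset.eq_of_mem_replicate hb⟩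

lemma sum_O {m : Multiset ℕ} (h0 : ∀ i ∈ m, i ≠ 0) : (O m).sum = m.sum := by
  rw [O, Multiset.sum_bind]
  rw [Multiset.map_congr rfl (fun i hi => by
    rw [Multiset.sum_replicate, smul_eq_mul, decomp i])]
  simp

lemma OD {w : Multiset ℕ} (hw : ∀ b ∈ w, Odd b) : O (D w) = w := by
  rw [D]
  have hsum : ∀ (s : Finset ℕ) (f : ℕ → Multiset ℕ), O (∑ a ∈ s, f a) = ∑ a ∈ s, O (f a) := by
    intro s f
    induction s using Finset.cons_induction with
    | empty => simp [O]
    | cons a s ha ih =>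
      rw [Finset.sum_cons, Finset.sum_cons, ← ih, O, Multiset.add_bind]
      rfl
  rw [hsum]
  have h1 : ∀ a ∈ w.toFinset, O (((w.count a).bitIndices.toFinset.val.map (fun k => 2 ^ k * a)))
      = w.count a • ({a} : Multiset ℕ) := by
    intro a ha
    rw [O_mapped _ (hw a (Multiset.mem_toFinset.mp ha)), Multiset.nsmul_singleton]
    congr 1
    have : ((((w.count a).bitIndices.toFinset.val.map (2 ^ ·))).sum)
        = ∑ k ∈ (w.count a).bitIndices.toFinset, 2 ^ k := rfl
    rw [this, Finset.twoPowSum_toFinset_bitIndices]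
  rw [Finset.sum_congr rfl h1, Multiset.toFinset_sum_count_nsmul_eq]

lemma sum_map_ite (p : ℕ → Prop) [DecidablePred p] (f : ℕ → ℕ) (m : Multiset ℕ) :
    (m.map fun i => if p i then f i else 0).sum = ((m.filter p).map f).sum := by
  induction m using Multiset.induction_on with
  | empty => simp
  | cons i t ih => by_cases h : p i <;> simp [Multiset.filter_cons, h, ih]

lemma count_O (m : Multiset ℕ) (a : ℕ) :
    (O m).count a = ((m.filter (fun i => u i = a)).map (fun i => 2 ^ v i)).sum := by
  rw [O, Multiset.count_bind]
  simp_rw [Multiset.count_replicate]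
  exact sum_map_ite _ _ m

lemma DO {m : Multiset ℕ} (hm : m.Nodup) (h0 : ∀ i ∈ m, i ≠ 0) : D (O m) = m := by
  have hw : ∀ b ∈ O m, Odd b := by
    intro b hb
    obtain ⟨i, hi, rfl⟩ := mem_O hb
    exact odd_u (h0 i hi)
  ext j
  rcases eq_or_ne j 0 with rfl | hj
  · rw [Multiset.count_eq_zero_of_notMem, Multiset.count_eq_zero_of_notMem]
    · exact fun h => h0 0 h rfl
    · intro h
      obtain ⟨a, ha, k, hk⟩ := mem_D h
      have : a ≠ 0 := (hw a ha).pos.ne'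
      exact absurd hk.symm (Nat.mul_ne_zero (by positivity) (hw a ha).pos.ne')
  · have hja : Odd (u j) := odd_u hj
    set a := u j with hadef
    have hnodup : ((m.filter (fun i => u i = a)).map v).Nodup := by
      refine Multiset.Nodup.map_on ?_ (hm.filter _)
      intro x hx y hy hxy
      rw [Multiset.mem_filter] at hx hy
      rw [← decomp x, ← decomp y, hx.2, hy.2, hxy]
    set T : Finset ℕ := ⟨(m.filter (fun i => u i = a)).map v, hnodup⟩ with hT
    have hcount : (O m).count a = ∑ k ∈ T, 2 ^ k := by
      rw [count_O]
      have : (∑ k ∈ T, 2 ^ k) = ((((m.filter (fun i => u i = a)).map v).map (2 ^ ·)).sum) := rfl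
      rw [this, Multiset.map_map]
      rfl
    have hmemT : v j ∈ T ↔ j ∈ m := by
      constructor
      · intro h
        have : v j ∈ (m.filter (fun i => u i = a)).map v := h
        rw [Multiset.mem_map] at this
        obtain ⟨i, hi, hvi⟩ := this
        rw [Multiset.mem_filter] at hi
        have : i = j := by rw [← decomp i, ← decomp j, hvi, hi.2]
        rw [← this]; exact hi.1
      · intro h
        have : v j ∈ (m.filter (fun i => u i = a)).map v :=
          Multiset.mem_map.mpr ⟨j, Multiset.mem_filter.mpr ⟨h, rfl⟩, rfl⟩
        exact this
    calc (D (O m)).count j = (D (O m)).count (2 ^ v j * a) := by rw [decomp j]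
      _ = if v j ∈ ((O m).count a).bitIndices.toFinset then 1 else 0 := count_D hw hja _
      _ = if j ∈ m then 1 else 0 := by
          rw [hcount, Finset.toFinset_bitIndices_twoPowSum]
          simp only [hmemT]
      _ = m.count j := by
          split
          · exact (Multiset.count_eq_one_of_mem hm (by assumption)).symm
          · exact (Multiset.count_eq_zero_of_notMem (by assumption)).symm

end Stmt8Aux

/-- For odd `s ≥ 3`, the number of partitions of `n` into distinct parts not divisible by `s`
equals the number of partitions of `n` into odd parts not divisible by `s` (equivalently, odd
parts congruent to a residue other than `s` modulo `2s`). -/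
theorem stmt_8 (s : ℕ) (hs : 3 ≤ s) (hodd : Odd s) (n : ℕ) (hn : 0 < n) :
    Nat.card {p : n.Partition // (∀ i, p.parts.count i ≤ 1) ∧ ∀ i ∈ p.parts, ¬ s ∣ i} =
      Nat.card {p : n.Partition // ∀ i ∈ p.parts, Odd i ∧ ¬ s ∣ i} := by
  have hcop : ∀ k : ℕ, Nat.Coprime s (2 ^ k) := fun k =>
    Nat.Coprime.pow_right k (Nat.coprime_two_right.mpr hodd)
  refine Nat.card_congr ?_
  refine
    { toFun := fun p =>
        ⟨⟨Stmt8Aux.O p.1.parts, ?_, ?_⟩, ?_⟩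
      invFun := fun p =>
        ⟨⟨Stmt8Aux.D p.1.parts, ?_, ?_⟩, ?_, ?_⟩
      left_inv := ?_
      right_inv := ?_ }
  · intro i hi
    obtain ⟨i₀, hi₀, rfl⟩ := Stmt8Aux.mem_O hi
    exact (Stmt8Aux.odd_u (p.1.parts_pos hi₀).ne').pos
  · rw [Stmt8Aux.sum_O (fun i hi => (p.1.parts_pos hi).ne')]
    exact p.1.parts_sum
  · intro i hi
    obtain ⟨i₀, hi₀, rfl⟩ := Stmt8Aux.mem_O hi
    refine ⟨Stmt8Aux.odd_u (p.1.parts_pos hi₀).ne', fun hdvd => ?_⟩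
    exact p.2.2 i₀ hi₀ (hdvd.trans (Stmt8Aux.u_dvd i₀))
  · intro j hj
    obtain ⟨a, ha, k, rfl⟩ := Stmt8Aux.mem_D hj
    have := p.1.parts_pos ha
    positivity
  · rw [Stmt8Aux.sum_D]
    exact p.1.parts_sum
  · intro i
    exact Multiset.nodup_iff_count_le_one.mp
      (Stmt8Aux.nodup_D (fun b hb => (p.2 b hb).1)) i
  · intro j hj hdvd
    obtain ⟨a, ha, k, rfl⟩ := Stmt8Aux.mem_D hj
    exact (p.2 a ha).2 ((hcop k).dvd_of_dvd_mul_left hdvd)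
  · intro p
    apply Subtype.ext
    apply Nat.Partition.ext
    exact Stmt8Aux.DO (Multiset.nodup_iff_count_le_one.mpr p.2.1)
      (fun i hi => (p.1.parts_pos hi).ne')
  · intro p
    apply Subtype.ext
    apply Nat.Partition.ext
    exact Stmt8Aux.OD (fun b hb => (p.2 b hb).1)
end

section
/- For every real number x with |x| < 1, (∑_{n ∈ ℤ} (−1)^n x^(n²)) · ∏_{k=1}^∞ (1 + x^k)/(1 − x^k) = 1; that is, the infinite product ∏_{k=1}^∞ (1 + x^k)/(1 − x^k) equals the reciprocal of the Jacobi theta function θ₄(0,x) = ∑_{n ∈ ℤ} (−1)^n x^(n²). -/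
open Finset Filter Real

namespace Gauss10

/-- partial products of `(1 - (x²)^(i+1))` -/
noncomputable def D (x : ℝ) (N : ℕ) : ℝ := ∏ i ∈ Finset.range N, (1 - (x ^ 2) ^ (i + 1))

/-- Gaussian binomial (base `x²`) as a real number -/
noncomputable def qb (x : ℝ) (n r : ℕ) : ℝ := if r ≤ n then D x n / (D x r * D x (n - r)) else 0

variable {x : ℝ}

lemma abs_pow_lt (hx : |x| < 1) (k : ℕ) : |x ^ (k + 1)| < 1 := by
  rw [abs_pow]
  exact pow_lt_one₀ (abs_nonneg x) hx (Nat.succ_ne_zero k)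

lemma one_sub_pos (hx : |x| < 1) (k : ℕ) : 0 < 1 - x ^ (k + 1) := by
  have := abs_lt.1 (abs_pow_lt hx k); linarith [this.2]

lemma one_add_pos (hx : |x| < 1) (k : ℕ) : 0 < 1 + x ^ (k + 1) := by
  have := abs_lt.1 (abs_pow_lt hx k); linarith [this.1]

lemma hQ (hx : |x| < 1) : |x ^ 2| < 1 := by
  rw [abs_pow]; exact pow_lt_one₀ (abs_nonneg x) hx two_ne_zero

lemma D_pos (hx : |x| < 1) (N : ℕ) : 0 < D x N := by
  apply Finset.prod_pos
  intro i _
  exact one_sub_pos (x := x ^ 2) (hQ hx) i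

lemma D_le_one (hx : |x| < 1) (N : ℕ) : D x N ≤ 1 := by
  apply Finset.prod_le_one
  · intro i _; exact (one_sub_pos (x := x ^ 2) (hQ hx) i).le
  · intro i _
    have h2 : (0:ℝ) ≤ (x ^ 2) ^ (i + 1) := by positivity
    linarith

lemma D_ne (hx : |x| < 1) (N : ℕ) : D x N ≠ 0 := (D_pos hx N).ne'

lemma D_succ (N : ℕ) : D x (N + 1) = D x N * (1 - (x ^ 2) ^ (N + 1)) :=
  Finset.prod_range_succ _ _

lemma qb_zero (hx : |x| < 1) (n : ℕ) : qb x n 0 = 1 := by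
  have h0 : D x 0 = 1 := by simp [D]
  simp only [qb, if_pos (Nat.zero_le n), Nat.sub_zero, h0, one_mul]
  exact div_self (D_ne hx n)

lemma qb_self (hx : |x| < 1) (n : ℕ) : qb x n n = 1 := by
  have := D_ne hx n
  simp only [qb, if_pos (le_refl n), Nat.sub_self]
  have h0 : D x 0 = 1 := by simp [D]
  rw [h0, mul_one]
  exact div_self this

lemma qb_of_gt {n r : ℕ} (h : n < r) : qb x n r = 0 := by
  simp [qb, Nat.not_le.2 h]

lemma qb_nonneg (hx : |x| < 1) (n r : ℕ) : 0 ≤ qb x n r := by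
  unfold qb
  split
  · have := D_pos hx n
    have := D_pos hx r
    have := D_pos hx (n - r)
    positivity
  · exact le_refl 0

/-- Pascal recurrence -/
lemma qb_pascal (hx : |x| < 1) (n r : ℕ) :
    qb x (n + 1) (r + 1) = qb x n (r + 1) + (x ^ 2) ^ (n - r) * qb x n r := by
  rcases lt_trichotomy r n with h | rfl | h
  · -- main case : r + 1 ≤ n
    have hr1 : r + 1 ≤ n := h
    have e1 : n + 1 - (r + 1) = n - r := by omega
    have e2 : n - (r + 1) = n - r - 1 := by omega
    rw [qb, qb, qb, if_pos (by omega : r + 1 ≤ n + 1), if_pos hr1, if_pos (by omega : r ≤ n)]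
    rw [e1, e2]
    have hnr : n - r = (n - r - 1) + 1 := by omega
    have hDnr : D x (n - r) = D x (n - r - 1) * (1 - (x ^ 2) ^ (n - r)) := by
      rw [hnr, D_succ]; rw [← hnr]
    have hDr1 : D x (r + 1) = D x r * (1 - (x ^ 2) ^ (r + 1)) := D_succ r
    have hDn1 : D x (n + 1) = D x n * (1 - (x ^ 2) ^ (n + 1)) := D_succ n
    have hpow : (x ^ 2) ^ (n - r) * (x ^ 2) ^ (r + 1) = (x ^ 2) ^ (n + 1) := by
      rw [← pow_add]; congr 1; omega
    have h1 := D_ne hx r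
    have h4 := D_ne hx (n - r - 1)
    have h5 := D_ne hx n
    have hQr : (1 : ℝ) - (x ^ 2) ^ (r + 1) ≠ 0 := (one_sub_pos (hQ hx) r).ne'
    have hQnr : (1 : ℝ) - (x ^ 2) ^ (n - r) ≠ 0 := by
      rw [hnr]; exact (one_sub_pos (hQ hx) _).ne'
    have key : 1 - (x ^ 2) ^ (n + 1)
        = (1 - (x ^ 2) ^ (n - r)) + (x ^ 2) ^ (n - r) * (1 - (x ^ 2) ^ (r + 1)) := by
      rw [← hpow]; ring
    rw [hDn1, hDnr, hDr1, key]
    field_simp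
  · -- r = n
    rw [qb_self hx, qb_of_gt (by omega), qb_self hx]
    simp
  · -- r > n
    rw [qb_of_gt (by omega), qb_of_gt (by omega), qb_of_gt (by omega)]
    ring


/-- the finite q-binomial theorem, base `Q = x²` -/
lemma qbt (hx : |x| < 1) (w : ℝ) (n : ℕ) :
    ∏ i ∈ Finset.range n, (1 + w * (x ^ 2) ^ i)
      = ∑ r ∈ Finset.range (n + 1), qb x n r * (x ^ 2) ^ (r.choose 2) * w ^ r := by
  induction n with
  | zero => simp [qb_zero hx]
  | succ n ih =>
    rw [Finset.prod_range_succ, ih]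
    set Q := x ^ 2 with hQdef
    set g : ℕ → ℝ := fun r => qb x n r * Q ^ r.choose 2 * w ^ r with hgdef
    have hC2 : ∀ r : ℕ, (r + 1).choose 2 = r.choose 2 + r := by
      intro r
      rw [Nat.choose_two_right, Nat.choose_two_right]
      have h : (r + 1) * (r + 1 - 1) = r * (r - 1) + 2 * r := by
        cases r with
        | zero => rfl
        | succ s =>
          simp only [Nat.succ_sub_one, Nat.add_sub_cancel]
          ring
      omega
    have hterm : ∀ r ∈ Finset.range (n + 1),
        qb x (n + 1) (r + 1) * Q ^ (r + 1).choose 2 * w ^ (r + 1)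
          = g (r + 1) + g r * (Q ^ n * w) := by
      intro r hr
      have hrn : r ≤ n := Nat.lt_succ_iff.mp (Finset.mem_range.mp hr)
      have hQe : Q ^ (n - r) * Q ^ (r + 1).choose 2 = Q ^ n * Q ^ r.choose 2 := by
        rw [← pow_add, ← pow_add]
        congr 1
        rw [hC2]
        omega
      rw [qb_pascal hx]
      simp only [hgdef]
      linear_combination (qb x n r * w ^ (r + 1)) * hQe
    have hsplit : ∑ r ∈ Finset.range (n + 1 + 1), qb x (n + 1) r * Q ^ r.choose 2 * w ^ r
        = (∑ r ∈ Finset.range (n + 1), (g (r + 1) + g r * (Q ^ n * w))) + 1 := by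
      rw [Finset.sum_range_succ' (fun r => qb x (n + 1) r * Q ^ r.choose 2 * w ^ r) (n + 1)]
      congr 1
      · exact Finset.sum_congr rfl hterm
      · simp [qb_zero hx]
    rw [hsplit, Finset.sum_add_distrib, ← Finset.sum_mul]
    have hshift : ∑ r ∈ Finset.range (n + 1), g (r + 1)
        = (∑ r ∈ Finset.range (n + 1), g r) - 1 := by
      have h2 := Finset.sum_range_succ' g (n + 1)
      have h3 : ∑ r ∈ Finset.range (n + 1 + 1), g r
          = (∑ r ∈ Finset.range (n + 1), g r) + g (n + 1) := Finset.sum_range_succ g (n + 1)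
      have hg0 : g 0 = 1 := by simp [hgdef, qb_zero hx]
      have hgn1 : g (n + 1) = 0 := by simp [hgdef, qb_of_gt (Nat.lt_succ_self n)]
      rw [hgn1, add_zero] at h3
      rw [hg0] at h2
      linarith [h2, h3]
    rw [hshift]
    ring


lemma sum_odd_range (m : ℕ) : ∑ i ∈ Finset.range m, (2 * i + 1) = m ^ 2 := by
  induction m with
  | zero => simp
  | succ n ih => rw [Finset.sum_range_succ, ih]; ring

lemma two_choose_two (r : ℕ) : 2 * r.choose 2 = r * (r - 1) := by
  rw [Nat.choose_two_right]
  apply Nat.mul_div_cancel'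
  rcases Nat.even_or_odd r with h | h
  · exact Dvd.dvd.mul_right h.two_dvd _
  · rcases r with _ | s
    · simp
    · simp only [Nat.add_sub_cancel]
      rcases h with ⟨t, ht⟩
      have hs : s = 2 * t := by omega
      subst hs
      exact ⟨(2 * t + 1) * t, by ring⟩

lemma mul_pred_add (r : ℕ) : r * (r - 1) + r = r ^ 2 := by
  rcases r with _ | s
  · simp
  · simp only [Nat.add_sub_cancel]
    ring

/-- the finite Gauss identity -/
lemma gauss_finite (hx : |x| < 1) (hx0 : x ≠ 0) (m : ℕ) :
    ∑ r ∈ Finset.range (2 * m + 1),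
        (-1 : ℝ) ^ (m + r) * qb x (2 * m) r * x ^ (((r : ℤ) - (m : ℤ)).natAbs ^ 2)
      = (∏ k ∈ Finset.range m, (1 - x ^ (2 * k + 1))) ^ 2 := by
  have hxm : (x : ℝ) ^ (2 * m) ≠ 0 := pow_ne_zero _ hx0
  have h := qbt hx (-x / x ^ (2 * m)) (2 * m)
  set w : ℝ := -x / x ^ (2 * m) with hw
  -- LEFT SIDE : product
  have hfac : ∀ i : ℕ, 1 + w * (x ^ 2) ^ i = 1 - x ^ (2 * i + 1) / x ^ (2 * m) := by
    intro i
    rw [hw, ← pow_mul]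
    field_simp
    ring
  have hL : (-1 : ℝ) ^ m * x ^ (m ^ 2) * ∏ i ∈ Finset.range (2 * m), (1 + w * (x ^ 2) ^ i)
      = (∏ k ∈ Finset.range m, (1 - x ^ (2 * k + 1))) ^ 2 := by
    have hsplit : ∏ i ∈ Finset.range (2 * m), (1 + w * (x ^ 2) ^ i)
        = (∏ i ∈ Finset.range m, (1 - x ^ (2 * i + 1) / x ^ (2 * m)))
          * ∏ i ∈ Finset.range m, (1 - x ^ (2 * i + 1)) := by
      conv_lhs => rw [show 2 * m = m + m from two_mul m]
      rw [Finset.prod_range_add (fun i => 1 + w * (x ^ 2) ^ i) m m]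
      congr 1
      · exact Finset.prod_congr rfl fun i _ => hfac i
      · refine Finset.prod_congr rfl fun i _ => ?_
        rw [hfac (m + i), show 2 * (m + i) + 1 = 2 * m + (2 * i + 1) from by ring, pow_add,
          mul_div_cancel_left₀ _ hxm]
    have hblock1 : ∏ i ∈ Finset.range m, (1 - x ^ (2 * i + 1) / x ^ (2 * m))
        = ((-1 : ℝ) ^ m * (x ^ (m ^ 2) / x ^ (2 * m * m)))
          * ∏ i ∈ Finset.range m, (1 - x ^ (2 * i + 1)) := by
      have hstep : ∀ i ∈ Finset.range m, 1 - x ^ (2 * i + 1) / x ^ (2 * m)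
          = (-1 * (x ^ (2 * i + 1) / x ^ (2 * m))) * (1 - x ^ (2 * (m - 1 - i) + 1)) := by
        intro i hi
        have him : i < m := Finset.mem_range.mp hi
        have hee : x ^ (2 * i + 1) * x ^ (2 * (m - 1 - i) + 1) = x ^ (2 * m) := by
          rw [← pow_add]; congr 1; omega
        field_simp
        linear_combination -hee
      rw [Finset.prod_congr rfl hstep, Finset.prod_mul_distrib]
      congr 1
      · rw [Finset.prod_mul_distrib, Finset.prod_const, Finset.prod_div_distrib,
          Finset.prod_pow_eq_pow_sum, Finset.prod_const, sum_odd_range, ← pow_mul,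
          Finset.card_range]
        try ring_nf
      · exact Finset.prod_range_reflect (fun i => 1 - x ^ (2 * i + 1)) m
    rw [hsplit, hblock1]
    have hxx : x ^ (m ^ 2) * x ^ (m ^ 2) = x ^ (2 * m * m) := by
      rw [← pow_add]; congr 1; ring
    have hs : ((-1 : ℝ) ^ m) * ((-1 : ℝ) ^ m) = 1 := by
      rw [← pow_add, ← two_mul, pow_mul]; norm_num
    have hrearr : (-1 : ℝ) ^ m * x ^ (m ^ 2)
          * (((-1 : ℝ) ^ m * (x ^ (m ^ 2) / x ^ (2 * m * m))
              * ∏ i ∈ Finset.range m, (1 - x ^ (2 * i + 1)))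
            * ∏ i ∈ Finset.range m, (1 - x ^ (2 * i + 1)))
        = ((-1 : ℝ) ^ m * (-1 : ℝ) ^ m) * ((x ^ (m ^ 2) * x ^ (m ^ 2)) / x ^ (2 * m * m))
            * (∏ i ∈ Finset.range m, (1 - x ^ (2 * i + 1))) ^ 2 := by ring
    rw [hrearr, hs, hxx, div_self (pow_ne_zero _ hx0), one_mul, one_mul]
  -- RIGHT SIDE : sum
  have hR : (-1 : ℝ) ^ m * x ^ (m ^ 2)
        * ∑ r ∈ Finset.range (2 * m + 1), qb x (2 * m) r * (x ^ 2) ^ (r.choose 2) * w ^ r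
      = ∑ r ∈ Finset.range (2 * m + 1),
          (-1 : ℝ) ^ (m + r) * qb x (2 * m) r * x ^ (((r : ℤ) - (m : ℤ)).natAbs ^ 2) := by
    rw [Finset.mul_sum]
    refine Finset.sum_congr rfl fun r hr => ?_
    have hle : 2 * m * r ≤ m ^ 2 + r ^ 2 := two_mul_le_add_sq m r
    have hexp : m ^ 2 + r ^ 2 - 2 * m * r = ((r : ℤ) - (m : ℤ)).natAbs ^ 2 := by
      zify [hle]
      rw [sq_abs]
      ring
    have e1 : ((x : ℝ) ^ 2) ^ (r.choose 2) = x ^ (2 * r.choose 2) := by rw [← pow_mul]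
    have e2 : w ^ r = (-1 : ℝ) ^ r * (x ^ r / x ^ (2 * m * r)) := by
      rw [hw, neg_div, neg_pow, div_pow, ← pow_mul]
    have e3 : (x : ℝ) ^ (m ^ 2) * (x ^ (2 * r.choose 2) * x ^ r) = x ^ (m ^ 2 + r ^ 2) := by
      rw [← pow_add, ← pow_add]
      congr 1
      rw [two_choose_two]
      have := mul_pred_add r
      omega
    have e4 : (x : ℝ) ^ (m ^ 2 + r ^ 2) / x ^ (2 * m * r)
        = x ^ (((r : ℤ) - (m : ℤ)).natAbs ^ 2) := by
      rw [← hexp, pow_sub₀ x hx0 hle, div_eq_mul_inv]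
    rw [e1, e2, pow_add]
    rw [← e4, ← e3]
    have hxmr : (x : ℝ) ^ (2 * m * r) ≠ 0 := pow_ne_zero _ hx0
    field_simp
  rw [← hR, ← h]
  exact hL


lemma abs_log_le {y c : ℝ} (hc0 : 0 ≤ c) (hc : c < 1) (h : |y| ≤ c) :
    |Real.log (1 + y)| ≤ |y| / (1 - c) := by
  obtain ⟨hy1, hy2⟩ := abs_le.mp h
  have hpos : 0 < 1 + y := by linarith
  have h1c : 0 < 1 - c := by linarith
  rw [abs_le]
  constructor
  · have h2 : Real.log (1 + y)⁻¹ ≤ (1 + y)⁻¹ - 1 :=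
      Real.log_le_sub_one_of_pos (by positivity)
    have h3 : (1 + y)⁻¹ - 1 = -y / (1 + y) := by field_simp; ring
    have h4 : -Real.log (1 + y) ≤ -y / (1 + y) := by
      rw [← Real.log_inv]
      linarith [h2, h3]
    rcases le_or_gt 0 y with hy | hy
    · have : 0 ≤ Real.log (1 + y) := Real.log_nonneg (by linarith)
      have : 0 ≤ |y| / (1 - c) := by positivity
      linarith
    · have habs : |y| = -y := abs_of_neg hy
      have h5 : -y / (1 + y) ≤ -y / (1 - c) :=
        div_le_div_of_nonneg_left (by linarith) h1c (by linarith)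
      rw [habs]
      linarith
  · have h6 : Real.log (1 + y) ≤ y := by
      have := Real.log_le_sub_one_of_pos hpos
      linarith
    have h7 : |y| ≤ |y| / (1 - c) := by
      rw [le_div_iff₀ h1c]
      nlinarith [abs_nonneg y]
    calc Real.log (1 + y) ≤ y := h6
      _ ≤ |y| := le_abs_self y
      _ ≤ |y| / (1 - c) := h7

lemma summable_log_one_add {a : ℝ} (ha0 : 0 ≤ a) (ha : a < 1) (v : ℕ → ℝ)
    (hv : ∀ k, |v k| ≤ a ^ (k + 1)) : Summable fun k => Real.log (1 + v k) := by
  have h1c : 0 < 1 - a := by linarith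
  have hgeo : Summable fun k : ℕ => a ^ (k + 1) / (1 - a) := by
    apply Summable.div_const
    exact ((summable_geometric_of_lt_one ha0 ha).mul_left a).congr fun k => by
      rw [pow_succ']
  apply Summable.of_abs
  apply Summable.of_nonneg_of_le (fun k => abs_nonneg _) _ hgeo
  intro k
  have hak : a ^ (k + 1) ≤ a := by
    calc a ^ (k + 1) ≤ a ^ 1 := pow_le_pow_of_le_one ha0 ha.le (by omega)
      _ = a := pow_one a
  have h1 : |v k| ≤ a := le_trans (hv k) hak
  calc |Real.log (1 + v k)| ≤ |v k| / (1 - a) := abs_log_le ha0 ha h1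
    _ ≤ a ^ (k + 1) / (1 - a) := by
        gcongr
        exact hv k

lemma prod_tendsto (u : ℕ → ℝ) (hu : ∀ k, 0 < u k) (hs : Summable fun k => Real.log (u k)) :
    Filter.Tendsto (fun N => ∏ k ∈ Finset.range N, u k) Filter.atTop
      (nhds (Real.exp (∑' k, Real.log (u k)))) := by
  have h1 := hs.hasSum.tendsto_sum_nat
  have h2 := (Real.continuous_exp.tendsto _).comp h1
  refine h2.congr fun N => ?_
  rw [Function.comp_apply, Real.exp_sum]
  exact Finset.prod_congr rfl fun k _ => Real.exp_log (hu k)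


noncomputable def Ox (x : ℝ) (N : ℕ) : ℝ := ∏ k ∈ Finset.range N, (1 - x ^ (2 * k + 1))
noncomputable def Ax (x : ℝ) (N : ℕ) : ℝ := ∏ k ∈ Finset.range N, ((1 + x ^ (k + 1)) / (1 - x ^ (k + 1)))
noncomputable def P1x (x : ℝ) (N : ℕ) : ℝ := ∏ k ∈ Finset.range N, (1 - x ^ (k + 1))

lemma L1 (hx : |x| < 1) (M : ℕ) : (P1x x M) ^ 2 * Ax x M = D x M := by
  induction M with
  | zero => simp [P1x, Ax, D]
  | succ M ih =>
    have hne : (1 : ℝ) - x ^ (M + 1) ≠ 0 := (one_sub_pos hx M).ne'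
    have hsq : ((1 : ℝ) - x ^ (M + 1)) * (1 + x ^ (M + 1)) = 1 - (x ^ 2) ^ (M + 1) := by
      rw [← pow_mul]
      have : x ^ (M + 1) * x ^ (M + 1) = x ^ (2 * (M + 1)) := by
        rw [← pow_add]; congr 1; ring
      nlinarith [this]
    rw [P1x, Ax, D, Finset.prod_range_succ, Finset.prod_range_succ, Finset.prod_range_succ,
      ← P1x, ← Ax, ← D, ← ih, ← hsq]
    field_simp

lemma L2 (N : ℕ) : P1x x (2 * N) = D x N * Ox x N := by
  induction N with
  | zero => simp [P1x, D, Ox]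
  | succ N ih =>
    have h2 : 2 * (N + 1) = (2 * N) + 1 + 1 := by ring
    have e2 : (x : ℝ) ^ (2 * N + 1 + 1) = (x ^ 2) ^ (N + 1) := by
      ring
    rw [P1x, h2, Finset.prod_range_succ, Finset.prod_range_succ, ← P1x, ih, D_succ,
      show Ox x (N + 1) = Ox x N * (1 - x ^ (2 * N + 1)) from Finset.prod_range_succ _ _, e2]
    ring

lemma hfin (hx : |x| < 1) (N : ℕ) :
    D x N * (D x N * (Ox x N) ^ 2 * Ax x (2 * N)) = D x (2 * N) := by
  have h1 := L1 hx (2 * N)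
  rw [L2] at h1
  rw [← h1]
  ring


lemma summable_log_D (hx : |x| < 1) :
    Summable fun k : ℕ => Real.log (1 - (x ^ 2) ^ (k + 1)) := by
  have h := summable_log_one_add (abs_nonneg x) hx (fun k => -((x ^ 2) ^ (k + 1))) ?_
  · exact h.congr fun k => by rw [← sub_eq_add_neg]
  · intro k
    rw [abs_neg, abs_pow, abs_pow, ← pow_mul]
    exact pow_le_pow_of_le_one (abs_nonneg x) hx.le (by omega)

lemma summable_log_O (hx : |x| < 1) :
    Summable fun k : ℕ => Real.log (1 - x ^ (2 * k + 1)) := by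
  have h := summable_log_one_add (abs_nonneg x) hx (fun k => -(x ^ (2 * k + 1))) ?_
  · exact h.congr fun k => by rw [← sub_eq_add_neg]
  · intro k
    rw [abs_neg, abs_pow]
    exact pow_le_pow_of_le_one (abs_nonneg x) hx.le (by omega)

lemma summable_log_A (hx : |x| < 1) :
    Summable fun k : ℕ => Real.log ((1 + x ^ (k + 1)) / (1 - x ^ (k + 1))) := by
  have h1 : Summable fun k : ℕ => Real.log (1 + x ^ (k + 1)) := by
    apply summable_log_one_add (abs_nonneg x) hx
    intro k
    rw [abs_pow]
  have h2 : Summable fun k : ℕ => Real.log (1 - x ^ (k + 1)) := by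
    have h := summable_log_one_add (abs_nonneg x) hx (fun k => -(x ^ (k + 1))) ?_
    · exact h.congr fun k => by rw [← sub_eq_add_neg]
    · intro k
      rw [abs_neg, abs_pow]
  exact (h1.sub h2).congr fun k =>
    (Real.log_div (one_add_pos hx k).ne' (one_sub_pos hx k).ne').symm

lemma qb_le (hx : |x| < 1) {c : ℝ} (hc : 0 < c) (hcD : ∀ N, c ≤ D x N) (n r : ℕ) :
    qb x n r ≤ c⁻¹ * c⁻¹ := by
  unfold qb
  split
  · have hmul : c * c ≤ D x r * D x (n - r) :=
      mul_le_mul (hcD r) (hcD (n - r)) hc.le (D_pos hx r).le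
    calc D x n / (D x r * D x (n - r)) ≤ 1 / (c * c) :=
          div_le_div₀ zero_le_one (D_le_one hx n) (by positivity) hmul
      _ = c⁻¹ * c⁻¹ := by rw [one_div, mul_inv]
  · positivity

lemma summable_base (hx : |x| < 1) : Summable fun n : ℤ => |x| ^ (n.natAbs ^ 2) := by
  have hnat : Summable fun n : ℕ => |x| ^ (n ^ 2) := by
    apply Summable.of_nonneg_of_le (fun n => by positivity) (fun n => ?_)
      (summable_geometric_of_lt_one (abs_nonneg x) hx)
    exact pow_le_pow_of_le_one (abs_nonneg x) hx.le (Nat.le_self_pow two_ne_zero n)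
  apply Summable.of_nat_of_neg
  · exact hnat.congr fun n => by simp
  · exact hnat.congr fun n => by simp

lemma neg_one_zpow_sub (m r : ℕ) : ((-1 : ℝ)) ^ ((r : ℤ) - (m : ℤ)) = (-1 : ℝ) ^ (m + r) := by
  rw [zpow_sub₀ (by norm_num : (-1 : ℝ) ≠ 0), zpow_natCast, zpow_natCast]
  have hmm : ((-1 : ℝ) ^ m) * ((-1 : ℝ) ^ m) = 1 := by
    rw [← mul_pow]; norm_num
  rw [div_eq_mul_inv, inv_eq_of_mul_eq_one_right hmm, pow_add]
  ring

end Gauss10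

open Gauss10 Filter Real Topology in


/-- Gauss's identity: the infinite product `∏_{k ≥ 1} (1 + x^k)/(1 - x^k)` is the reciprocal
of the Jacobi theta function `θ₄(0, x) = ∑_{n ∈ ℤ} (-1)^n x^(n²)`, for real `|x| < 1`. -/
theorem stmt_10 (x : ℝ) (hx : |x| < 1) :
    (∑' n : ℤ, (-1 : ℝ) ^ n * x ^ n.natAbs ^ 2) *
      (∏' k : ℕ, (1 + x ^ (k + 1)) / (1 - x ^ (k + 1))) = 1 := by
  classical
  by_cases hx0 : x = 0
  · subst hx0
    have hsum : (∑' n : ℤ, (-1 : ℝ) ^ n * (0 : ℝ) ^ n.natAbs ^ 2) = 1 := by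
      rw [tsum_eq_single 0 ?_]
      · norm_num
      · intro n hn
        have hne : n.natAbs ^ 2 ≠ 0 := by
          have : n.natAbs ≠ 0 := fun h => hn (by omega)
          positivity
        rw [zero_pow hne, mul_zero]
    have hprod : (∏' k : ℕ, ((1 : ℝ) + 0 ^ (k + 1)) / (1 - 0 ^ (k + 1))) = 1 := by
      have : ∀ k : ℕ, ((1 : ℝ) + 0 ^ (k + 1)) / (1 - 0 ^ (k + 1)) = 1 := by
        intro k; norm_num
      rw [tprod_congr this, tprod_one]
    rw [hsum, hprod]; norm_num
  -- main case
  have hD : Tendsto (fun N => D x N) atTop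
      (𝓝 (Real.exp (∑' k : ℕ, Real.log (1 - (x ^ 2) ^ (k + 1))))) :=
    prod_tendsto _ (fun k => one_sub_pos (hQ hx) k) (summable_log_D hx)
  have hO : Tendsto (fun N => Ox x N) atTop
      (𝓝 (Real.exp (∑' k : ℕ, Real.log (1 - x ^ (2 * k + 1))))) := by
    exact prod_tendsto _ (fun k => one_sub_pos hx (2 * k)) (summable_log_O hx)
  have hA : Tendsto (fun N => Ax x N) atTop
      (𝓝 (Real.exp (∑' k : ℕ, Real.log ((1 + x ^ (k + 1)) / (1 - x ^ (k + 1)))))) :=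
    prod_tendsto _ (fun k => div_pos (one_add_pos hx k) (one_sub_pos hx k)) (summable_log_A hx)
  set PDv := Real.exp (∑' k : ℕ, Real.log (1 - (x ^ 2) ^ (k + 1))) with hPDv
  set POv := Real.exp (∑' k : ℕ, Real.log (1 - x ^ (2 * k + 1))) with hPOv
  set PAv := Real.exp (∑' k : ℕ, Real.log ((1 + x ^ (k + 1)) / (1 - x ^ (k + 1)))) with hPAv
  have hPD0 : 0 < PDv := Real.exp_pos _
  -- identify the tprod
  have htp : (∏' k : ℕ, (1 + x ^ (k + 1)) / (1 - x ^ (k + 1))) = PAv := by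
    have h := Real.rexp_tsum_eq_tprod (f := fun k : ℕ => (1 + x ^ (k + 1)) / (1 - x ^ (k + 1)))
      (fun k => div_pos (one_add_pos hx k) (one_sub_pos hx k))
      (summable_log_A hx)
    exact h.symm
  -- PDv is a lower bound for D
  have hanti : Antitone (D x) := by
    apply antitone_nat_of_succ_le
    intro n
    calc D x (n + 1) = D x n * (1 - (x ^ 2) ^ (n + 1)) := D_succ n
      _ ≤ D x n * 1 := by
          apply mul_le_mul_of_nonneg_left ?_ (D_pos hx n).le
          have : (0 : ℝ) ≤ (x ^ 2) ^ (n + 1) := by positivity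
          linarith
      _ = D x n := mul_one _
  have hPDle : ∀ N, PDv ≤ D x N := fun N =>
    le_of_tendsto hD (eventually_atTop.2 ⟨N, fun M hM => hanti hM⟩)
  have htwo : Tendsto (fun N : ℕ => 2 * N) atTop atTop :=
    tendsto_atTop_atTop.2 fun b => ⟨b, fun c hc => by omega⟩
  -- the Jacobi-type sum
  set F : ℤ → ℝ := fun n => (-1 : ℝ) ^ n * x ^ (n.natAbs ^ 2) with hF
  set Hf : ℕ → ℤ → ℝ :=
    fun m n => if n.natAbs ≤ m then F n * qb x (2 * m) ((m : ℤ) + n).toNat else 0 with hHf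
  have hHsum : ∀ m, (∑' n : ℤ, Hf m n) = (Ox x m) ^ 2 := by
    intro m
    rw [tsum_eq_sum (s := Finset.Icc (-(m : ℤ)) (m : ℤ)) ?_]
    · have hmap : Finset.Icc (-(m : ℤ)) (m : ℤ)
          = (Finset.range (2 * m + 1)).image (fun r : ℕ => (r : ℤ) - (m : ℤ)) := by
        ext n
        simp only [Finset.mem_Icc, Finset.mem_image, Finset.mem_range]
        constructor
        · intro h
          refine ⟨(n + m).toNat, ?_, ?_⟩ <;> omega
        · rintro ⟨r, h1, h2⟩
          omega
      rw [hmap, Finset.sum_image (by intro a _ b _ h; have h' : (a : ℤ) - m = (b : ℤ) - m := h; omega)]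
      have hterm : ∀ r ∈ Finset.range (2 * m + 1),
          Hf m ((r : ℤ) - m)
            = (-1 : ℝ) ^ (m + r) * qb x (2 * m) r * x ^ (((r : ℤ) - (m : ℤ)).natAbs ^ 2) := by
        intro r hr
        have hr' : r < 2 * m + 1 := Finset.mem_range.mp hr
        have hcond : ((r : ℤ) - m).natAbs ≤ m := by omega
        have htn : ((m : ℤ) + ((r : ℤ) - m)).toNat = r := by omega
        rw [hHf]
        simp only
        rw [if_pos hcond, htn, hF]
        simp only
        rw [neg_one_zpow_sub]
        ring
      rw [Finset.sum_congr rfl hterm, gauss_finite hx hx0 m, Ox]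
    · intro n hn
      simp only [Finset.mem_Icc, not_and_or, not_le] at hn
      rw [hHf]
      simp only
      rw [if_neg (by omega)]
  -- dominated convergence
  have htend : ∀ n : ℤ, Tendsto (fun m => Hf m n) atTop (𝓝 (F n * PDv⁻¹)) := by
    intro n
    have h1 : Tendsto (fun m : ℕ => D x (2 * m)) atTop (𝓝 PDv) := hD.comp htwo
    have h2 : Tendsto (fun m : ℕ => D x ((m : ℤ) + n).toNat) atTop (𝓝 PDv) :=
      hD.comp (tendsto_atTop_atTop.2 fun b => ⟨b + n.natAbs, fun c hc => by omega⟩)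
    have h3 : Tendsto (fun m : ℕ => D x ((m : ℤ) - n).toNat) atTop (𝓝 PDv) :=
      hD.comp (tendsto_atTop_atTop.2 fun b => ⟨b + n.natAbs, fun c hc => by omega⟩)
    have h4 : Tendsto
        (fun m => F n * (D x (2 * m) / (D x ((m : ℤ) + n).toNat * D x ((m : ℤ) - n).toNat)))
        atTop (𝓝 (F n * (PDv / (PDv * PDv)))) :=
      tendsto_const_nhds.mul (h1.div (h2.mul h3) (by positivity))
    have h5 : PDv / (PDv * PDv) = PDv⁻¹ := by
      field_simp
    rw [h5] at h4
    apply h4.congr'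
    filter_upwards [eventually_ge_atTop n.natAbs] with m hm
    rw [hHf]
    simp only
    rw [if_pos hm, qb, if_pos (by omega : ((m : ℤ) + n).toNat ≤ 2 * m)]
    have he : 2 * m - ((m : ℤ) + n).toNat = ((m : ℤ) - n).toNat := by omega
    rw [he]
  have hbound : ∀ m, ∀ n : ℤ, ‖Hf m n‖ ≤ |x| ^ (n.natAbs ^ 2) * (PDv⁻¹ * PDv⁻¹) := by
    intro m n
    rw [Real.norm_eq_abs, hHf]
    simp only
    split
    · have hy : ((-1 : ℝ)) ^ n * ((-1 : ℝ)) ^ n = 1 := by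
        rw [← zpow_add₀ (by norm_num : (-1 : ℝ) ≠ 0)]
        exact Even.neg_one_zpow ⟨n, rfl⟩
      have habs1 : |((-1 : ℝ)) ^ n| = 1 := by
        have h2 : |((-1 : ℝ)) ^ n| * |((-1 : ℝ)) ^ n| = 1 := by
          rw [← abs_mul, hy, abs_one]
        nlinarith [abs_nonneg (((-1 : ℝ)) ^ n)]
      rw [abs_mul, hF]
      simp only
      rw [abs_mul, habs1, one_mul, abs_pow,
        abs_of_nonneg (qb_nonneg hx (2 * m) _)]
      exact mul_le_mul_of_nonneg_left (qb_le hx hPD0 hPDle _ _) (by positivity)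
    · rw [abs_zero]
      positivity
  have hdom : Tendsto (fun m => ∑' n : ℤ, Hf m n) atTop (𝓝 (∑' n : ℤ, F n * PDv⁻¹)) :=
    tendsto_tsum_of_dominated_convergence ((summable_base hx).mul_right _) htend
      (Eventually.of_forall hbound)
  have hO2 : Tendsto (fun m => (Ox x m) ^ 2) atTop (𝓝 (POv ^ 2)) := hO.pow 2
  have hSlim : (∑' n : ℤ, F n * PDv⁻¹) = POv ^ 2 :=
    tendsto_nhds_unique (hdom.congr hHsum) hO2
  have hS : (∑' n : ℤ, F n) = POv ^ 2 * PDv := by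
    rw [tsum_mul_right] at hSlim
    rw [← hSlim]
    field_simp
  -- final assembly
  have hfinal : Tendsto (fun N => D x N * (D x N * (Ox x N) ^ 2 * Ax x (2 * N))) atTop
      (𝓝 (PDv * (PDv * POv ^ 2 * PAv))) :=
    hD.mul ((hD.mul (hO.pow 2)).mul (hA.comp htwo))
  have hD2 : Tendsto (fun N => D x (2 * N)) atTop (𝓝 PDv) := hD.comp htwo
  have hkey : PDv * (PDv * POv ^ 2 * PAv) = PDv :=
    tendsto_nhds_unique (hfinal.congr fun N => hfin hx N) hD2
  have hone : PDv * POv ^ 2 * PAv = 1 := by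
    have := mul_left_cancel₀ hPD0.ne' (hkey.trans (mul_one PDv).symm)
    exact this
  rw [htp, hS]
  linear_combination hone
end

section
/- Let s ≥ 3 be an odd integer. For every positive integer n, the sum over j from 0 to n of (the number of partitions of j into distinct parts none of which is divisible by s) times (the number of partitions of n − j into parts none of which is divisible by s) equals the number of partitions of 2n in which no part is divisible by s and every odd part occurs with even multiplicity (even parts being unrestricted). -/
open Multiset

/-- exponent of 2 -/
def v2 (i : ℕ) : ℕ := i.factorization 2
/-- odd part -/
def odp (i : ℕ) : ℕ := i / 2 ^ v2 i

lemma v2_odp (i : ℕ) (hi : i ≠ 0) : 2 ^ v2 i * odp i = i :=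
  Nat.ordProj_mul_ordCompl_eq_self i 2

lemma odp_odd (i : ℕ) (hi : i ≠ 0) : ¬ 2 ∣ odp i :=
  Nat.not_dvd_ordCompl Nat.prime_two hi

lemma v2_pow_mul (k o : ℕ) (ho : ¬ 2 ∣ o) : v2 (2 ^ k * o) = k := by
  have ho0 : o ≠ 0 := by rintro rfl; exact ho (dvd_zero 2)
  unfold v2
  rw [Nat.factorization_mul (pow_ne_zero _ two_ne_zero) ho0]
  simp [Nat.Prime.factorization_pow, Nat.factorization_eq_zero_of_not_dvd ho, Nat.Prime.factorization, Nat.prime_two]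

lemma odp_pow_mul (k o : ℕ) (ho : ¬ 2 ∣ o) : odp (2 ^ k * o) = o := by
  unfold odp
  rw [v2_pow_mul k o ho, Nat.mul_div_cancel_left _ (Nat.pow_pos two_pos)]

/-- forward map on multisets -/
def Fm (D P : Multiset ℕ) : Multiset ℕ :=
  P.map (2 * ·) + D.bind (fun i => replicate (2 * 2 ^ v2 i) (odp i))

/-- recover the distinct partition -/
def Dm (L : Multiset ℕ) : Multiset ℕ :=
  (L.toFinset.filter (fun o => ¬ 2 ∣ o)).val.bind
    (fun o => ((L.count o / 2).bitIndices.map (fun k => 2 ^ k * o) : List ℕ))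

/-- recover the unrestricted partition -/
def Pm (L : Multiset ℕ) : Multiset ℕ := (L.filter (2 ∣ ·)).map (· / 2)

/-- the weight of `D` at `o` -/
def Aw (D : Multiset ℕ) (o : ℕ) : ℕ :=
  (D.map (fun i => if odp i = o then 2 ^ v2 i else 0)).sum

lemma count_Fm_even (D P : Multiset ℕ) (hD : ∀ i ∈ D, 0 < i) (a : ℕ) :
    (Fm D P).count (2 * a) = P.count a := by
  unfold Fm
  rw [count_add, count_map_eq_count' _ _ (fun x y h => by omega)]
  have h0 : (D.bind fun i => replicate (2 * 2 ^ v2 i) (odp i)).count (2 * a) = 0 := by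
    rw [count_eq_zero]
    intro hmem
    obtain ⟨i, hi, hrep⟩ := mem_bind.1 hmem
    have := eq_of_mem_replicate hrep
    exact odp_odd i (hD i hi).ne' (this ▸ ⟨a, rfl⟩)
  rw [h0, add_zero]

lemma count_Fm_odd (D P : Multiset ℕ) (hD : ∀ i ∈ D, 0 < i) (o : ℕ) (ho : ¬ 2 ∣ o) :
    (Fm D P).count o = 2 * Aw D o := by
  unfold Fm Aw
  rw [count_add, count_eq_zero.2, zero_add, count_bind]
  · rw [← Multiset.sum_map_mul_left]
    congr 1
    refine map_congr rfl (fun i hi => ?_)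
    rw [count_replicate]
    split_ifs with h1 h2 h2 <;> simp_all [mul_ite]
  · intro hmem
    obtain ⟨p, _, rfl⟩ := mem_map.1 hmem
    exact ho ⟨p, rfl⟩

lemma sum_Fm (D P : Multiset ℕ) (hD : ∀ i ∈ D, 0 < i) :
    (Fm D P).sum = 2 * (D.sum + P.sum) := by
  unfold Fm
  rw [sum_add, Multiset.sum_bind]
  have h1 : (P.map (2 * ·)).sum = 2 * P.sum := by
    have := Multiset.sum_map_mul_left (s := P) (a := 2) (f := id)
    simpa using this
  have h2 : (D.map fun i => (replicate (2 * 2 ^ v2 i) (odp i)).sum).sum = 2 * D.sum := by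
    have : ∀ i ∈ D, (replicate (2 * 2 ^ v2 i) (odp i)).sum = 2 * i := by
      intro i hi
      rw [sum_replicate, smul_eq_mul, mul_assoc, v2_odp i (hD i hi).ne']
    rw [map_congr rfl this]
    have := Multiset.sum_map_mul_left (s := D) (a := 2) (f := id)
    simpa using this
  rw [h1, h2]; ring

lemma count_Dm (L : Multiset ℕ) (k o : ℕ) (ho : ¬ 2 ∣ o) :
    (Dm L).count (2 ^ k * o) =
      if o ∈ L ∧ k ∈ (L.count o / 2).bitIndices then 1 else 0 := by
  classical
  unfold Dm
  rw [count_bind, ← Finset.sum_eq_multiset_sum]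
  have hcong : ∀ o' ∈ L.toFinset.filter (fun o => ¬ 2 ∣ o),
      Multiset.count (2 ^ k * o)
          (((L.count o' / 2).bitIndices.map (fun k => 2 ^ k * o') : List ℕ) : Multiset ℕ) =
        if o' = o then (if k ∈ (L.count o / 2).bitIndices then 1 else 0) else 0 := by
    intro o' ho'
    have ho'odd : ¬ 2 ∣ o' := (Finset.mem_filter.1 ho').2
    rw [Multiset.coe_count]
    by_cases h : o' = o
    · subst h
      have hinj : Function.Injective (fun k : ℕ => 2 ^ k * o') := by
        intro a b hab
        have h1 := congrArg v2 hab
        rwa [v2_pow_mul _ _ ho'odd, v2_pow_mul _ _ ho'odd] at h1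
      rw [if_pos rfl]
      have hcm := List.count_map_of_injective (L.count o' / 2).bitIndices _ hinj k
      rw [hcm]
      by_cases hk : k ∈ (L.count o' / 2).bitIndices
      · rw [if_pos hk, List.count_eq_one_of_mem (Nat.bitIndices_sorted.nodup) hk]
      · rw [if_neg hk, List.count_eq_zero_of_not_mem hk]
    · rw [if_neg h, List.count_eq_zero_of_not_mem]
      intro hmem
      obtain ⟨k', _, hk'⟩ := List.mem_map.1 hmem
      have := congrArg odp hk'
      rw [odp_pow_mul _ _ ho'odd, odp_pow_mul _ _ ho] at this
      exact h this
  rw [Finset.sum_congr rfl hcong, Finset.sum_ite_eq']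
  have hiff : o ∈ L.toFinset.filter (fun o => ¬ 2 ∣ o) ↔ o ∈ L := by
    rw [Finset.mem_filter, Multiset.mem_toFinset]; exact and_iff_left ho
  simp only [hiff]
  by_cases h1 : o ∈ L <;> by_cases h2 : k ∈ (L.count o / 2).bitIndices <;> simp [h1, h2]

lemma count_Pm (L : Multiset ℕ) (a : ℕ) : (Pm L).count a = L.count (2 * a) := by
  classical
  unfold Pm
  rw [Multiset.count_map, Multiset.filter_filter, count_eq_card_filter_eq]
  congr 1
  refine Multiset.filter_congr (fun x _ => ?_)
  omega

lemma Aw_Dm (L : Multiset ℕ) (o : ℕ) (ho : ¬ 2 ∣ o) :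
    Aw (Dm L) o = L.count o / 2 := by
  classical
  unfold Aw Dm
  rw [Multiset.map_bind, Multiset.sum_bind, ← Finset.sum_eq_multiset_sum]
  have hcong : ∀ o' ∈ L.toFinset.filter (fun o => ¬ 2 ∣ o),
      ((((L.count o' / 2).bitIndices.map (fun k => 2 ^ k * o') : List ℕ) : Multiset ℕ).map
          (fun i => if odp i = o then 2 ^ v2 i else 0)).sum =
        if o' = o then L.count o / 2 else 0 := by
    intro o' ho'
    have ho'odd : ¬ 2 ∣ o' := (Finset.mem_filter.1 ho').2
    rw [Multiset.map_coe, Multiset.sum_coe, List.map_map]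
    have hmc : ∀ k ∈ (L.count o' / 2).bitIndices,
        ((fun i => if odp i = o then 2 ^ v2 i else 0) ∘ fun k => 2 ^ k * o') k =
          (fun k => if o' = o then 2 ^ k else 0) k := by
      intro k _
      simp only [Function.comp_apply, odp_pow_mul _ _ ho'odd, v2_pow_mul _ _ ho'odd]
    rw [List.map_congr_left hmc]
    by_cases h : o' = o
    · subst h
      have hfun : (fun k : ℕ => if o' = o' then 2 ^ k else 0) = (fun i : ℕ => 2 ^ i) := by
        funext k; simp
      rw [hfun, Nat.twoPowSum_bitIndices, if_pos rfl]
    · simp [h]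
  rw [Finset.sum_congr rfl hcong, Finset.sum_ite_eq']
  have hiff : o ∈ L.toFinset.filter (fun o => ¬ 2 ∣ o) ↔ o ∈ L := by
    rw [Finset.mem_filter, Multiset.mem_toFinset]; exact and_iff_left ho
  simp only [hiff]
  by_cases h1 : o ∈ L
  · rw [if_pos h1]
  · rw [if_neg h1, Multiset.count_eq_zero_of_notMem h1]
    simp

lemma odp_pos (i : ℕ) (hi : 0 < i) : 0 < odp i := Nat.ordCompl_pos 2 hi.ne'

lemma odp_dvd (i : ℕ) : odp i ∣ i := Nat.ordCompl_dvd i 2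

lemma mem_Dm {L : Multiset ℕ} {i : ℕ} (h : i ∈ Dm L) :
    ∃ o k, ¬ 2 ∣ o ∧ o ∈ L ∧ k ∈ (L.count o / 2).bitIndices ∧ i = 2 ^ k * o := by
  unfold Dm at h
  obtain ⟨o, ho, hi⟩ := mem_bind.1 h
  rw [Finset.mem_val, Finset.mem_filter, Multiset.mem_toFinset] at ho
  rw [Multiset.mem_coe, List.mem_map] at hi
  obtain ⟨k, hk, rfl⟩ := hi
  exact ⟨o, k, ho.2, ho.1, hk, rfl⟩

lemma Dm_pos {L : Multiset ℕ} (hpos : ∀ i ∈ L, 0 < i) : ∀ i ∈ Dm L, 0 < i := by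
  intro i hi
  obtain ⟨o, k, ho, hoL, _, rfl⟩ := mem_Dm hi
  exact Nat.mul_pos (Nat.pow_pos two_pos) (hpos o hoL)

lemma Fm_Gm (L : Multiset ℕ) (hpos : ∀ i ∈ L, 0 < i)
    (hev : ∀ k, ¬ 2 ∣ k → 2 ∣ L.count k) : Fm (Dm L) (Pm L) = L := by
  classical
  ext m
  by_cases hm : 2 ∣ m
  · obtain ⟨a, rfl⟩ := hm
    rw [count_Fm_even _ _ (Dm_pos hpos) a, count_Pm]
  · rw [count_Fm_odd _ _ (Dm_pos hpos) m hm, Aw_Dm L m hm,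
      Nat.mul_div_cancel' (hev m hm)]

lemma Pm_Fm (D P : Multiset ℕ) (hD : ∀ i ∈ D, 0 < i) : Pm (Fm D P) = P := by
  classical
  ext a
  rw [count_Pm, count_Fm_even _ _ hD]

lemma mem_bitIndices_Aw (D : Multiset ℕ) (hnd : D.Nodup) (hpos : ∀ i ∈ D, 0 < i)
    (o : ℕ) (ho : ¬ 2 ∣ o) (k : ℕ) :
    k ∈ (Aw D o).bitIndices ↔ 2 ^ k * o ∈ D := by
  classical
  set T : Finset ℕ := (D.toFinset.filter (fun i => odp i = o)).image v2 with hT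
  have hAw : Aw D o = ∑ k ∈ T, 2 ^ k := by
    unfold Aw
    have hDF : D.toFinset.val = D := by
      rw [Multiset.toFinset_val, Multiset.dedup_eq_self.2 hnd]
    rw [← hDF, ← Finset.sum_eq_multiset_sum]
    rw [Finset.sum_image ?hinj]
    case hinj =>
      intro a ha b hb hab
      rw [Finset.mem_coe, Finset.mem_filter] at ha hb
      have h1 := v2_odp a (hpos a (Multiset.mem_toFinset.1 ha.1)).ne'
      have h2 := v2_odp b (hpos b (Multiset.mem_toFinset.1 hb.1)).ne'
      rw [← h1, ← h2, hab, ha.2, hb.2]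
    rw [Finset.sum_filter]
  have hsum : ((T.sort (· ≤ ·)).map (fun i => 2 ^ i)).sum = Aw D o := by
    rw [hAw]
    rw [← Multiset.sum_coe, ← Multiset.map_coe, Finset.sort_eq]
    rfl
  have hbi : (Aw D o).bitIndices = T.sort (· ≤ ·) := by
    rw [← hsum, Nat.bitIndices_twoPowsum (Finset.sortedLT_sort T)]
  rw [hbi, Finset.mem_sort, hT, Finset.mem_image]
  constructor
  · rintro ⟨i, hi, rfl⟩
    rw [Finset.mem_filter, Multiset.mem_toFinset] at hi
    rw [← hi.2, v2_odp i (hpos i hi.1).ne']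
    exact hi.1
  · intro hmem
    refine ⟨2 ^ k * o, ?_, v2_pow_mul k o ho⟩
    rw [Finset.mem_filter, Multiset.mem_toFinset]
    exact ⟨hmem, odp_pow_mul k o ho⟩

lemma Dm_Fm (D P : Multiset ℕ) (hnd : D.Nodup) (hDpos : ∀ i ∈ D, 0 < i) :
    Dm (Fm D P) = D := by
  classical
  ext i
  rcases Nat.eq_zero_or_pos i with rfl | hi
  · rw [Multiset.count_eq_zero_of_notMem, Multiset.count_eq_zero_of_notMem]
    · intro h; exact absurd (hDpos 0 h) (lt_irrefl 0)
    · intro h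
      obtain ⟨o, k, ho, hoL, _, h0⟩ := mem_Dm h
      have : (0:ℕ) < 2 ^ k * o := by
        have : 0 < o := by
          rcases Nat.eq_zero_or_pos o with rfl | h'
          · exact absurd (dvd_zero 2) ho
          · exact h'
        positivity
      omega
  · have hdec := v2_odp i hi.ne'
    have hodd := odp_odd i hi.ne'
    rw [← hdec, count_Dm _ _ _ hodd, count_Fm_odd _ _ hDpos _ hodd,
      Nat.mul_div_cancel_left _ two_pos]
    simp only [mem_bitIndices_Aw D hnd hDpos _ hodd]
    by_cases hmem : 2 ^ v2 i * odp i ∈ D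
    · have hoFm : odp i ∈ Fm D P := by
        have hbit := (mem_bitIndices_Aw D hnd hDpos _ hodd (v2 i)).2 hmem
        have hk := Nat.two_pow_le_of_mem_bitIndices hbit
        rw [← Multiset.count_pos, count_Fm_odd _ _ hDpos _ hodd]
        have : 0 < 2 ^ v2 i := Nat.pow_pos two_pos
        omega
      rw [if_pos ⟨hoFm, hmem⟩, Multiset.count_eq_one_of_mem hnd hmem]
    · rw [if_neg, Multiset.count_eq_zero_of_notMem hmem]
      rintro ⟨_, h2⟩
      exact hmem h2

section Props

variable {s : ℕ} (hodd : Odd s)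

lemma Fm_pos {D P : Multiset ℕ} (hD : ∀ i ∈ D, 0 < i) (hP : ∀ i ∈ P, 0 < i) :
    ∀ m ∈ Fm D P, 0 < m := by
  intro m hm
  rcases Multiset.mem_add.1 hm with h | h
  · obtain ⟨p, hp, rfl⟩ := mem_map.1 h
    have := hP p hp; omega
  · obtain ⟨i, hi, hrep⟩ := mem_bind.1 h
    have := eq_of_mem_replicate hrep
    subst this
    exact odp_pos i (hD i hi)

include hodd in
lemma Fm_not_dvd {D P : Multiset ℕ} (hD : ∀ i ∈ D, ¬ s ∣ i) (hP : ∀ i ∈ P, ¬ s ∣ i) :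
    ∀ m ∈ Fm D P, ¬ s ∣ m := by
  have hcop : Nat.Coprime s 2 := hodd.coprime_two_right
  intro m hm hdvd
  rcases Multiset.mem_add.1 hm with h | h
  · obtain ⟨p, hp, rfl⟩ := mem_map.1 h
    exact hP p hp (hcop.dvd_of_dvd_mul_left (by rw [mul_comm] at hdvd ⊢; exact hdvd))
  · obtain ⟨i, hi, hrep⟩ := mem_bind.1 h
    have := eq_of_mem_replicate hrep
    subst this
    exact hD i hi (hdvd.trans (odp_dvd i))

lemma Fm_odd_even {D P : Multiset ℕ} (hD : ∀ i ∈ D, 0 < i) :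
    ∀ k, Odd k → Even ((Fm D P).count k) := by
  intro k hk
  have : ¬ 2 ∣ k := by
    rw [Nat.odd_iff] at hk; omega
  rw [count_Fm_odd _ _ hD _ this]
  exact even_two_mul _

include hodd in
lemma Dm_not_dvd {L : Multiset ℕ} (hL : ∀ i ∈ L, ¬ s ∣ i) : ∀ i ∈ Dm L, ¬ s ∣ i := by
  have hcop : Nat.Coprime s 2 := hodd.coprime_two_right
  intro i hi hdvd
  obtain ⟨o, k, ho, hoL, _, rfl⟩ := mem_Dm hi
  refine hL o hoL ((hcop.pow_right k).dvd_of_dvd_mul_left ?_)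
  rw [mul_comm] at hdvd ⊢
  exact hdvd

lemma Pm_pos {L : Multiset ℕ} (hpos : ∀ i ∈ L, 0 < i) : ∀ a ∈ Pm L, 0 < a := by
  intro a ha
  obtain ⟨x, hx, rfl⟩ := mem_map.1 ha
  have h2 := Multiset.of_mem_filter hx
  have := hpos x (Multiset.mem_of_mem_filter hx)
  omega

include hodd in
lemma Pm_not_dvd {L : Multiset ℕ} (hL : ∀ i ∈ L, ¬ s ∣ i) : ∀ a ∈ Pm L, ¬ s ∣ a := by
  intro a ha hdvd
  obtain ⟨x, hx, rfl⟩ := mem_map.1 ha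
  have h2 : 2 ∣ x := Multiset.of_mem_filter hx
  refine hL x (Multiset.mem_of_mem_filter hx) ?_
  obtain ⟨y, rfl⟩ := h2
  rw [Nat.mul_div_cancel_left _ two_pos] at hdvd
  exact Dvd.dvd.mul_left hdvd 2

lemma Dm_nodup (L : Multiset ℕ) : (Dm L).Nodup := by
  classical
  rw [Multiset.nodup_iff_count_le_one]
  intro i
  rcases Nat.eq_zero_or_pos i with rfl | hi
  · rw [Multiset.count_eq_zero_of_notMem]
    · omega
    · intro h
      obtain ⟨o, k, ho, hoL, _, h0⟩ := mem_Dm h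
      have : o ≠ 0 := by rintro rfl; exact ho (dvd_zero 2)
      have : (0:ℕ) < 2 ^ k * o := Nat.mul_pos (Nat.pow_pos two_pos) (by omega)
      omega
  · have hdec := v2_odp i hi.ne'
    have hodd' := odp_odd i hi.ne'
    rw [← hdec, count_Dm _ _ _ hodd']
    split_ifs <;> omega

end Props

lemma natCard_sigma {m : ℕ} (f : Fin m → Type*) [∀ i, Finite (f i)] :
    Nat.card ((i : Fin m) × f i) = ∑ i : Fin m, Nat.card (f i) := by
  classical
  letI : ∀ i, Fintype (f i) := fun i => Fintype.ofFinite _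
  rw [Nat.card_eq_fintype_card, Fintype.card_sigma]
  exact Finset.sum_congr rfl (fun i _ => (Nat.card_eq_fintype_card).symm)

/-- For odd `s ≥ 3`, the convolution of the number of partitions into distinct parts prime to
`s` with the number of partitions into parts prime to `s` equals the number of partitions of
`2n` with no part divisible by `s` and every odd part occurring with even multiplicity. -/
theorem stmt_11 (s : ℕ) (hs : 3 ≤ s) (hodd : Odd s) (n : ℕ) (hn : 0 < n) :
    (∑ j ∈ Finset.range (n + 1),
        Nat.card {p : j.Partition // (∀ i, p.parts.count i ≤ 1) ∧ ∀ i ∈ p.parts, ¬ s ∣ i} *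
          Nat.card {p : (n - j).Partition // ∀ i ∈ p.parts, ¬ s ∣ i}) =
      Nat.card {p : (2 * n).Partition //
        (∀ i ∈ p.parts, ¬ s ∣ i) ∧ ∀ k, Odd k → Even (p.parts.count k)} := by
  classical
  rw [Finset.sum_range
    (fun j => Nat.card {p : j.Partition // (∀ i, p.parts.count i ≤ 1) ∧ ∀ i ∈ p.parts, ¬ s ∣ i} *
      Nat.card {p : (n - j).Partition // ∀ i ∈ p.parts, ¬ s ∣ i})]
  have hstep : ∀ j : Fin (n + 1),
      Nat.card {p : (j : ℕ).Partition // (∀ i, p.parts.count i ≤ 1) ∧ ∀ i ∈ p.parts, ¬ s ∣ i} *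
        Nat.card {p : (n - (j : ℕ)).Partition // ∀ i ∈ p.parts, ¬ s ∣ i} =
      Nat.card ({p : (j : ℕ).Partition // (∀ i, p.parts.count i ≤ 1) ∧ ∀ i ∈ p.parts, ¬ s ∣ i} ×
        {p : (n - (j : ℕ)).Partition // ∀ i ∈ p.parts, ¬ s ∣ i}) := by
    intro j
    rw [Nat.card_prod]
  rw [Finset.sum_congr rfl (fun j _ => hstep j), ← natCard_sigma]
  refine Nat.card_eq_of_bijective (fun x =>
    ⟨⟨Fm x.2.1.1.parts x.2.2.1.parts,
      fun hi => Fm_pos (fun i hi => x.2.1.1.parts_pos hi)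
        (fun i hi => x.2.2.1.parts_pos hi) _ hi,
      by
        rw [sum_Fm _ _ (fun i hi => x.2.1.1.parts_pos hi), x.2.1.1.parts_sum,
          x.2.2.1.parts_sum]
        have := x.1.isLt
        omega⟩,
     Fm_not_dvd hodd x.2.1.2.2 x.2.2.2,
     Fm_odd_even (fun i hi => x.2.1.1.parts_pos hi)⟩) ⟨?_, ?_⟩
  -- injectivity
  · rintro ⟨⟨j1, hj1⟩, ⟨D1, hD1⟩, ⟨P1, hP1⟩⟩ ⟨⟨j2, hj2⟩, ⟨D2, hD2⟩, ⟨P2, hP2⟩⟩ heq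
    have hpr : Fm D1.parts P1.parts = Fm D2.parts P2.parts :=
      congrArg (fun z => z.1.parts) heq
    have hnd1 : D1.parts.Nodup := Multiset.nodup_iff_count_le_one.2 hD1.1
    have hnd2 : D2.parts.Nodup := Multiset.nodup_iff_count_le_one.2 hD2.1
    have hDeq : D1.parts = D2.parts := by
      have h1 := Dm_Fm D1.parts P1.parts hnd1 (fun i hi => D1.parts_pos hi)
      have h2 := Dm_Fm D2.parts P2.parts hnd2 (fun i hi => D2.parts_pos hi)
      rw [← h1, ← h2, hpr]
    have hPeq : P1.parts = P2.parts := by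
      have h1 := Pm_Fm D1.parts P1.parts (fun i hi => D1.parts_pos hi)
      have h2 := Pm_Fm D2.parts P2.parts (fun i hi => D2.parts_pos hi)
      rw [← h1, ← h2, hpr]
    have hj : j1 = j2 := by
      have t1 : D2.parts.sum = j1 := by rw [← hDeq]; exact D1.parts_sum
      have t2 : D2.parts.sum = j2 := D2.parts_sum
      omega
    subst hj
    refine Sigma.ext rfl (heq_of_eq ?_)
    have : hj1 = hj2 := rfl
    subst this
    exact Prod.ext (Subtype.ext (Nat.Partition.ext hDeq)) (Subtype.ext (Nat.Partition.ext hPeq))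
  -- surjectivity
  · rintro ⟨lam, hlam1, hlam2⟩
    have hev : ∀ k, ¬ 2 ∣ k → 2 ∣ lam.parts.count k := by
      intro k hk
      have hodd' : Odd k := by rw [Nat.odd_iff]; omega
      exact (hlam2 k hodd').two_dvd
    have hFG : Fm (Dm lam.parts) (Pm lam.parts) = lam.parts :=
      Fm_Gm lam.parts (fun i hi => lam.parts_pos hi) hev
    have hsum : 2 * ((Dm lam.parts).sum + (Pm lam.parts).sum) = 2 * n := by
      rw [← sum_Fm _ _ (Dm_pos (fun i hi => lam.parts_pos hi)), hFG, lam.parts_sum]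
    refine ⟨⟨⟨(Dm lam.parts).sum, by omega⟩,
      ⟨⟨⟨Dm lam.parts, fun hi => Dm_pos (fun i hi => lam.parts_pos hi) _ hi, rfl⟩,
        Multiset.nodup_iff_count_le_one.1 (Dm_nodup lam.parts),
        Dm_not_dvd hodd (fun i hi => hlam1 i hi)⟩,
       ⟨⟨Pm lam.parts, fun hi => Pm_pos (fun i hi => lam.parts_pos hi) _ hi,
          by show (Pm lam.parts).sum = n - (Dm lam.parts).sum; omega⟩,
        Pm_not_dvd hodd (fun i hi => hlam1 i hi)⟩⟩⟩, ?_⟩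
    exact Subtype.ext (Nat.Partition.ext hFG)
end

section
/- For every integer s ≥ 1 and every real number x with |x| < 1, ∏_{k=1}^∞ [(1 + x^k)(1 − x^(sk))] / [(1 − x^k)(1 + x^(sk))] = ∏_{k=1}^∞ [(1 − x^(sk))(1 − x^(s(2k−1)))] / [(1 − x^k)(1 − x^(2k−1))]. -/
open Real

section aux12
variable {x : ℝ}

lemma aux_log_bound {y a : ℝ} (ha : a < 1) (hy : |y| ≤ a) :
    |Real.log (1 + y)| ≤ |y| / (1 - a) := by
  have ha0 : 0 ≤ a := le_trans (abs_nonneg y) hy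
  have h1a : 0 < 1 - a := by linarith
  have hyl : -a ≤ y := neg_le_of_abs_le hy
  have hyu : y ≤ a := le_of_abs_le hy
  have hpos : 0 < 1 + y := by linarith
  have hup : Real.log (1 + y) ≤ y := by
    have := Real.log_le_sub_one_of_pos hpos; linarith
  have hlow : 1 - (1 + y)⁻¹ ≤ Real.log (1 + y) := Real.one_sub_inv_le_log_of_pos hpos
  have habs : 0 ≤ |y| := abs_nonneg y
  have hyle : y ≤ |y| := le_abs_self y
  have hyge : -|y| ≤ y := neg_abs_le y
  rw [abs_le]
  constructor
  · have h1 : 1 - (1 + y)⁻¹ = y / (1 + y) := by field_simp; ring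
    have h2 : y / (1 + y) ≥ -(|y| / (1 - a)) := by
      rw [ge_iff_le, neg_le, ← neg_div]
      rw [div_le_div_iff₀ hpos h1a]
      nlinarith
    linarith [hlow, h1 ▸ hlow]
  · calc Real.log (1 + y) ≤ y := hup
      _ ≤ |y| := hyle
      _ ≤ |y| / (1 - a) := by
          rw [le_div_iff₀ h1a]; nlinarith

lemma aux_summable (hx : |x| < 1) (c : ℝ) (hc : |c| = 1) (e : ℕ → ℕ)
    (he : ∀ k, k + 1 ≤ e k) :
    Summable (fun k : ℕ => Real.log (1 + c * x ^ (e k))) := by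
  have ha0 : 0 ≤ |x| := abs_nonneg x
  apply Summable.of_norm
  have hbase : Summable (fun k : ℕ => |x| ^ (k + 1) / (1 - |x|)) := by
    apply Summable.div_const
    simpa [pow_succ] using (summable_geometric_of_lt_one ha0 hx).mul_right |x|
  apply Summable.of_nonneg_of_le (fun k => norm_nonneg _) _ hbase
  intro k
  have hyb : |c * x ^ (e k)| ≤ |x| ^ (k + 1) := by
    rw [abs_mul, hc, one_mul, abs_pow]
    exact pow_le_pow_of_le_one ha0 hx.le (he k)
  have h1 : |x| ^ (k + 1) ≤ |x| := by
    simpa using pow_le_pow_of_le_one ha0 hx.le (Nat.one_le_iff_ne_zero.mpr (Nat.succ_ne_zero k))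
  have := aux_log_bound hx (hyb.trans h1)
  calc ‖Real.log (1 + c * x ^ (e k))‖ = |Real.log (1 + c * x ^ (e k))| := rfl
    _ ≤ |c * x ^ (e k)| / (1 - |x|) := this
    _ ≤ |x| ^ (k + 1) / (1 - |x|) := by
        have h1x : 0 < 1 - |x| := by linarith
        exact div_le_div_of_nonneg_right hyb h1x.le

lemma aux_sum_p (hx : |x| < 1) (e : ℕ → ℕ) (he : ∀ k, k + 1 ≤ e k) :
    Summable (fun k : ℕ => Real.log (1 + x ^ (e k))) := by
  simpa using aux_summable hx 1 (abs_one) e he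

lemma aux_sum_m (hx : |x| < 1) (e : ℕ → ℕ) (he : ∀ k, k + 1 ≤ e k) :
    Summable (fun k : ℕ => Real.log (1 - x ^ (e k))) := by
  have := aux_summable hx (-1) (by simp) e he
  simpa [sub_eq_add_neg, neg_one_mul] using this

lemma aux_abs_lt (hx : |x| < 1) {n : ℕ} (hn : 1 ≤ n) : |x ^ n| < 1 := by
  rw [abs_pow]
  calc |x| ^ n ≤ |x| ^ 1 := pow_le_pow_of_le_one (abs_nonneg x) hx.le hn
    _ < 1 := by simpa using hx

lemma aux_pos_p (hx : |x| < 1) {n : ℕ} (hn : 1 ≤ n) : 0 < 1 + x ^ n := by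
  have := abs_lt.mp (aux_abs_lt hx hn); linarith [this.1]

lemma aux_pos_m (hx : |x| < 1) {n : ℕ} (hn : 1 ≤ n) : 0 < 1 - x ^ n := by
  have := abs_lt.mp (aux_abs_lt hx hn); linarith [this.2]

lemma aux_tprod_exp (f : ℕ → ℝ) (hpos : ∀ k, 0 < f k)
    (hs : Summable fun k => Real.log (f k)) :
    (∏' k, f k) = Real.exp (∑' k, Real.log (f k)) := by
  exact (Real.rexp_tsum_eq_tprod hpos hs).symm

-- (I): ∑ log(1+x^{t(k+1)}) + ∑ log(1-x^{t(k+1)}) = ∑ log(1-x^{2t(k+1)})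
lemma aux_I (hx : |x| < 1) (t : ℕ) (ht : 1 ≤ t) :
    (∑' k : ℕ, Real.log (1 + x ^ (t * (k + 1)))) +
      (∑' k : ℕ, Real.log (1 - x ^ (t * (k + 1)))) =
    ∑' k : ℕ, Real.log (1 - x ^ (2 * t * (k + 1))) := by
  have het : ∀ k : ℕ, k + 1 ≤ t * (k + 1) := fun k => Nat.le_mul_of_pos_left _ ht
  have hp := aux_sum_p hx (fun k => t * (k + 1)) het
  have hm := aux_sum_m hx (fun k => t * (k + 1)) het
  rw [← Summable.tsum_add hp hm]
  apply tsum_congr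
  intro k
  have hpk : (0:ℝ) < 1 + x ^ (t * (k + 1)) := aux_pos_p hx (le_trans (Nat.le_add_left 1 k) (het k))
  have hmk : (0:ℝ) < 1 - x ^ (t * (k + 1)) := aux_pos_m hx (le_trans (Nat.le_add_left 1 k) (het k))
  rw [← Real.log_mul hpk.ne' hmk.ne']
  congr 1
  have : x ^ (2 * t * (k + 1)) = (x ^ (t * (k + 1))) ^ 2 := by
    rw [← pow_mul]; ring_nf
  rw [this]; ring

-- (II): ∑ log(1-x^{t(2k+1)}) + ∑ log(1-x^{2t(k+1)}) = ∑ log(1-x^{t(k+1)})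
lemma aux_II (hx : |x| < 1) (t : ℕ) (ht : 1 ≤ t) :
    (∑' k : ℕ, Real.log (1 - x ^ (t * (2 * k + 1)))) +
      (∑' k : ℕ, Real.log (1 - x ^ (2 * t * (k + 1)))) =
    ∑' k : ℕ, Real.log (1 - x ^ (t * (k + 1))) := by
  have he : Summable (fun k : ℕ => Real.log (1 - x ^ (t * (2 * k + 1)))) :=
    aux_sum_m hx _ (fun k => by nlinarith [Nat.le_mul_of_pos_left (2 * k + 1) ht])
  have ho : Summable (fun k : ℕ => Real.log (1 - x ^ (t * (2 * k + 1 + 1)))) :=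
    aux_sum_m hx _ (fun k => by nlinarith [Nat.le_mul_of_pos_left (2 * k + 2) ht])
  have := tsum_even_add_odd (f := fun k : ℕ => Real.log (1 - x ^ (t * (k + 1)))) he ho
  rw [← this]
  congr 1
  apply tsum_congr
  intro k
  congr 2
  ring

-- T: ∑ log(1-x^{t(2k+1)}) = - ∑ log(1+x^{t(k+1)})
lemma aux_T (hx : |x| < 1) (t : ℕ) (ht : 1 ≤ t) :
    (∑' k : ℕ, Real.log (1 - x ^ (t * (2 * k + 1)))) =
      - ∑' k : ℕ, Real.log (1 + x ^ (t * (k + 1))) := by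
  have h1 := aux_I hx t ht
  have h2 := aux_II hx t ht
  linarith

end aux12

/-- For `s ≥ 1` and real `|x| < 1`,
`∏_{k ≥ 1} (1 + x^k)(1 - x^{sk}) / ((1 - x^k)(1 + x^{sk}))`
equals
`∏_{k ≥ 1} (1 - x^{sk})(1 - x^{s(2k-1)}) / ((1 - x^k)(1 - x^{2k-1}))`. -/
theorem stmt_12 (s : ℕ) (hs : 1 ≤ s) (x : ℝ) (hx : |x| < 1) :
    (∏' k : ℕ, ((1 + x ^ (k + 1)) * (1 - x ^ (s * (k + 1)))) /
        ((1 - x ^ (k + 1)) * (1 + x ^ (s * (k + 1))))) =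
      ∏' k : ℕ, ((1 - x ^ (s * (k + 1))) * (1 - x ^ (s * (2 * k + 1)))) /
        ((1 - x ^ (k + 1)) * (1 - x ^ (2 * k + 1))) := by
  have hes : ∀ k : ℕ, k + 1 ≤ s * (k + 1) := fun k => Nat.le_mul_of_pos_left _ hs
  have he1 : ∀ k : ℕ, k + 1 ≤ k + 1 := fun k => le_rfl
  have heo1 : ∀ k : ℕ, k + 1 ≤ 2 * k + 1 := fun k => by omega
  have heos : ∀ k : ℕ, k + 1 ≤ s * (2 * k + 1) := fun k => by
    nlinarith [Nat.le_mul_of_pos_left (2 * k + 1) hs]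
  -- positivity helpers
  have hn1 : ∀ k : ℕ, 1 ≤ k + 1 := fun k => Nat.le_add_left 1 k
  have hns : ∀ k : ℕ, 1 ≤ s * (k + 1) := fun k => le_trans (hn1 k) (hes k)
  have hno1 : ∀ k : ℕ, 1 ≤ 2 * k + 1 := fun k => by omega
  have hnos : ∀ k : ℕ, 1 ≤ s * (2 * k + 1) := fun k => le_trans (hn1 k) (heos k)
  -- summabilities
  have Sp1 := aux_sum_p hx (fun k => k + 1) he1
  have Sm1 := aux_sum_m hx (fun k => k + 1) he1
  have Sps := aux_sum_p hx (fun k => s * (k + 1)) hes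
  have Sms := aux_sum_m hx (fun k => s * (k + 1)) hes
  have So1 := aux_sum_m hx (fun k => 2 * k + 1) heo1
  have Sos := aux_sum_m hx (fun k => s * (2 * k + 1)) heos
  -- LHS
  have hFpos : ∀ k : ℕ, 0 < ((1 + x ^ (k + 1)) * (1 - x ^ (s * (k + 1)))) /
      ((1 - x ^ (k + 1)) * (1 + x ^ (s * (k + 1)))) := fun k =>
    div_pos (mul_pos (aux_pos_p hx (hn1 k)) (aux_pos_m hx (hns k)))
      (mul_pos (aux_pos_m hx (hn1 k)) (aux_pos_p hx (hns k)))
  have hGpos : ∀ k : ℕ, 0 < ((1 - x ^ (s * (k + 1))) * (1 - x ^ (s * (2 * k + 1)))) /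
      ((1 - x ^ (k + 1)) * (1 - x ^ (2 * k + 1))) := fun k =>
    div_pos (mul_pos (aux_pos_m hx (hns k)) (aux_pos_m hx (hnos k)))
      (mul_pos (aux_pos_m hx (hn1 k)) (aux_pos_m hx (hno1 k)))
  have hlogF : (fun k : ℕ => Real.log (((1 + x ^ (k + 1)) * (1 - x ^ (s * (k + 1)))) /
      ((1 - x ^ (k + 1)) * (1 + x ^ (s * (k + 1)))))) =
      fun k : ℕ => (Real.log (1 + x ^ (k + 1)) + Real.log (1 - x ^ (s * (k + 1)))) -
        (Real.log (1 - x ^ (k + 1)) + Real.log (1 + x ^ (s * (k + 1)))) := by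
    funext k
    have h1 := (aux_pos_p hx (hn1 k)).ne'
    have h2 := (aux_pos_m hx (hns k)).ne'
    have h3 := (aux_pos_m hx (hn1 k)).ne'
    have h4 := (aux_pos_p hx (hns k)).ne'
    rw [Real.log_div (mul_ne_zero h1 h2) (mul_ne_zero h3 h4),
      Real.log_mul h1 h2, Real.log_mul h3 h4]
  have hlogG : (fun k : ℕ => Real.log (((1 - x ^ (s * (k + 1))) * (1 - x ^ (s * (2 * k + 1)))) /
      ((1 - x ^ (k + 1)) * (1 - x ^ (2 * k + 1))))) =
      fun k : ℕ => (Real.log (1 - x ^ (s * (k + 1))) + Real.log (1 - x ^ (s * (2 * k + 1)))) -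
        (Real.log (1 - x ^ (k + 1)) + Real.log (1 - x ^ (2 * k + 1))) := by
    funext k
    have h1 := (aux_pos_m hx (hns k)).ne'
    have h2 := (aux_pos_m hx (hnos k)).ne'
    have h3 := (aux_pos_m hx (hn1 k)).ne'
    have h4 := (aux_pos_m hx (hno1 k)).ne'
    rw [Real.log_div (mul_ne_zero h1 h2) (mul_ne_zero h3 h4),
      Real.log_mul h1 h2, Real.log_mul h3 h4]
  have hSF : Summable (fun k : ℕ => Real.log (((1 + x ^ (k + 1)) * (1 - x ^ (s * (k + 1)))) /
      ((1 - x ^ (k + 1)) * (1 + x ^ (s * (k + 1)))))) := by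
    rw [hlogF]; exact (Sp1.add Sms).sub (Sm1.add Sps)
  have hSG : Summable (fun k : ℕ => Real.log (((1 - x ^ (s * (k + 1))) * (1 - x ^ (s * (2 * k + 1)))) /
      ((1 - x ^ (k + 1)) * (1 - x ^ (2 * k + 1))))) := by
    rw [hlogG]; exact (Sms.add Sos).sub (Sm1.add So1)
  rw [aux_tprod_exp _ hFpos hSF, aux_tprod_exp _ hGpos hSG]
  congr 1
  rw [hlogF, hlogG, Summable.tsum_sub (Sp1.add Sms) (Sm1.add Sps), Summable.tsum_sub (Sms.add Sos) (Sm1.add So1),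
    Summable.tsum_add Sp1 Sms, Summable.tsum_add Sm1 Sps, Summable.tsum_add Sms Sos, Summable.tsum_add Sm1 So1]
  have hT1 : (∑' k : ℕ, Real.log (1 - x ^ (2 * k + 1))) =
      - ∑' k : ℕ, Real.log (1 + x ^ (k + 1)) := by
    have := aux_T hx 1 le_rfl
    simpa [one_mul] using this
  have hTs : (∑' k : ℕ, Real.log (1 - x ^ (s * (2 * k + 1)))) =
      - ∑' k : ℕ, Real.log (1 + x ^ (s * (k + 1))) := aux_T hx s hs
  rw [hT1, hTs]
  ring
end

section
/- For every complex number t with Re t > 1, ∑_{n=1}^∞ 2^(ω(n)) · n^(−t) = ζ(t)² / ζ(2t), where ω(n) is the number of distinct prime factors of n (with ω(1) = 0) and ζ denotes the Riemann zeta function. -/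
open scoped LSeries.notation
open Complex LSeries Nat ArithmeticFunction
open scoped ArithmeticFunction.Moebius ArithmeticFunction.zeta

noncomputable def gg : ℕ → ℂ := fun n => if IsSquare n then ((μ n.sqrt : ℤ) : ℂ) else 0

lemma sq_dvd_imp_dvd {a b k : ℕ} (ha : Squarefree a) (hb : b ≠ 0) (hk : k ≠ 0)
    (h : k ^ 2 ∣ b ^ 2 * a) : k ∣ b := by
  have ha0 : a ≠ 0 := ha.ne_zero
  rw [← Nat.factorization_le_iff_dvd hk hb]
  intro p
  have := (Nat.factorization_le_iff_dvd (pow_ne_zero 2 hk) (mul_ne_zero (pow_ne_zero 2 hb) ha0)).mpr h p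
  rw [Nat.factorization_mul (pow_ne_zero 2 hb) ha0, Nat.factorization_pow, Nat.factorization_pow] at this
  have h1 := ha.natFactorization_le_one p
  simp only [Finsupp.coe_smul, Finsupp.coe_add, Pi.smul_apply, Pi.add_apply, smul_eq_mul] at this
  omega

lemma lemA {n : ℕ} (hn : n ≠ 0) : ∑ d ∈ n.divisors, gg d = ((μ n : ℤ) : ℂ) ^ 2 := by
  obtain ⟨a, b, hab, ha⟩ := Nat.sq_mul_squarefree n
  have hb : b ≠ 0 := by rintro rfl; simp at hab; omega
  have key : ∑ d ∈ n.divisors, gg d = ∑ k ∈ b.divisors, ((μ k : ℤ) : ℂ) := by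
    rw [← Finset.sum_filter_add_sum_filter_not n.divisors IsSquare gg]
    have h2 : ∑ d ∈ n.divisors with ¬ IsSquare d, gg d = 0 := by
      apply Finset.sum_eq_zero
      intro d hd
      simp only [Finset.mem_filter] at hd
      simp [gg, hd.2]
    rw [h2, add_zero]
    apply Finset.sum_nbij' (fun d => d.sqrt) (fun k => k ^ 2)
    · intro d hd
      simp only [Finset.mem_filter, Nat.mem_divisors] at hd
      obtain ⟨⟨hdvd, -⟩, r, hr⟩ := hd
      have hd0 : d ≠ 0 := by rintro rfl; exact hn (Nat.eq_zero_of_zero_dvd hdvd)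
      have hr0 : r ≠ 0 := by rintro rfl; simp at hr; exact hd0 hr
      have hsq : d.sqrt = r := by rw [hr, Nat.sqrt_eq]
      rw [Nat.mem_divisors]
      refine ⟨?_, hb⟩
      rw [hsq]
      apply sq_dvd_imp_dvd ha hb hr0
      rw [← hab] at hdvd
      calc r ^ 2 = d := by rw [hr]; ring
        _ ∣ b ^ 2 * a := hdvd
    · intro k hk
      rw [Nat.mem_divisors] at hk
      simp only [Finset.mem_filter, Nat.mem_divisors]
      exact ⟨⟨by rw [← hab]; exact Dvd.dvd.mul_right (pow_dvd_pow_of_dvd hk.1 2) a, hn⟩,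
        ⟨k, by ring⟩⟩
    · intro d hd
      simp only [Finset.mem_filter] at hd
      obtain ⟨-, r, hr⟩ := hd
      rw [hr, Nat.sqrt_eq]; ring
    · intro k hk
      rw [Nat.sqrt_eq' k]
    · intro d hd
      simp only [Finset.mem_filter] at hd
      simp [gg, hd.2]
  have hsum : ∑ k ∈ b.divisors, (μ k : ℤ) = if b = 1 then 1 else 0 := by
    have h : ((μ * (ζ : ArithmeticFunction ℤ)) b) = (1 : ArithmeticFunction ℤ) b := by
      rw [ArithmeticFunction.moebius_mul_coe_zeta]
    rwa [ArithmeticFunction.coe_mul_zeta_apply, ArithmeticFunction.one_apply] at h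
  have hmu : (μ n : ℤ) ^ 2 = if b = 1 then 1 else 0 := by
    by_cases hb1 : b = 1
    · subst hb1
      simp only [if_pos rfl]
      rw [← hab]
      simpa using ArithmeticFunction.moebius_sq_eq_one_of_squarefree (by simpa using ha)
    · rw [if_neg hb1]
      have : ¬ Squarefree n := by
        rw [← hab]
        intro hsf
        exact hb1 (Nat.isUnit_iff.mp (hsf b (by rw [← pow_two]; exact (dvd_mul_right _ _))))
      rw [ArithmeticFunction.moebius_eq_zero_of_not_squarefree this]; ring
  rw [key]
  calc ∑ k ∈ b.divisors, ((μ k : ℤ) : ℂ) = ((∑ k ∈ b.divisors, μ k : ℤ) : ℂ) := by push_cast; rfl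
    _ = (((μ n : ℤ) ^ 2 : ℤ) : ℂ) := by rw [hsum, ← hmu]
    _ = _ := by push_cast; rfl

lemma gg_bound (n : ℕ) : ‖gg n‖ ≤ 1 := by
  unfold gg
  split
  · rcases ArithmeticFunction.moebius_eq_or n.sqrt with h | h | h <;> simp [h]
  · simp

lemma gg_summable {t : ℂ} (ht : 1 < t.re) : LSeriesSummable gg t := by
  apply LSeriesSummable_of_abscissaOfAbsConv_lt_re
  refine lt_of_le_of_lt (LSeries.abscissaOfAbsConv_le_of_le_const ⟨1, fun n _ => gg_bound n⟩) ?_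
  exact_mod_cast ht

lemma lemB {t : ℂ} (ht : 1 < t.re) : LSeries gg t = (riemannZeta (2 * t))⁻¹ := by
  have h2t : 1 < (2 * t).re := by
    have : (2 * t).re = 2 * t.re := by simp [Complex.mul_re]
    rw [this]; linarith
  have hreindex : LSeries gg t = ∑' k : ℕ, term gg t (k ^ 2) := by
    refine (Function.Injective.tsum_eq (f := term gg t) (g := fun k : ℕ => k ^ 2)
      (fun a b hab => Nat.pow_left_injective (by norm_num) hab) ?_).symm
    intro n hn
    simp only [Function.mem_support] at hn
    by_contra hcon
    apply hn
    rcases eq_or_ne n 0 with rfl | hn0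
    · simp [LSeries.term]
    rw [LSeries.term_of_ne_zero hn0]
    have hns : ¬ IsSquare n := by
      rintro ⟨r, rfl⟩
      exact hcon ⟨r, by simp [pow_two]⟩
    simp [gg, hns]
  have hterm : ∀ k : ℕ, term gg t (k ^ 2) = term ↗ArithmeticFunction.moebius (2 * t) k := by
    intro k
    rcases eq_or_ne k 0 with rfl | hk0
    · simp [LSeries.term]
    have hk2 : k ^ 2 ≠ 0 := pow_ne_zero 2 hk0
    rw [LSeries.term_of_ne_zero hk2, LSeries.term_of_ne_zero hk0]
    have hgg : gg (k ^ 2) = ((μ k : ℤ) : ℂ) := by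
      have hks : IsSquare (k ^ 2) := ⟨k, by ring⟩
      simp only [gg, if_pos hks, Nat.sqrt_eq']
    rw [hgg]
    congr 1
    have hcast : ((k ^ 2 : ℕ) : ℂ) = ((k : ℝ) : ℂ) * ((k : ℝ) : ℂ) := by push_cast; ring
    rw [hcast, Complex.mul_cpow_ofReal_nonneg (Nat.cast_nonneg k) (Nat.cast_nonneg k)]
    have hk0' : ((k : ℝ) : ℂ) ≠ 0 := by exact_mod_cast hk0
    rw [← Complex.cpow_add _ _ hk0', ← two_mul]
    norm_num
  rw [hreindex]
  simp_rw [hterm]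
  have := LSeries_zeta_mul_Lseries_moebius h2t
  rw [LSeries_zeta_eq_riemannZeta h2t, mul_comm] at this
  have : L ↗ArithmeticFunction.moebius (2 * t) = (riemannZeta (2 * t))⁻¹ :=
    eq_inv_of_mul_eq_one_left this
  exact this

lemma one_conv (h : ℕ → ℂ) {n : ℕ} (_hn : n ≠ 0) :
    ((1 : ℕ → ℂ) ⍟ h) n = ∑ d ∈ n.divisors, h d := by
  rw [convolution_def]
  rw [← Nat.sum_divisorsAntidiagonal' (f := fun _ y => h y)]
  exact Finset.sum_congr rfl fun p _ => by simp

lemma lemC {n : ℕ} (hn : n ≠ 0) :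
    ∑ d ∈ n.divisors, ((1 : ℕ → ℂ) ⍟ gg) d = (2 : ℂ) ^ n.primeFactors.card := by
  have step1 : ∑ d ∈ n.divisors, ((1 : ℕ → ℂ) ⍟ gg) d
      = ∑ d ∈ n.divisors, ((μ d : ℤ) : ℂ) ^ 2 := by
    refine Finset.sum_congr rfl fun d hd => ?_
    have hd0 : d ≠ 0 := Nat.pos_of_mem_divisors hd |>.ne'
    rw [one_conv gg hd0, lemA hd0]
  rw [step1, ← Finset.sum_filter_add_sum_filter_not n.divisors Squarefree]
  have h2 : ∑ d ∈ n.divisors with ¬ Squarefree d, ((μ d : ℤ) : ℂ) ^ 2 = 0 := by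
    refine Finset.sum_eq_zero fun d hd => ?_
    simp only [Finset.mem_filter] at hd
    rw [ArithmeticFunction.moebius_eq_zero_of_not_squarefree hd.2]
    norm_num
  have h1 : ∑ d ∈ n.divisors with Squarefree d, ((μ d : ℤ) : ℂ) ^ 2
      = ∑ d ∈ n.divisors with Squarefree d, (1 : ℂ) := by
    refine Finset.sum_congr rfl fun d hd => ?_
    simp only [Finset.mem_filter] at hd
    have := ArithmeticFunction.moebius_sq_eq_one_of_squarefree hd.2
    exact_mod_cast congrArg (fun z : ℤ => (z : ℂ)) this
  rw [h2, add_zero, h1, Nat.sum_divisors_filter_squarefree hn]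
  rw [Finset.sum_const, Finset.card_powerset]
  have : (UniqueFactorizationMonoid.normalizedFactors n).toFinset = n.primeFactors := by
    rw [Nat.factors_eq]
    rw [List.toFinset_coe]
    exact Nat.toFinset_factors n
  rw [this]
  simp


/-- For `Re t > 1`, `∑_{n ≥ 1} 2^(ω(n)) n^(-t) = ζ(t)² / ζ(2t)`, where `ω(n)` is the number
of distinct prime factors of `n`. -/
theorem stmt_15 (t : ℂ) (ht : 1 < t.re) :
    (∑' n : ℕ, (2 : ℂ) ^ (n + 1 : ℕ).primeFactors.card * ((n + 1 : ℕ) : ℂ) ^ (-t)) =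
      riemannZeta t ^ 2 / riemannZeta (2 * t) := by
  have h1 : LSeriesSummable 1 t := LSeriesSummable_one_iff.mpr ht
  have hg := gg_summable ht
  have hff : LSeriesSummable ((1 : ℕ → ℂ) ⍟ gg) t := h1.convolution hg
  set FF : ℕ → ℂ := (1 : ℕ → ℂ) ⍟ ((1 : ℕ → ℂ) ⍟ gg) with hFF
  have hmain : (∑' n : ℕ, (2 : ℂ) ^ (n + 1 : ℕ).primeFactors.card * ((n + 1 : ℕ) : ℂ) ^ (-t))
      = LSeries FF t := by
    have hshift : ∑' n : ℕ, term FF t (n + 1) = LSeries FF t := by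
      refine Function.Injective.tsum_eq (f := term FF t) (g := fun n : ℕ => n + 1)
        (add_left_injective 1) ?_
      intro n hn
      simp only [Function.mem_support] at hn
      rcases eq_or_ne n 0 with rfl | hn0
      · exact absurd (by simp [LSeries.term]) hn
      · exact ⟨n - 1, by simp only []; omega⟩
    rw [← hshift]
    refine tsum_congr fun n => ?_
    rw [LSeries.term_of_ne_zero (Nat.succ_ne_zero n)]
    rw [hFF, one_conv _ (Nat.succ_ne_zero n), lemC (Nat.succ_ne_zero n)]
    rw [Complex.cpow_neg, div_eq_mul_inv]
  rw [hmain, hFF, LSeries_convolution' h1 hff, LSeries_convolution' h1 hg,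
    LSeries_one_eq_riemannZeta ht, lemB ht, sq, div_eq_mul_inv, mul_assoc]
end
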